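/- arXiv:1011.6139 — 8 statements merged into one kernel-verified Lean document; each statement's English description precedes it below -/
import Mathlib

section
/- For real numbers λ, λ' with 1/2 < λ, λ' < 1 and real numbers 0 < z < y, one has ∫₀^z u^{1-λ-λ'} (y-u)^{λ-3/2} (z-u)^{λ'-3/2} du = z^{1/2-λ} y^{1/2-λ'} (y-z)^{λ+λ'-2} B(2-λ-λ', λ'-1/2), where B denotes the Beta function. -/
open MeasureTheory Set

/-- The Euler Beta function `B(a,b) = ∫₀¹ t^{a-1}(1-t)^{b-1} dt`. -/
noncomputable def Beta (a b : ℝ) : ℝ := ∫ t in Set.Ioo (0:ℝ) 1, t ^ (a - 1) * (1 - t) ^ (b - 1)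

private lemma log_eq_imp {a b : ℝ} (ha : 0 < a) (hb : 0 < b)
    (h : Real.log a = Real.log b) : a = b := by
  rw [← Real.exp_log ha, h, Real.exp_log hb]

theorem stmt0 (lam lam' y z : ℝ) (h1 : 1/2 < lam) (h2 : lam < 1)
    (h3 : 1/2 < lam') (h4 : lam' < 1) (hz : 0 < z) (hzy : z < y) :
    ∫ u in Set.Ioo (0:ℝ) z,
        u ^ (1 - lam - lam') * (y - u) ^ (lam - 3/2) * (z - u) ^ (lam' - 3/2)
      = z ^ (1/2 - lam) * y ^ (1/2 - lam') * (y - z) ^ (lam + lam' - 2) *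
        Beta (2 - lam - lam') (lam' - 1/2) := by
  have hy : 0 < y := hz.trans hzy
  have hyz : 0 < y - z := sub_pos.2 hzy
  set φ : ℝ → ℝ := fun u => ((y - z) * u) / (z * (y - u)) with hφ
  set φ' : ℝ → ℝ := fun u => ((y - z) * y) / (z * (y - u) ^ 2) with hφ'
  -- image
  have himg : φ '' Ioo 0 z = Ioo 0 1 := by
    ext t
    constructor
    · rintro ⟨u, ⟨hu0, huz⟩, rfl⟩
      have hyu : 0 < y - u := by linarith
      constructor
      · exact div_pos (mul_pos hyz hu0) (mul_pos hz hyu)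
      · rw [div_lt_one (mul_pos hz hyu)]
        nlinarith
    · rintro ⟨ht0, ht1⟩
      have hD : 0 < y - z + t * z := by nlinarith
      refine ⟨t * z * y / (y - z + t * z), ⟨?_, ?_⟩, ?_⟩
      · exact div_pos (by positivity) hD
      · rw [div_lt_iff₀ hD]
        nlinarith [mul_pos (mul_pos hz (sub_pos.2 ht1)) hyz]
      · simp only [hφ]
        rw [div_eq_iff]
        · field_simp
          ring
        · have : y - t * z * y / (y - z + t * z) = y * (y - z) / (y - z + t * z) := by
            field_simp; ring
          rw [this]
          positivity
  -- derivative
  have hderiv : ∀ u ∈ Ioo (0:ℝ) z, HasDerivWithinAt φ (φ' u) (Ioo 0 z) u := by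
    intro u ⟨hu0, huz⟩
    have hyu : 0 < y - u := by linarith
    have : HasDerivAt φ (φ' u) u := by
      have hnum : HasDerivAt (fun u : ℝ => (y - z) * u) (y - z) u := by
        simpa using (hasDerivAt_id u).const_mul (y - z)
      have hden : HasDerivAt (fun u : ℝ => z * (y - u)) (-z) u := by
        have : HasDerivAt (fun u : ℝ => y - u) (-1) u := by
          simpa using ((hasDerivAt_id u).const_sub y)
        simpa using this.const_mul z
      have := hnum.div hden (by positivity)
      refine this.congr_deriv ?_
      simp only [hφ']
      field_simp
      ring
    exact this.hasDerivWithinAt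
  -- injectivity
  have hinj : InjOn φ (Ioo 0 z) := by
    intro u1 ⟨h10, h1z⟩ u2 ⟨h20, h2z⟩ h
    have hyu1 : 0 < y - u1 := by linarith
    have hyu2 : 0 < y - u2 := by linarith
    simp only [hφ] at h
    rw [div_eq_div_iff (by positivity) (by positivity)] at h
    have h' : (y - z) * z * y * (u1 - u2) = 0 := by linear_combination h
    have hne : (y - z) * z * y ≠ 0 := by positivity
    rcases mul_eq_zero.1 h' with h'' | h''
    · exact absurd h'' hne
    · linarith
  -- change of variables
  have hcov := MeasureTheory.integral_image_eq_integral_abs_deriv_smul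
      measurableSet_Ioo hderiv hinj
      (fun t => t ^ (2 - lam - lam' - 1) * (1 - t) ^ (lam' - 1/2 - 1))
  rw [himg] at hcov
  -- pointwise identity
  have hpw : EqOn
      (fun u => |φ' u| • ((φ u) ^ (2 - lam - lam' - 1) * (1 - φ u) ^ (lam' - 1/2 - 1)))
      (fun u => (z ^ (lam - 1/2) * y ^ (lam' - 1/2) * (y - z) ^ (2 - lam - lam')) *
        (u ^ (1 - lam - lam') * (y - u) ^ (lam - 3/2) * (z - u) ^ (lam' - 3/2)))
      (Ioo 0 z) := by
    intro u ⟨hu0, huz⟩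
    have hyu : 0 < y - u := by linarith
    have hzu : 0 < z - u := by linarith
    have hφpos : 0 < φ u := div_pos (mul_pos hyz hu0) (mul_pos hz hyu)
    have h1φ : 1 - φ u = (y * (z - u)) / (z * (y - u)) := by
      simp only [hφ]
      field_simp
      ring
    have h1φpos : 0 < 1 - φ u := by rw [h1φ]; positivity
    have hφ'pos : 0 < φ' u := by simp only [hφ']; positivity
    simp only [smul_eq_mul, abs_of_pos hφ'pos]
    apply log_eq_imp
    · positivity
    · positivity
    rw [h1φ]
    simp only [hφ, hφ']
    repeat rw [Real.log_mul (by positivity) (by positivity)]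
    rw [Real.log_rpow (show (0:ℝ) < (y - z) * u / (z * (y - u)) by positivity),
        Real.log_rpow (show (0:ℝ) < y * (z - u) / (z * (y - u)) by positivity),
        Real.log_div (by positivity) (by positivity),
        Real.log_div (by positivity) (by positivity),
        Real.log_div (by positivity) (by positivity)]
    repeat rw [Real.log_mul (by positivity) (by positivity)]
    simp only [Real.log_pow, Real.log_rpow hz, Real.log_rpow hy, Real.log_rpow hyz,
      Real.log_rpow hu0, Real.log_rpow hyu, Real.log_rpow hzu]
    push_cast
    ring
  rw [MeasureTheory.setIntegral_congr_fun measurableSet_Ioo hpw,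
      MeasureTheory.integral_const_mul] at hcov
  -- hcov : Beta-integral = C * I
  have hC : 0 < z ^ (lam - 1/2) * y ^ (lam' - 1/2) * (y - z) ^ (2 - lam - lam') := by
    positivity
  rw [Beta]
  rw [hcov]
  rw [← mul_assoc]
  rw [show z ^ (1/2 - lam) * y ^ (1/2 - lam') * (y - z) ^ (lam + lam' - 2) *
      (z ^ (lam - 1/2) * y ^ (lam' - 1/2) * (y - z) ^ (2 - lam - lam')) = 1 from ?_, one_mul]
  rw [show (1:ℝ)/2 - lam = -(lam - 1/2) by ring, show (1:ℝ)/2 - lam' = -(lam' - 1/2) by ring,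
      show lam + lam' - 2 = -(2 - lam - lam') by ring,
      Real.rpow_neg hz.le, Real.rpow_neg hy.le, Real.rpow_neg hyz.le]
  field_simp
end

section
/- Fix 1/2 < a < b < 1 and T > 0. Define K_λ(t,s) = s^{1/2-λ} ∫_s^t (y-s)^{λ-3/2} y^{λ-1/2} dy for 0 < s < t ≤ T and λ ∈ [a,b]. Then there exists a constant C > 0 (depending on a, b, T) such that for all λ ∈ [a,b], all t ∈ (0,T], and all s ∈ (0, t), |∂K_λ(t,s)/∂λ| ≤ C (1 ∨ |log s|) s^{1/2-b}. -/
open MeasureTheory Set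

/-- The Volterra kernel of fractional Brownian motion with Hurst parameter `H > 1/2`:
`K_H(t,s) = s^{1/2-H} ∫_s^t (y-s)^{H-3/2} y^{H-1/2} dy`. -/
noncomputable def K (H t s : ℝ) : ℝ :=
  s ^ (1/2 - H) * ∫ y in Set.Ioo s t, (y - s) ^ (H - 3/2) * y ^ (H - 1/2)

lemma aux_rpow_le_max_one {x e : ℝ} (hx : 0 ≤ x) (he0 : 0 ≤ e) (he1 : e ≤ 1) :
    x ^ e ≤ max 1 x := by
  rcases le_or_gt x 1 with h | h
  · exact le_trans (Real.rpow_le_one hx h he0) (le_max_left _ _)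
  · calc x ^ e ≤ x ^ (1 : ℝ) := Real.rpow_le_rpow_of_exponent_le h.le he1
      _ = x := Real.rpow_one x
      _ ≤ max 1 x := le_max_right _ _

lemma aux_rpow_le_add {x p q e : ℝ} (hx : 0 < x) (hpe : p ≤ e) (heq : e ≤ q) :
    x ^ e ≤ x ^ p + x ^ q := by
  rcases le_or_gt x 1 with h | h
  · have h1 := Real.rpow_le_rpow_of_exponent_ge hx h hpe
    have h2 : (0:ℝ) ≤ x ^ q := Real.rpow_nonneg hx.le q
    linarith
  · have h1 := Real.rpow_le_rpow_of_exponent_le h.le heq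
    have h2 : (0:ℝ) ≤ x ^ p := Real.rpow_nonneg hx.le p
    linarith

lemma aux_abs_log_le {x ε M : ℝ} (hx : 0 < x) (hxM : x ≤ M) (hε : 0 < ε) :
    |Real.log x| ≤ Real.log (max 1 M) + x ^ (-ε) / ε := by
  have hM : (0:ℝ) ≤ Real.log (max 1 M) := Real.log_nonneg (le_max_left _ _)
  rcases le_or_gt x 1 with h | h
  · have h1 : |Real.log x| = -Real.log x := abs_of_nonpos (Real.log_nonpos hx.le h)
    have h2 : Real.log x⁻¹ ≤ x⁻¹ ^ ε / ε := Real.log_le_rpow_div (by positivity) hε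
    have h3 : x⁻¹ ^ ε = x ^ (-ε) := by
      rw [Real.inv_rpow hx.le, ← Real.rpow_neg hx.le]
    rw [Real.log_inv, h3] at h2
    linarith
  · have h1 : |Real.log x| = Real.log x := abs_of_pos (Real.log_pos h)
    have h2 : Real.log x ≤ Real.log (max 1 M) :=
      Real.log_le_log hx (le_trans hxM (le_max_right _ _))
    have h3 : (0:ℝ) ≤ x ^ (-ε) / ε := by positivity
    linarith

lemma aux_integrableOn_shift_rpow {s t r : ℝ} (hst : s < t) (hr : -1 < r) :
    IntegrableOn (fun y => (y - s) ^ r) (Ioo s t) := by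
  have h1 : IntervalIntegrable (fun x : ℝ => x ^ r) volume 0 (t - s) :=
    intervalIntegral.intervalIntegrable_rpow' hr
  have h2 := h1.comp_sub_right s
  rw [zero_add, sub_add_cancel] at h2
  exact (intervalIntegrable_iff_integrableOn_Ioo_of_le hst.le).mp h2

lemma aux_integral_shift_rpow {s t r : ℝ} (hst : s < t) (hr : -1 < r) :
    ∫ y in Ioo s t, (y - s) ^ r = (t - s) ^ (r + 1) / (r + 1) := by
  rw [← integral_Ioc_eq_integral_Ioo, ← intervalIntegral.integral_of_le hst.le]
  rw [intervalIntegral.integral_comp_sub_right (fun x : ℝ => x ^ r) s, sub_self]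
  rw [integral_rpow (Or.inl hr), Real.zero_rpow (by linarith)]
  ring

set_option maxHeartbeats 2000000 in
theorem stmt2 (a b T : ℝ) (ha : 1/2 < a) (hab : a < b) (hb : b < 1) (hT : 0 < T) :
    ∃ C > 0, ∀ lam ∈ Set.Icc a b, ∀ t ∈ Set.Ioc (0:ℝ) T, ∀ s ∈ Set.Ioo (0:ℝ) t,
      |deriv (fun μ : ℝ => K μ t s) lam| ≤ C * (max 1 |Real.log s|) * s ^ (1/2 - b) := by
  have hδ : (0:ℝ) < a - 1/2 := by linarith
  set δ : ℝ := a - 1/2 with hδ_def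
  set ε : ℝ := δ / 4 with hε_def
  have hε : 0 < ε := by positivity
  have hδhalf : δ < 1/2 := by simp only [hδ_def]; linarith
  set A : ℝ := max 1 T with hA_def
  have hA1 : (1:ℝ) ≤ A := le_max_left _ _
  have hTA : T ≤ A := le_max_right _ _
  have hA0 : (0:ℝ) < A := by linarith
  have hlogA : 0 ≤ Real.log A := Real.log_nonneg hA1
  set p : ℝ := a - ε with hp_def
  set q : ℝ := b + ε with hq_def
  have hp : 1/2 < p := by simp only [hp_def, hε_def, hδ_def]; linarith
  have hq : q ≤ 3/2 := by simp only [hq_def, hε_def, hδ_def]; linarith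
  -- the constant
  set M : ℝ := A * (A / δ) + A * (2 * Real.log A + 1) * (4 * A / (3 * δ) + A / δ)
      + A / ε * (2 * A / δ + A / δ) with hM_def
  have hM0 : 0 ≤ M := by
    have h1 : (0:ℝ) ≤ 2 * Real.log A + 1 := by linarith
    have h2 : (0:ℝ) ≤ A * (2 * Real.log A + 1) * (4 * A / (3 * δ) + A / δ) :=
      mul_nonneg (mul_nonneg hA0.le h1) (by positivity)
    have h3 : (0:ℝ) ≤ A * (A / δ) := by positivity
    have h4 : (0:ℝ) ≤ A / ε * (2 * A / δ + A / δ) := by positivity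
    rw [hM_def]; exact add_nonneg (add_nonneg h3 h2) h4
  refine ⟨A * M + 1, by nlinarith, ?_⟩
  rintro lam ⟨hal, hlb⟩ t ⟨ht0, htT⟩ s ⟨hs0, hst⟩
  have hsT : s < T := lt_of_lt_of_le hst htT
  -- basic exponent facts
  have hlam12 : 1/2 < lam := lt_of_lt_of_le ha hal
  set L : ℝ := max 1 |Real.log s| with hL_def
  have hL1 : (1:ℝ) ≤ L := le_max_left _ _
  have hLs : |Real.log s| ≤ L := le_max_right _ _
  have hL0 : (0:ℝ) ≤ L := by linarith
  -- integrand and its λ-derivative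
  set F : ℝ → ℝ → ℝ := fun μ y => (y - s) ^ (μ - 3/2) * y ^ (μ - 1/2) with hF_def
  set F' : ℝ → ℝ → ℝ := fun μ y =>
    (Real.log (y - s) + Real.log y) * ((y - s) ^ (μ - 3/2) * y ^ (μ - 1/2)) with hF'_def
  -- the dominating function
  set G : ℝ → ℝ := fun y =>
    A * (2 * Real.log A + |Real.log s|) * (y - s) ^ (p - 3/2)
      + A * (2 * Real.log A + |Real.log s|) * (y - s) ^ (q - 3/2)
      + A / ε * (y - s) ^ (p - 3/2 - ε) + A / ε * (y - s) ^ (q - 3/2 - ε) with hG_def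
  -- everything about μ in the ball around lam
  have hball : ∀ μ ∈ Metric.ball lam ε, p ≤ μ - 0 ∧ μ ≤ q := by
    intro μ hμ
    rw [Metric.mem_ball, Real.dist_eq, abs_lt] at hμ
    constructor
    · simp only [hp_def, sub_zero]; linarith
    · simp only [hq_def]; linarith
  -- positivity facts in the interval
  have hfacts : ∀ y ∈ Ioo s t, 0 < y ∧ 0 < y - s ∧ y ≤ T ∧ y - s ≤ T := by
    intro y hy
    exact ⟨hs0.trans hy.1, by linarith [hy.1], by linarith [hy.2], by linarith [hy.1, hy.2]⟩
  -- measurability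
  have hmeasF : ∀ μ : ℝ, AEStronglyMeasurable (F μ) (volume.restrict (Ioo s t)) := by
    intro μ
    apply Measurable.aestronglyMeasurable
    exact ((measurable_id.sub_const s).pow measurable_const).mul
      (measurable_id.pow measurable_const)
  have hmeasF' : AEStronglyMeasurable (F' lam) (volume.restrict (Ioo s t)) := by
    apply Measurable.aestronglyMeasurable
    exact ((Real.measurable_log.comp (measurable_id.sub_const s)).add Real.measurable_log).mul
      (((measurable_id.sub_const s).pow measurable_const).mul
        (measurable_id.pow measurable_const))
  -- pointwise bound for F
  have hFbound : ∀ y ∈ Ioo s t, |F lam y| ≤ A * (y - s) ^ (lam - 3/2) := by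
    intro y hy
    obtain ⟨h0y, h0ys, hyT, -⟩ := hfacts y hy
    have h1 : y ^ (lam - 1/2) ≤ A := by
      refine le_trans (aux_rpow_le_max_one h0y.le (by linarith) (by linarith)) ?_
      exact max_le hA1 (by linarith)
    have h2 : |F lam y| = (y - s) ^ (lam - 3/2) * y ^ (lam - 1/2) := by
      simp only [hF_def]
      exact abs_of_nonneg (by positivity)
    rw [h2, mul_comm A _]
    exact mul_le_mul_of_nonneg_left h1 (by positivity)
  have hF_int : Integrable (F lam) (volume.restrict (Ioo s t)) := by
    apply Integrable.mono'
      ((aux_integrableOn_shift_rpow hst (show (-1:ℝ) < lam - 3/2 by linarith)).const_mul A)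
      (hmeasF lam)
    rw [ae_restrict_iff' measurableSet_Ioo]
    exact Filter.Eventually.of_forall fun y hy => by
      simpa [Real.norm_eq_abs] using hFbound y hy
  -- exponents of G are integrable
  have hq12 : 1/2 < q := by simp only [hq_def]; linarith
  have hrp : (-1:ℝ) < p - 3/2 := by linarith
  have hrq : (-1:ℝ) < q - 3/2 := by linarith
  have hpε : p - 1/2 - ε = δ/2 := by simp only [hp_def, hε_def, hδ_def]; ring
  have hqε : q - 1/2 - ε = b - 1/2 := by simp only [hq_def]; ring
  have hrpε : (-1:ℝ) < p - 3/2 - ε := by linarith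
  have hrqε : (-1:ℝ) < q - 3/2 - ε := by linarith
  have hGint : Integrable G (volume.restrict (Ioo s t)) :=
    ((((aux_integrableOn_shift_rpow hst hrp).const_mul _).add
      ((aux_integrableOn_shift_rpow hst hrq).const_mul _)).add
      ((aux_integrableOn_shift_rpow hst hrpε).const_mul _)).add
      ((aux_integrableOn_shift_rpow hst hrqε).const_mul _)
  -- pointwise bound for F'
  have hF'bound : ∀ y ∈ Ioo s t, ∀ μ ∈ Metric.ball lam ε, ‖F' μ y‖ ≤ G y := by
    intro y hy μ hμ
    obtain ⟨h0y, h0ys, hyT, hysT⟩ := hfacts y hy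
    obtain ⟨hpμ, hμq⟩ := hball μ hμ
    rw [sub_zero] at hpμ
    have hlog1 : |Real.log (y - s)| ≤ Real.log A + (y - s) ^ (-ε) / ε :=
      aux_abs_log_le h0ys hysT hε
    have hlog2 : |Real.log y| ≤ Real.log A + |Real.log s| := by
      rcases le_or_gt y 1 with h | h
      · rw [abs_of_nonpos (Real.log_nonpos h0y.le h)]
        have h4 : Real.log s ≤ Real.log y := Real.log_le_log hs0 (le_of_lt hy.1)
        have h5 : -Real.log s ≤ |Real.log s| := neg_le_abs _
        linarith
      · rw [abs_of_pos (Real.log_pos h)]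
        have h4 : Real.log y ≤ Real.log A := Real.log_le_log h0y (by linarith)
        have h5 : (0:ℝ) ≤ |Real.log s| := abs_nonneg _
        linarith
    have hsum : (y - s) ^ (μ - 3/2) ≤ (y - s) ^ (p - 3/2) + (y - s) ^ (q - 3/2) :=
      aux_rpow_le_add h0ys (by linarith) (by linarith)
    have hyA : y ^ (μ - 1/2) ≤ A := by
      refine le_trans (aux_rpow_le_max_one h0y.le (by linarith) (by linarith)) ?_
      exact max_le hA1 (by linarith)
    have h6 : ‖F' μ y‖ = |Real.log (y - s) + Real.log y| *
        ((y - s) ^ (μ - 3/2) * y ^ (μ - 1/2)) := by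
      simp only [hF'_def, Real.norm_eq_abs, abs_mul]
      rw [abs_of_nonneg (Real.rpow_nonneg h0ys.le _), abs_of_nonneg (Real.rpow_nonneg h0y.le _)]
    rw [h6]
    calc |Real.log (y - s) + Real.log y| * ((y - s) ^ (μ - 3/2) * y ^ (μ - 1/2))
        ≤ (2 * Real.log A + |Real.log s| + (y - s) ^ (-ε) / ε) *
            (((y - s) ^ (p - 3/2) + (y - s) ^ (q - 3/2)) * A) := by
          apply mul_le_mul
          · calc |Real.log (y - s) + Real.log y| ≤ |Real.log (y - s)| + |Real.log y| :=
                abs_add_le _ _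
              _ ≤ 2 * Real.log A + |Real.log s| + (y - s) ^ (-ε) / ε := by linarith
          · exact mul_le_mul hsum hyA (by positivity) (by positivity)
          · positivity
          · positivity
      _ = G y := by
          simp only [hG_def]
          have e1 : (y - s) ^ (p - 3/2 - ε) = (y - s) ^ (-ε) * (y - s) ^ (p - 3/2) := by
            rw [← Real.rpow_add h0ys]; ring_nf
          have e2 : (y - s) ^ (q - 3/2 - ε) = (y - s) ^ (-ε) * (y - s) ^ (q - 3/2) := by
            rw [← Real.rpow_add h0ys]; ring_nf
          rw [e1, e2]
          field_simp
          ring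
  -- the derivative of F in μ
  have hder : ∀ (c d μ : ℝ), 0 < c →
      HasDerivAt (fun ν : ℝ => c ^ (ν - d)) (c ^ (μ - d) * Real.log c) μ := by
    intro c d μ hc
    have h1 := (Real.hasStrictDerivAt_const_rpow hc (μ - d)).hasDerivAt
    have h2 : HasDerivAt (fun ν : ℝ => ν - d) 1 μ := (hasDerivAt_id μ).sub_const d
    exact (h1.comp μ h2).congr_deriv (mul_one _)
  have hdiff : ∀ y ∈ Ioo s t, ∀ μ : ℝ, HasDerivAt (fun ν => F ν y) (F' μ y) μ := by
    intro y hy μ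
    obtain ⟨h0y, h0ys, -, -⟩ := hfacts y hy
    have h1 := (hder (y - s) (3/2) μ h0ys).mul (hder y (1/2) μ h0y)
    refine h1.congr_deriv ?_
    show _ = (Real.log (y - s) + Real.log y) * ((y - s) ^ (μ - 3/2) * y ^ (μ - 1/2))
    ring
  -- differentiation under the integral sign
  obtain ⟨hF'int, hIderiv⟩ := hasDerivAt_integral_of_dominated_loc_of_deriv_le (Metric.ball_mem_nhds lam hε)
    (Filter.Eventually.of_forall fun μ => hmeasF μ) hF_int hmeasF'
    (by rw [ae_restrict_iff' measurableSet_Ioo]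
        exact Filter.Eventually.of_forall fun y hy μ hμ => hF'bound y hy μ hμ)
    hGint
    (by rw [ae_restrict_iff' measurableSet_Ioo]
        exact Filter.Eventually.of_forall fun y hy μ _ => hdiff y hy μ)
  -- derivative of the outer factor
  have hout : HasDerivAt (fun μ : ℝ => s ^ (1/2 - μ))
      (-(s ^ (1/2 - lam) * Real.log s)) lam := by
    have h1 := (Real.hasStrictDerivAt_const_rpow hs0 (1/2 - lam)).hasDerivAt
    have h2 : HasDerivAt (fun ν : ℝ => 1/2 - ν) (-1) lam := by
      exact ((hasDerivAt_const lam (1/2:ℝ)).sub (hasDerivAt_id lam)).congr_deriv (zero_sub _)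
    have h3 := h1.comp lam h2
    exact h3.congr_deriv (by ring)
  have hK : HasDerivAt (fun μ : ℝ => K μ t s)
      (-(s ^ (1/2 - lam) * Real.log s) * (∫ y in Ioo s t, F lam y)
        + s ^ (1/2 - lam) * ∫ y in Ioo s t, F' lam y) lam := hout.mul hIderiv
  rw [hK.deriv]
  -- bound on the basic integrals
  have hJ : ∀ r : ℝ, 0 < r + 1 → r + 1 ≤ 1 → (∫ y in Ioo s t, (y - s) ^ r) ≤ A / (r + 1) := by
    intro r h0 h1
    rw [aux_integral_shift_rpow hst (by linarith)]
    have h2 : (t - s) ^ (r + 1) ≤ A := by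
      refine le_trans (aux_rpow_le_max_one (by linarith) h0.le h1) ?_
      exact max_le hA1 (by linarith)
    gcongr
  -- bound on I
  have hIbound : |∫ y in Ioo s t, F lam y| ≤ A * (A / δ) := by
    have h1 : |∫ y in Ioo s t, F lam y| ≤ ∫ y in Ioo s t, |F lam y| := by
      simpa [Real.norm_eq_abs] using
        norm_integral_le_integral_norm (μ := volume.restrict (Ioo s t)) (F lam)
    have h2 : (∫ y in Ioo s t, |F lam y|) ≤ ∫ y in Ioo s t, A * (y - s) ^ (lam - 3/2) :=
      setIntegral_mono_on hF_int.abs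
        ((aux_integrableOn_shift_rpow hst (by linarith)).const_mul A)
        measurableSet_Ioo hFbound
    have h3 : (∫ y in Ioo s t, A * (y - s) ^ (lam - 3/2))
        = A * ∫ y in Ioo s t, (y - s) ^ (lam - 3/2) := integral_const_mul A _
    have h4 : (∫ y in Ioo s t, (y - s) ^ (lam - 3/2)) ≤ A / (lam - 3/2 + 1) :=
      hJ _ (by linarith) (by linarith)
    have h5 : A / (lam - 3/2 + 1) ≤ A / δ := by gcongr <;> linarith
    have h6 : A * (∫ y in Ioo s t, (y - s) ^ (lam - 3/2)) ≤ A * (A / δ) :=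
      mul_le_mul_of_nonneg_left (h4.trans h5) hA0.le
    exact h1.trans (h2.trans ((le_of_eq h3).trans h6))
  -- bound on ∫ G
  have hp1 : p - 3/2 + 1 = 3*δ/4 := by simp only [hp_def, hε_def, hδ_def]; ring
  have hq1 : q - 3/2 + 1 = q - 1/2 := by ring
  have hp1ε : p - 3/2 - ε + 1 = δ/2 := by simp only [hp_def, hε_def, hδ_def]; ring
  have hq1ε : q - 3/2 - ε + 1 = b - 1/2 := by simp only [hq_def]; ring
  have hJp : (∫ y in Ioo s t, (y - s) ^ (p - 3/2)) ≤ 4*A/(3*δ) := by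
    have h1 := hJ (p - 3/2) (by rw [hp1]; positivity) (by rw [hp1]; linarith)
    rw [hp1] at h1
    refine h1.trans (le_of_eq ?_)
    field_simp
  have hJq : (∫ y in Ioo s t, (y - s) ^ (q - 3/2)) ≤ A/δ := by
    have h1 := hJ (q - 3/2) (by rw [hq1]; linarith) (by rw [hq1]; linarith)
    refine h1.trans ?_
    rw [hq1]
    gcongr
    · simp only [hq_def, hδ_def]; linarith
  have hJpε : (∫ y in Ioo s t, (y - s) ^ (p - 3/2 - ε)) ≤ 2*A/δ := by
    have h1 := hJ (p - 3/2 - ε) (by rw [hp1ε]; positivity) (by rw [hp1ε]; linarith)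
    rw [hp1ε] at h1
    refine h1.trans (le_of_eq ?_)
    field_simp
  have hJqε : (∫ y in Ioo s t, (y - s) ^ (q - 3/2 - ε)) ≤ A/δ := by
    have h1 := hJ (q - 3/2 - ε) (by rw [hq1ε]; linarith) (by rw [hq1ε]; linarith)
    rw [hq1ε] at h1
    refine h1.trans ?_
    gcongr
    · simp only [hδ_def]; linarith
  have hGval : (∫ y in Ioo s t, G y)
      ≤ A * (2*Real.log A + |Real.log s|) * (4*A/(3*δ) + A/δ) + A/ε * (2*A/δ + A/δ) := by
    have i1 := (aux_integrableOn_shift_rpow hst hrp).const_mul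
      (A * (2*Real.log A + |Real.log s|))
    have i2 := (aux_integrableOn_shift_rpow hst hrq).const_mul
      (A * (2*Real.log A + |Real.log s|))
    have i3 := (aux_integrableOn_shift_rpow hst hrpε).const_mul (A/ε)
    have i4 := (aux_integrableOn_shift_rpow hst hrqε).const_mul (A/ε)
    have e : (∫ y in Ioo s t, G y)
        = A * (2*Real.log A + |Real.log s|) * (∫ y in Ioo s t, (y - s) ^ (p - 3/2))
          + A * (2*Real.log A + |Real.log s|) * (∫ y in Ioo s t, (y - s) ^ (q - 3/2))
          + A/ε * (∫ y in Ioo s t, (y - s) ^ (p - 3/2 - ε))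
          + A/ε * (∫ y in Ioo s t, (y - s) ^ (q - 3/2 - ε)) := by
      simp only [hG_def]
      have e4 := integral_add ((i1.add i2).add i3) i4
      simp only [Pi.add_apply] at e4
      rw [e4]
      have e3 := integral_add (i1.add i2) i3
      simp only [Pi.add_apply] at e3
      rw [e3]
      rw [integral_add i1 i2, integral_const_mul, integral_const_mul, integral_const_mul,
        integral_const_mul]
    rw [e]
    have hc1 : (0:ℝ) ≤ A * (2*Real.log A + |Real.log s|) :=
      mul_nonneg hA0.le (by linarith [abs_nonneg (Real.log s)])
    have hc2 : (0:ℝ) ≤ A/ε := by positivity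
    have e2 : A * (2*Real.log A + |Real.log s|) * (4*A/(3*δ) + A/δ) + A/ε * (2*A/δ + A/δ)
        = A * (2*Real.log A + |Real.log s|) * (4*A/(3*δ))
          + A * (2*Real.log A + |Real.log s|) * (A/δ)
          + A/ε * (2*A/δ) + A/ε * (A/δ) := by ring
    rw [e2]
    exact add_le_add (add_le_add (add_le_add
      (mul_le_mul_of_nonneg_left hJp hc1) (mul_le_mul_of_nonneg_left hJq hc1))
      (mul_le_mul_of_nonneg_left hJpε hc2)) (mul_le_mul_of_nonneg_left hJqε hc2)
  have hI'bound : |∫ y in Ioo s t, F' lam y|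
      ≤ A * (2*Real.log A + |Real.log s|) * (4*A/(3*δ) + A/δ) + A/ε * (2*A/δ + A/δ) := by
    have h1 : |∫ y in Ioo s t, F' lam y| ≤ ∫ y in Ioo s t, |F' lam y| := by
      simpa [Real.norm_eq_abs] using
        norm_integral_le_integral_norm (μ := volume.restrict (Ioo s t)) (F' lam)
    have h2 : (∫ y in Ioo s t, |F' lam y|) ≤ ∫ y in Ioo s t, G y :=
      setIntegral_mono_on hF'int.abs hGint measurableSet_Ioo
        (fun y hy => by
          simpa [Real.norm_eq_abs] using hF'bound y hy lam (Metric.mem_ball_self hε))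
    exact h1.trans (h2.trans hGval)
  -- final assembly
  have hsb : s ^ ((1:ℝ)/2 - lam) ≤ A * s ^ ((1:ℝ)/2 - b) := by
    have h1 : s ^ ((1:ℝ)/2 - lam) = s ^ (b - lam) * s ^ ((1:ℝ)/2 - b) := by
      rw [← Real.rpow_add hs0]; ring_nf
    have h2 : s ^ (b - lam) ≤ A :=
      le_trans (aux_rpow_le_max_one hs0.le (by linarith) (by linarith))
        (max_le hA1 (by linarith))
    rw [h1]
    exact mul_le_mul_of_nonneg_right h2 (Real.rpow_nonneg hs0.le _)
  have hs' : (0:ℝ) ≤ s ^ ((1:ℝ)/2 - lam) := Real.rpow_nonneg hs0.le _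
  have hexp : 2 * Real.log A + |Real.log s| ≤ (2 * Real.log A + 1) * L := by
    have h9 : 2 * Real.log A * 1 ≤ 2 * Real.log A * L :=
      mul_le_mul_of_nonneg_left hL1 (by linarith)
    calc 2 * Real.log A + |Real.log s| ≤ 2 * Real.log A * L + L := by linarith
      _ = (2 * Real.log A + 1) * L := by ring
  have hbracket : |Real.log s| * |∫ y in Ioo s t, F lam y| + |∫ y in Ioo s t, F' lam y|
      ≤ L * M := by
    have b1 : |Real.log s| * |∫ y in Ioo s t, F lam y| ≤ L * (A * (A/δ)) :=
      mul_le_mul hLs hIbound (abs_nonneg _) hL0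
    have hX : (0:ℝ) ≤ 4*A/(3*δ) + A/δ := by positivity
    have b3 : A * (2*Real.log A + |Real.log s|) * (4*A/(3*δ) + A/δ)
        ≤ L * (A * (2*Real.log A + 1) * (4*A/(3*δ) + A/δ)) := by
      calc A * (2*Real.log A + |Real.log s|) * (4*A/(3*δ) + A/δ)
          ≤ A * ((2*Real.log A + 1) * L) * (4*A/(3*δ) + A/δ) :=
            mul_le_mul_of_nonneg_right (mul_le_mul_of_nonneg_left hexp hA0.le) hX
        _ = L * (A * (2*Real.log A + 1) * (4*A/(3*δ) + A/δ)) := by ring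
    have b4 : A/ε * (2*A/δ + A/δ) ≤ L * (A/ε * (2*A/δ + A/δ)) :=
      le_mul_of_one_le_left (by positivity) hL1
    calc |Real.log s| * |∫ y in Ioo s t, F lam y| + |∫ y in Ioo s t, F' lam y|
        ≤ L * (A * (A/δ)) + (L * (A * (2*Real.log A + 1) * (4*A/(3*δ) + A/δ))
            + L * (A/ε * (2*A/δ + A/δ))) :=
          add_le_add b1 (hI'bound.trans (add_le_add b3 b4))
      _ = L * M := by rw [hM_def]; ring
  calc |(-(s ^ (1/2 - lam) * Real.log s)) * (∫ y in Ioo s t, F lam y)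
        + s ^ (1/2 - lam) * ∫ y in Ioo s t, F' lam y|
      ≤ s ^ ((1:ℝ)/2 - lam) * (L * M) := by
        calc |(-(s ^ (1/2 - lam) * Real.log s)) * (∫ y in Ioo s t, F lam y)
              + s ^ (1/2 - lam) * ∫ y in Ioo s t, F' lam y|
            ≤ |(-(s ^ (1/2 - lam) * Real.log s)) * (∫ y in Ioo s t, F lam y)|
              + |s ^ (1/2 - lam) * ∫ y in Ioo s t, F' lam y| := abs_add_le _ _
          _ = s ^ ((1:ℝ)/2 - lam) *
                (|Real.log s| * |∫ y in Ioo s t, F lam y| + |∫ y in Ioo s t, F' lam y|) := by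
              rw [abs_mul, abs_neg, abs_mul, abs_mul, abs_of_nonneg hs']
              ring
          _ ≤ s ^ ((1:ℝ)/2 - lam) * (L * M) := mul_le_mul_of_nonneg_left hbracket hs'
    _ ≤ (A * s ^ ((1:ℝ)/2 - b)) * (L * M) :=
        mul_le_mul_of_nonneg_right hsb (mul_nonneg hL0 hM0)
    _ = (A * M) * L * s ^ ((1:ℝ)/2 - b) := by ring
    _ = (A * M) * (L * s ^ ((1:ℝ)/2 - b)) := by ring
    _ ≤ (A * M + 1) * (L * s ^ ((1:ℝ)/2 - b)) := by
        have h7 : (0:ℝ) ≤ L * s ^ ((1:ℝ)/2 - b) :=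
          mul_nonneg hL0 (Real.rpow_nonneg hs0.le _)
        exact mul_le_mul_of_nonneg_right (by linarith) h7
    _ = (A * M + 1) * L * s ^ ((1:ℝ)/2 - b) := by ring
end

section
/- Fix 1/2 < a < b < 1 and T > 0, and let K_λ(t,s) = s^{1/2-λ} ∫_s^t (y-s)^{λ-3/2} y^{λ-1/2} dy. Then there exists C_T > 0 such that for all t ∈ (0,T] and all λ, λ' ∈ [a,b], ∫₀^t (K_λ(t,u) - K_{λ'}(t,u))² du ≤ C_T |λ - λ'|². -/
open MeasureTheory Set

lemma pow_le_R {x R e : ℝ} (hx : 0 < x) (hxR : x ≤ R) (hR : 1 ≤ R) (he0 : 0 ≤ e)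
    (he1 : e ≤ 1) : x ^ e ≤ R := by
  rcases le_or_gt x 1 with h | h
  · exact (Real.rpow_le_one hx.le h he0).trans hR
  · calc x ^ e ≤ x ^ (1:ℝ) := Real.rpow_le_rpow_of_exponent_le h.le he1
    _ = x := Real.rpow_one x
    _ ≤ R := hxR

lemma abs_log_le {x ε : ℝ} (hx : 0 < x) (hε : 0 < ε) :
    |Real.log x| ≤ (x ^ (-ε) + x ^ ε) / ε := by
  have e1 := Real.log_le_sub_one_of_pos (Real.rpow_pos_of_pos hx ε)
  rw [Real.log_rpow hx] at e1
  have e2 := Real.log_le_sub_one_of_pos (Real.rpow_pos_of_pos hx (-ε))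
  rw [Real.log_rpow hx] at e2
  have p1 : 0 < x ^ (-ε) := Real.rpow_pos_of_pos hx _
  have p2 : 0 < x ^ ε := Real.rpow_pos_of_pos hx _
  rw [abs_le]
  constructor
  · rw [neg_le, le_div_iff₀ hε]; nlinarith
  · rw [le_div_iff₀ hε]; nlinarith

/-- split a power: `x ^ e = x ^ e₀ * x ^ (e - e₀) ≤ R * x ^ e₀` when `x ≤ R`,
`0 ≤ e - e₀ ≤ 1`. -/
lemma rpow_split_le {x R e e₀ : ℝ} (hx : 0 < x) (hxR : x ≤ R) (hR : 1 ≤ R)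
    (h0 : e₀ ≤ e) (h1 : e ≤ e₀ + 1) : x ^ e ≤ R * x ^ e₀ := by
  have h : x ^ e = x ^ e₀ * x ^ (e - e₀) := by
    rw [← Real.rpow_add hx]; ring_nf
  rw [h]
  have h2 : x ^ (e - e₀) ≤ R := pow_le_R hx hxR hR (by linarith) (by linarith)
  have h3 : 0 < x ^ e₀ := Real.rpow_pos_of_pos hx _
  nlinarith

lemma exp_diff_le (u v : ℝ) :
    |Real.exp u - Real.exp v| ≤ |u - v| * (Real.exp u + Real.exp v) := by
  rcases le_total u v with h | h
  · have h1 : Real.exp u = Real.exp (u - v) * Real.exp v := by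
      rw [← Real.exp_add]; ring_nf
    have h2 := Real.add_one_le_exp (u - v)
    have h3 := Real.exp_pos u
    have h4 := Real.exp_pos v
    rw [abs_of_nonpos (by nlinarith [Real.exp_le_exp.2 h] : Real.exp u - Real.exp v ≤ 0),
      abs_of_nonpos (by linarith : u - v ≤ 0)]
    nlinarith
  · have h1 : Real.exp v = Real.exp (v - u) * Real.exp u := by
      rw [← Real.exp_add]; ring_nf
    have h2 := Real.add_one_le_exp (v - u)
    have h3 := Real.exp_pos u
    have h4 := Real.exp_pos v
    rw [abs_of_nonneg (by nlinarith [Real.exp_le_exp.2 h] : 0 ≤ Real.exp u - Real.exp v),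
      abs_of_nonneg (by linarith : 0 ≤ u - v)]
    nlinarith

lemma f_exp_rep {s y lam : ℝ} (hs : 0 < s) (hsy : s < y) :
    s ^ (1/2 - lam) * ((y - s) ^ (lam - 3/2) * y ^ (lam - 1/2)) =
      Real.exp (lam * (Real.log (y - s) + Real.log y - Real.log s)) *
        (s ^ (1/2 : ℝ) * ((y - s) ^ (-3/2 : ℝ) * y ^ (-1/2 : ℝ))) := by
  have hy : 0 < y := hs.trans hsy
  have hys : 0 < y - s := by linarith
  rw [Real.rpow_def_of_pos hs, Real.rpow_def_of_pos hys, Real.rpow_def_of_pos hy,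
    Real.rpow_def_of_pos hs, Real.rpow_def_of_pos hys, Real.rpow_def_of_pos hy]
  simp only [← Real.exp_add]
  congr 1
  ring

set_option maxHeartbeats 1000000 in
lemma pointwise_diff_bound {a b T : ℝ} (ha : 1/2 < a) (hab : a < b) (hb : b < 1)
    (hT : 0 < T) {s y lam lam' : ℝ} (hs : 0 < s) (hsy : s < y) (hyT : y ≤ T)
    (hlam : lam ∈ Icc a b) (hlam' : lam' ∈ Icc a b) :
    |s ^ (1/2 - lam) * ((y - s) ^ (lam - 3/2) * y ^ (lam - 1/2)) -
      s ^ (1/2 - lam') * ((y - s) ^ (lam' - 3/2) * y ^ (lam' - 1/2))| ≤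
      (2 * (max T 1) * (max T 1) * (2 * (max T 1) / ((a - 1/2)/2) +
        (max T 1) * |Real.log T| + 2 * (max T 1))) * |lam - lam'| *
      ((1 + |Real.log s|) * s ^ ((1:ℝ)/2 - b) * (y - s) ^ ((a - 1/2)/2 - 1)) := by
  set R := max T 1 with hRdef
  have hR1 : (1:ℝ) ≤ R := le_max_right T 1
  have hTR : T ≤ R := le_max_left T 1
  set ε := (a - 1/2)/2 with hεdef
  have hε : 0 < ε := by simp only [hεdef]; linarith
  have hε1 : ε ≤ 1 := by simp only [hεdef]; linarith
  set p₀ := ε - 1 with hp₀def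
  have hy : 0 < y := hs.trans hsy
  have hys : 0 < y - s := by linarith
  have hsR : s ≤ R := by linarith
  have hyR : y ≤ R := by linarith
  have hysR : y - s ≤ R := by linarith
  set L := Real.log (y - s) + Real.log y - Real.log s with hLdef
  set lg1 := |Real.log (y - s)| with hlg1
  set lgs := |Real.log s| with hlgs
  set lgT := |Real.log T| with hlgT
  set u := s ^ ((1:ℝ)/2 - b) with hu
  set w := (y - s) ^ p₀ with hw
  have hupos : 0 < u := Real.rpow_pos_of_pos hs _
  have hwpos : 0 < w := Real.rpow_pos_of_pos hys _
  -- claim A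
  have claimA : ∀ μ ∈ Icc a b,
      |L| * (s ^ (1/2 - μ) * ((y - s) ^ (μ - 3/2) * y ^ (μ - 1/2))) ≤
        (R * R * (2 * R / ε + R * lgT + 2 * R)) * ((1 + lgs) * u * w) := by
    intro μ hμ
    obtain ⟨hμa, hμb⟩ := hμ
    set P := s ^ (1/2 - μ) with hP
    set Q := (y - s) ^ (μ - 3/2) with hQ
    set Y := y ^ (μ - 1/2) with hY
    have hPpos : 0 < P := Real.rpow_pos_of_pos hs _
    have hQpos : 0 < Q := Real.rpow_pos_of_pos hys _
    have hYpos : 0 < Y := Real.rpow_pos_of_pos hy _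
    have hA1 : P ≤ R * u := by
      exact rpow_split_le hs hsR hR1 (by linarith) (by linarith)
    have hA2 : Y ≤ R := pow_le_R hy hyR hR1 (by linarith) (by linarith)
    have hA3 : Q ≤ R * w := by
      refine rpow_split_le hys hysR hR1 ?_ ?_ <;> simp only [hp₀def, hεdef] <;> linarith
    have hA4 : lg1 * Q ≤ (2 * R / ε) * w := by
      have hlog := abs_log_le hys hε
      have step : lg1 * Q ≤ (((y-s) ^ (-ε) + (y-s) ^ ε) / ε) * Q :=
        mul_le_mul_of_nonneg_right hlog hQpos.le
      have e1 : (y - s) ^ (-ε) * Q = (y - s) ^ (μ - 3/2 - ε) := by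
        rw [hQ, ← Real.rpow_add hys]; ring_nf
      have e2 : (y - s) ^ ε * Q = (y - s) ^ (μ - 3/2 + ε) := by
        rw [hQ, ← Real.rpow_add hys]; ring_nf
      have b1 : (y - s) ^ (μ - 3/2 - ε) ≤ R * w :=
        rpow_split_le hys hysR hR1 (by simp only [hp₀def, hεdef]; linarith)
          (by simp only [hp₀def, hεdef]; linarith)
      have b2 : (y - s) ^ (μ - 3/2 + ε) ≤ R * w :=
        rpow_split_le hys hysR hR1 (by simp only [hp₀def, hεdef]; linarith)
          (by simp only [hp₀def, hεdef]; linarith)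
      calc lg1 * Q ≤ (((y-s) ^ (-ε) + (y-s) ^ ε) / ε) * Q := step
        _ = ((y-s) ^ (-ε) * Q + (y-s) ^ ε * Q) / ε := by ring
        _ = ((y-s) ^ (μ - 3/2 - ε) + (y-s) ^ (μ - 3/2 + ε)) / ε := by rw [e1, e2]
        _ ≤ (R * w + R * w) / ε := by
            gcongr
        _ = (2 * R / ε) * w := by ring
    have hA5 : |Real.log y| ≤ lgs + lgT := by
      have l1 : Real.log s ≤ Real.log y := Real.log_le_log hs hsy.le
      have l2 : Real.log y ≤ Real.log T := Real.log_le_log hy hyT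
      have l3 : -lgs ≤ Real.log s := neg_abs_le _
      have l4 : Real.log T ≤ lgT := le_abs_self _
      have l5 : 0 ≤ lgs := abs_nonneg _
      have l6 : 0 ≤ lgT := abs_nonneg _
      rw [abs_le]; constructor <;> linarith
    have hL : |L| ≤ lg1 + 2 * lgs + lgT := by
      have t : |L| ≤ lg1 + |Real.log y| + lgs := by
        rw [hLdef, hlg1, hlgs]
        calc |Real.log (y-s) + Real.log y - Real.log s|
            ≤ |Real.log (y-s) + Real.log y| + |Real.log s| := abs_sub _ _
          _ ≤ |Real.log (y-s)| + |Real.log y| + |Real.log s| := by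
              have := abs_add_le (Real.log (y-s)) (Real.log y); linarith
      have := hA5; linarith
    have hlg1n : 0 ≤ lg1 := abs_nonneg _
    have hlgsn : 0 ≤ lgs := abs_nonneg _
    have hlgTn : 0 ≤ lgT := abs_nonneg _
    have step1 : |L| * (P * (Q * Y)) ≤ (lg1 + 2 * lgs + lgT) * (P * (Q * Y)) :=
      mul_le_mul_of_nonneg_right hL (by positivity)
    have t1 : (lg1 * Q) * (P * Y) ≤ ((2 * R / ε) * w) * ((R * u) * R) := by
      apply mul_le_mul hA4 (mul_le_mul hA1 hA2 hYpos.le (by positivity))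
        (by positivity) (by positivity)
    have t2 : Q * (P * Y) ≤ (R * w) * ((R * u) * R) := by
      apply mul_le_mul hA3 (mul_le_mul hA1 hA2 hYpos.le (by positivity))
        (by positivity) (by positivity)
    have t2s : lgs * (Q * (P * Y)) ≤ lgs * ((R * w) * ((R * u) * R)) :=
      mul_le_mul_of_nonneg_left t2 hlgsn
    have t2T : lgT * (Q * (P * Y)) ≤ lgT * ((R * w) * ((R * u) * R)) :=
      mul_le_mul_of_nonneg_left t2 hlgTn
    have key : 2 * R / ε + 2 * lgs * R + lgT * R ≤
        (2 * R / ε + R * lgT + 2 * R) * (1 + lgs) := by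
      have k1 : 0 ≤ (R / ε) * lgs := by positivity
      have k2 : 0 ≤ R * lgT * lgs := by positivity
      have expand : (2*R/ε + R*lgT + 2*R)*(1+lgs) - (2*R/ε + 2*lgs*R + lgT*R)
          = 2*R + 2*((R/ε)*lgs) + R*lgT*lgs := by ring
      linarith
    have hR0 : (0:ℝ) < R := by linarith
    have key2 : (2 * R / ε + 2 * lgs * R + lgT * R) * ((R * R) * (u * w)) ≤
        ((2 * R / ε + R * lgT + 2 * R) * (1 + lgs)) * ((R * R) * (u * w)) :=
      mul_le_mul_of_nonneg_right key (by positivity)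
    ring_nf at step1 t1 t2s t2T key2 ⊢
    linarith [step1, t1, t2s, t2T, key2]
  -- now the difference bound
  obtain ⟨hla, hlb⟩ := hlam
  obtain ⟨hla', hlb'⟩ := hlam'
  have hgpos : 0 < s ^ ((1:ℝ)/2) * ((y - s) ^ (-3/2 : ℝ) * y ^ (-1/2 : ℝ)) := by positivity
  set g := s ^ ((1:ℝ)/2) * ((y - s) ^ (-3/2 : ℝ) * y ^ (-1/2 : ℝ)) with hg
  have r1 : s ^ (1/2 - lam) * ((y - s) ^ (lam - 3/2) * y ^ (lam - 1/2)) =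
      Real.exp (lam * L) * g := by rw [hg, hLdef]; exact f_exp_rep hs hsy
  have r2 : s ^ (1/2 - lam') * ((y - s) ^ (lam' - 3/2) * y ^ (lam' - 1/2)) =
      Real.exp (lam' * L) * g := by rw [hg, hLdef]; exact f_exp_rep hs hsy
  have c1 := claimA lam ⟨hla, hlb⟩
  have c2 := claimA lam' ⟨hla', hlb'⟩
  calc |s ^ (1/2 - lam) * ((y - s) ^ (lam - 3/2) * y ^ (lam - 1/2)) -
      s ^ (1/2 - lam') * ((y - s) ^ (lam' - 3/2) * y ^ (lam' - 1/2))|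
      = |Real.exp (lam * L) - Real.exp (lam' * L)| * g := by
        rw [r1, r2, ← sub_mul, abs_mul, abs_of_pos hgpos]
    _ ≤ (|lam * L - lam' * L| * (Real.exp (lam * L) + Real.exp (lam' * L))) * g :=
        mul_le_mul_of_nonneg_right (exp_diff_le _ _) hgpos.le
    _ = |lam - lam'| * (|L| * (Real.exp (lam * L) * g) + |L| * (Real.exp (lam' * L) * g)) := by
        rw [show lam * L - lam' * L = (lam - lam') * L by ring, abs_mul]; ring
    _ = |lam - lam'| * (|L| * (s ^ (1/2 - lam) * ((y - s) ^ (lam - 3/2) * y ^ (lam - 1/2))) +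
          |L| * (s ^ (1/2 - lam') * ((y - s) ^ (lam' - 3/2) * y ^ (lam' - 1/2)))) := by
        rw [r1, r2]
    _ ≤ |lam - lam'| * ((R * R * (2 * R / ε + R * lgT + 2 * R)) * ((1 + lgs) * u * w) +
          (R * R * (2 * R / ε + R * lgT + 2 * R)) * ((1 + lgs) * u * w)) :=
        mul_le_mul_of_nonneg_left (add_le_add c1 c2) (abs_nonneg _)
    _ = (2 * R * R * (2 * R / ε + R * lgT + 2 * R)) * |lam - lam'| * ((1 + lgs) * u * w) := by
        ring

lemma integrableOn_shift_rpow {s t p : ℝ} (hp : -1 < p) :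
    IntegrableOn (fun y => (y - s) ^ p) (Ioo s t) := by
  have h : IntervalIntegrable (fun y => (y - s) ^ p) volume s t := by
    have := (intervalIntegral.intervalIntegrable_rpow' (a := 0) (b := t - s) hp).comp_sub_right s
    simpa using this
  rcases le_total s t with hst | hst
  · exact ((intervalIntegrable_iff_integrableOn_Ioc_of_le hst).1 h).mono_set Ioo_subset_Ioc_self
  · simp [Ioo_eq_empty_of_le hst, IntegrableOn]

lemma integral_shift_rpow {s t p : ℝ} (hp : -1 < p) (hp1 : 0 < p + 1) (hst : s ≤ t) :
    ∫ y in Ioo s t, (y - s) ^ p = (t - s) ^ (p + 1) / (p + 1) := by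
  rw [← integral_Ioc_eq_integral_Ioo, ← intervalIntegral.integral_of_le hst]
  rw [show (fun y => (y - s) ^ p) = (fun y => ((fun x => x ^ p) (y - s))) from rfl]
  rw [intervalIntegral.integral_comp_sub_right (fun x => x ^ p) s]
  rw [integral_rpow (Or.inl hp)]
  rw [sub_self, Real.zero_rpow (by linarith)]
  ring_nf

lemma integrableOn_f {s t mu : ℝ} (hs : 0 < s) (hmu1 : 1/2 < mu) (hmu2 : mu ≤ 1) :
    IntegrableOn (fun y => s ^ (1/2 - mu) * ((y - s) ^ (mu - 3/2) * y ^ (mu - 1/2)))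
      (Ioo s t) := by
  set c := s ^ (1/2 - mu) * max t 1 with hc
  have hbase : IntegrableOn (fun y => c * (y - s) ^ (mu - 3/2)) (Ioo s t) :=
    (integrableOn_shift_rpow (by linarith)).const_mul c
  apply hbase.integrable.mono
  · apply ContinuousOn.aestronglyMeasurable ?_ measurableSet_Ioo
    apply ContinuousOn.mul continuousOn_const
    apply ContinuousOn.mul
    · exact (continuousOn_id.sub continuousOn_const).rpow_const
        (fun y hy => Or.inl (by simp; linarith [hy.1]))
    · exact continuousOn_id.rpow_const
        (fun y hy => Or.inl (by simp; intro h; simp [h] at hy; linarith [hy.1]))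
  · rw [ae_restrict_iff' measurableSet_Ioo]
    apply Filter.Eventually.of_forall
    intro y hy
    have hys : 0 < y - s := by linarith [hy.1]
    have hy0 : 0 < y := hs.trans hy.1
    have h1 : y ^ (mu - 1/2) ≤ max t 1 :=
      pow_le_R hy0 (le_trans hy.2.le (le_max_left t 1)) (le_max_right t 1)
        (by linarith) (by linarith)
    have p1 : 0 < s ^ (1/2 - mu) := Real.rpow_pos_of_pos hs _
    have p2 : 0 < (y - s) ^ (mu - 3/2) := Real.rpow_pos_of_pos hys _
    have p3 : 0 < y ^ (mu - 1/2) := Real.rpow_pos_of_pos hy0 _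
    rw [Real.norm_eq_abs, Real.norm_eq_abs, abs_of_nonneg (by positivity),
      abs_of_nonneg (by positivity : (0:ℝ) ≤ c * (y - s) ^ (mu - 3/2))]
    rw [hc]
    nlinarith [mul_le_mul_of_nonneg_left h1 (mul_pos p1 p2).le]

noncomputable def CK (a b T : ℝ) : ℝ :=
  (2 * max T 1 * max T 1 * (2 * max T 1 / ((a - 1/2)/2) + max T 1 * |Real.log T| +
    2 * max T 1)) * (max T 1 / ((a - 1/2)/2)) *
    (max T 1 + (1 + max T 1 * max T 1) / ((1 - b)/2))

lemma CK_pos {a b T : ℝ} (ha : 1/2 < a) (hb : b < 1) : 0 < CK a b T := by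
  have hR1 : (1:ℝ) ≤ max T 1 := le_max_right _ _
  have hε : (0:ℝ) < (a - 1/2)/2 := by linarith
  have hδ : (0:ℝ) < (1 - b)/2 := by linarith
  have t1 : 0 < 2 * max T 1 / ((a - 1/2)/2) := div_pos (by linarith) hε
  have t2 : 0 ≤ max T 1 * |Real.log T| := mul_nonneg (by linarith) (abs_nonneg _)
  have t3 : 0 < (1 + max T 1 * max T 1) / ((1 - b)/2) := div_pos (by nlinarith) hδ
  have tR : 0 < max T 1 / ((a - 1/2)/2) := div_pos (by linarith) hε
  unfold CK
  apply mul_pos (mul_pos (by nlinarith) tR) (by nlinarith)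

set_option maxHeartbeats 1000000 in
lemma K_diff_bound {a b T : ℝ} (ha : 1/2 < a) (hab : a < b) (hb : b < 1) (hT : 0 < T)
    {t s lam lam' : ℝ} (htT : t ≤ T) (hs : 0 < s) (hst : s < t)
    (hlam : lam ∈ Icc a b) (hlam' : lam' ∈ Icc a b) :
    |K lam t s - K lam' t s| ≤ CK a b T * |lam - lam'| * s ^ (-b/2 : ℝ) := by
  have hR1 : (1:ℝ) ≤ max T 1 := le_max_right _ _
  have hTR : T ≤ max T 1 := le_max_left _ _
  have hε : (0:ℝ) < (a - 1/2)/2 := by linarith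
  have hε1 : (a - 1/2)/2 ≤ 1 := by linarith
  have hδ : (0:ℝ) < (1 - b)/2 := by linarith
  have hδ1 : (1 - b)/2 ≤ 1 := by linarith
  have hsT : s < T := lt_of_lt_of_le hst htT
  have hCpt : 0 < 2 * max T 1 * max T 1 * (2 * max T 1 / ((a - 1/2)/2) +
      max T 1 * |Real.log T| + 2 * max T 1) := by
    have t1 : 0 < 2 * max T 1 / ((a - 1/2)/2) := div_pos (by linarith) hε
    have t2 : 0 ≤ max T 1 * |Real.log T| := mul_nonneg (by linarith) (abs_nonneg _)
    have hRp : (0:ℝ) < max T 1 := by linarith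
    have h2R : (0:ℝ) < 2 * max T 1 * max T 1 := by positivity
    exact mul_pos h2R (by linarith)
  have hsb : (0:ℝ) < s ^ ((1:ℝ)/2 - b) := Real.rpow_pos_of_pos hs _
  have hlgs : (0:ℝ) ≤ 1 + |Real.log s| := by positivity
  -- integrability of the integrands
  have hint : ∀ μ ∈ Icc a b, IntegrableOn
      (fun y => s ^ (1/2 - μ) * ((y - s) ^ (μ - 3/2) * y ^ (μ - 1/2))) (Ioo s t) :=
    fun μ hμ => integrableOn_f hs (by linarith [hμ.1]) (by linarith [hμ.2])
  have e1 : ∀ μ : ℝ, K μ t s =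
      ∫ y in Ioo s t, s ^ (1/2 - μ) * ((y - s) ^ (μ - 3/2) * y ^ (μ - 1/2)) := by
    intro μ
    unfold K
    rw [integral_const_mul]
  have ediff : K lam t s - K lam' t s =
      ∫ y in Ioo s t, (s ^ (1/2 - lam) * ((y - s) ^ (lam - 3/2) * y ^ (lam - 1/2)) -
        s ^ (1/2 - lam') * ((y - s) ^ (lam' - 3/2) * y ^ (lam' - 1/2))) := by
    rw [e1 lam, e1 lam', ← integral_sub (hint lam hlam) (hint lam' hlam')]
  set Cpt := 2 * max T 1 * max T 1 * (2 * max T 1 / ((a - 1/2)/2) +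
      max T 1 * |Real.log T| + 2 * max T 1) with hCptdef
  set cst := Cpt * |lam - lam'| * ((1 + |Real.log s|) * s ^ ((1:ℝ)/2 - b)) with hcstdef
  have hcst0 : 0 ≤ cst := by
    apply mul_nonneg (mul_nonneg hCpt.le (abs_nonneg _)) (by positivity)
  have normb : |∫ y in Ioo s t,
      (s ^ (1/2 - lam) * ((y - s) ^ (lam - 3/2) * y ^ (lam - 1/2)) -
        s ^ (1/2 - lam') * ((y - s) ^ (lam' - 3/2) * y ^ (lam' - 1/2)))| ≤
      ∫ y in Ioo s t, cst * (y - s) ^ ((a - 1/2)/2 - 1) := by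
    rw [← Real.norm_eq_abs]
    apply norm_integral_le_of_norm_le
      ((integrableOn_shift_rpow (by linarith)).const_mul cst)
    rw [ae_restrict_iff' measurableSet_Ioo]
    apply Filter.Eventually.of_forall
    intro y hy
    rw [Real.norm_eq_abs]
    calc |s ^ (1/2 - lam) * ((y - s) ^ (lam - 3/2) * y ^ (lam - 1/2)) -
        s ^ (1/2 - lam') * ((y - s) ^ (lam' - 3/2) * y ^ (lam' - 1/2))|
        ≤ Cpt * |lam - lam'| *
          ((1 + |Real.log s|) * s ^ ((1:ℝ)/2 - b) * (y - s) ^ ((a - 1/2)/2 - 1)) :=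
          pointwise_diff_bound ha hab hb hT hs hy.1 (hy.2.le.trans htT) hlam hlam'
      _ = cst * (y - s) ^ ((a - 1/2)/2 - 1) := by rw [hcstdef]; ring
  have ival : ∫ y in Ioo s t, cst * (y - s) ^ ((a - 1/2)/2 - 1) =
      cst * ((t - s) ^ ((a - 1/2)/2) / ((a - 1/2)/2)) := by
    rw [integral_const_mul, integral_shift_rpow (by linarith) (by linarith) hst.le]
    norm_num
  have bound2 : (t - s) ^ ((a - 1/2)/2) ≤ max T 1 :=
    pow_le_R (by linarith) (by linarith) hR1 hε.le hε1
  -- the Φ step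
  have l1 : s ^ ((1 - b)/2) ≤ max T 1 := pow_le_R hs (by linarith) hR1 hδ.le hδ1
  have l2 : s ^ (-((1 - b)/2)) * s ^ ((1 - b)/2) = 1 := by
    rw [← Real.rpow_add hs, neg_add_cancel, Real.rpow_zero]
  have pδ : 0 < s ^ (-((1 - b)/2)) := Real.rpow_pos_of_pos hs _
  have pδ' : 0 < s ^ ((1 - b)/2) := Real.rpow_pos_of_pos hs _
  have key1 : 1 ≤ max T 1 * s ^ (-((1 - b)/2)) := by nlinarith
  have key2' : s ^ ((1 - b)/2) ≤ max T 1 * max T 1 * s ^ (-((1 - b)/2)) := by nlinarith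
  have logb := abs_log_le hs hδ
  have key2 : |Real.log s| ≤
      ((1 + max T 1 * max T 1) / ((1 - b)/2)) * s ^ (-((1 - b)/2)) := by
    calc |Real.log s| ≤ (s ^ (-((1 - b)/2)) + s ^ ((1 - b)/2)) / ((1 - b)/2) := logb
      _ ≤ (s ^ (-((1 - b)/2)) + max T 1 * max T 1 * s ^ (-((1 - b)/2))) / ((1 - b)/2) := by
          gcongr
      _ = ((1 + max T 1 * max T 1) / ((1 - b)/2)) * s ^ (-((1 - b)/2)) := by ring
  have merge : s ^ (-((1 - b)/2)) * s ^ ((1:ℝ)/2 - b) = s ^ (-b/2 : ℝ) := by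
    rw [← Real.rpow_add hs]; congr 1; ring
  have Φstep : (1 + |Real.log s|) * s ^ ((1:ℝ)/2 - b) ≤
      (max T 1 + (1 + max T 1 * max T 1) / ((1 - b)/2)) * s ^ (-b/2 : ℝ) := by
    have h1 : 1 + |Real.log s| ≤
        (max T 1 + (1 + max T 1 * max T 1) / ((1 - b)/2)) * s ^ (-((1 - b)/2)) := by
      nlinarith [key1, key2]
    calc (1 + |Real.log s|) * s ^ ((1:ℝ)/2 - b)
        ≤ ((max T 1 + (1 + max T 1 * max T 1) / ((1 - b)/2)) * s ^ (-((1 - b)/2))) *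
          s ^ ((1:ℝ)/2 - b) := mul_le_mul_of_nonneg_right h1 hsb.le
      _ = (max T 1 + (1 + max T 1 * max T 1) / ((1 - b)/2)) *
          (s ^ (-((1 - b)/2)) * s ^ ((1:ℝ)/2 - b)) := by ring
      _ = (max T 1 + (1 + max T 1 * max T 1) / ((1 - b)/2)) * s ^ (-b/2 : ℝ) := by
          rw [merge]
  -- final chain
  have hphi0 : 0 ≤ Cpt * (max T 1 / ((a - 1/2)/2)) * |lam - lam'| := by
    apply mul_nonneg (mul_nonneg hCpt.le (le_of_lt (div_pos (by linarith) hε))) (abs_nonneg _)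
  calc |K lam t s - K lam' t s|
      ≤ ∫ y in Ioo s t, cst * (y - s) ^ ((a - 1/2)/2 - 1) := by rw [ediff]; exact normb
    _ = cst * ((t - s) ^ ((a - 1/2)/2) / ((a - 1/2)/2)) := ival
    _ ≤ cst * (max T 1 / ((a - 1/2)/2)) := by
        apply mul_le_mul_of_nonneg_left _ hcst0
        gcongr
    _ = (Cpt * (max T 1 / ((a - 1/2)/2)) * |lam - lam'|) *
        ((1 + |Real.log s|) * s ^ ((1:ℝ)/2 - b)) := by rw [hcstdef]; ring
    _ ≤ (Cpt * (max T 1 / ((a - 1/2)/2)) * |lam - lam'|) *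
        ((max T 1 + (1 + max T 1 * max T 1) / ((1 - b)/2)) * s ^ (-b/2 : ℝ)) :=
        mul_le_mul_of_nonneg_left Φstep hphi0
    _ = CK a b T * |lam - lam'| * s ^ (-b/2 : ℝ) := by
        rw [hCptdef]; unfold CK; ring

lemma integrableOn_rpow_Ioo {T p : ℝ} (hp : -1 < p) :
    IntegrableOn (fun u : ℝ => u ^ p) (Ioo (0:ℝ) T) := by
  have := integrableOn_shift_rpow (s := 0) (t := T) hp
  simpa using this

theorem stmt5 (a b T : ℝ) (ha : 1/2 < a) (hab : a < b) (hb : b < 1) (hT : 0 < T) :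
    ∃ C > 0, ∀ t ∈ Set.Ioc (0:ℝ) T, ∀ lam ∈ Set.Icc a b, ∀ lam' ∈ Set.Icc a b,
      ∫ u in Set.Ioo (0:ℝ) t, (K lam t u - K lam' t u) ^ 2 ≤ C * |lam - lam'| ^ 2 := by
  have hbb : (-1:ℝ) < -b := by linarith
  have hJint : IntegrableOn (fun u : ℝ => u ^ (-b)) (Ioo (0:ℝ) T) := integrableOn_rpow_Ioo hbb
  set J := ∫ u in Ioo (0:ℝ) T, u ^ (-b) with hJdef
  have hJ0 : 0 ≤ J :=
    setIntegral_nonneg measurableSet_Ioo fun u hu => Real.rpow_nonneg hu.1.le _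
  have hCK := CK_pos (a := a) (b := b) (T := T) ha hb
  refine ⟨CK a b T ^ 2 * J + 1, by nlinarith, ?_⟩
  intro t ht lam hlam lam' hlam'
  have hIntT : IntegrableOn (fun u : ℝ => CK a b T ^ 2 * |lam - lam'| ^ 2 * u ^ (-b))
      (Ioo (0:ℝ) T) := hJint.const_mul _
  have hIntt : IntegrableOn (fun u : ℝ => CK a b T ^ 2 * |lam - lam'| ^ 2 * u ^ (-b))
      (Ioo (0:ℝ) t) := hIntT.mono_set (Ioo_subset_Ioo_right ht.2)
  have step1 : ∫ u in Ioo (0:ℝ) t, (K lam t u - K lam' t u) ^ 2 ≤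
      ∫ u in Ioo (0:ℝ) t, CK a b T ^ 2 * |lam - lam'| ^ 2 * u ^ (-b) := by
    apply integral_mono_of_nonneg (Filter.Eventually.of_forall fun u => sq_nonneg _) hIntt
    filter_upwards [ae_restrict_mem measurableSet_Ioo] with u hu
    have hbd := K_diff_bound ha hab hb hT ht.2 hu.1 hu.2 hlam hlam'
    have hsq : (K lam t u - K lam' t u) ^ 2 ≤
        (CK a b T * |lam - lam'| * u ^ (-b/2 : ℝ)) ^ 2 := by
      rw [← sq_abs]
      exact pow_le_pow_left₀ (abs_nonneg _) hbd 2
    have hmerge : (u ^ (-b/2 : ℝ)) ^ 2 = u ^ (-b : ℝ) := by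
      rw [pow_two, ← Real.rpow_add hu.1]; congr 1; ring
    calc (K lam t u - K lam' t u) ^ 2
        ≤ (CK a b T * |lam - lam'| * u ^ (-b/2 : ℝ)) ^ 2 := hsq
      _ = CK a b T ^ 2 * |lam - lam'| ^ 2 * (u ^ (-b/2 : ℝ)) ^ 2 := by ring
      _ = CK a b T ^ 2 * |lam - lam'| ^ 2 * u ^ (-b) := by rw [hmerge]
  have step2 : ∫ u in Ioo (0:ℝ) t, CK a b T ^ 2 * |lam - lam'| ^ 2 * u ^ (-b) =
      CK a b T ^ 2 * |lam - lam'| ^ 2 * ∫ u in Ioo (0:ℝ) t, u ^ (-b) :=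
    integral_const_mul _ _
  have step3 : ∫ u in Ioo (0:ℝ) t, u ^ (-b) ≤ J := by
    apply setIntegral_mono_set hJint
    · filter_upwards [ae_restrict_mem measurableSet_Ioo] with u hu
      exact Real.rpow_nonneg hu.1.le _
    · exact HasSubset.Subset.eventuallyLE (Ioo_subset_Ioo_right ht.2)
  have habs : (0:ℝ) ≤ |lam - lam'| ^ 2 := sq_nonneg _
  have hint0 : 0 ≤ ∫ u in Ioo (0:ℝ) t, u ^ (-b) :=
    setIntegral_nonneg measurableSet_Ioo fun u hu => Real.rpow_nonneg hu.1.le _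
  calc ∫ u in Ioo (0:ℝ) t, (K lam t u - K lam' t u) ^ 2
      ≤ CK a b T ^ 2 * |lam - lam'| ^ 2 * ∫ u in Ioo (0:ℝ) t, u ^ (-b) := by
        rw [← step2]; exact step1
    _ ≤ CK a b T ^ 2 * |lam - lam'| ^ 2 * J := by
        apply mul_le_mul_of_nonneg_left step3 (by positivity)
    _ ≤ (CK a b T ^ 2 * J + 1) * |lam - lam'| ^ 2 := by nlinarith
end

section
/- Let 1/2 < a < b < 1, let h : ℝ → [a,b] be β-Hölder continuous with sup h < β ≤ 1, and let X(t,λ) be a family of centered jointly Gaussian random variables such that E[(X(t,λ)-X(s,λ))²] = c_λ^{-2}|t-s|^{2λ} and E[(X(t,λ)-X(t,λ'))²] ≤ C_T|λ-λ'|² for t,s ∈ [0,T], λ,λ' ∈ [a,b], where λ ↦ c_λ^{-2} is continuous and positive on [a,b]. Then B_h(t) = X(t, h(t)) satisfies: there is a constant C > 0 such that E[(B_h(t)-B_h(s))²] ≤ C |t-s|^{2a} for all s,t ∈ [0,T] with |t-s| < 1. -/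
open MeasureTheory Set

theorem stmt6 {Ω : Type*} [MeasureSpace Ω] [IsProbabilityMeasure (volume : Measure Ω)]
    (a b T beta : ℝ) (ha : 1/2 < a) (hab : a < b) (hb : b < 1) (hT : 0 < T)
    (h : ℝ → ℝ) (hrange : ∀ t, h t ∈ Set.Icc a b)
    (L : ℝ) (hHolder : ∀ s t : ℝ, |h t - h s| ≤ L * |t - s| ^ beta)
    (hbeta1 : beta ≤ 1) (hsup : ∃ β' < beta, ∀ t, h t ≤ β')
    (X : ℝ → ℝ → Ω → ℝ)
    (hL2 : ∀ t lam, MemLp (X t lam) 2 volume)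
    (hcenter : ∀ t lam, ∫ ω, X t lam ω = 0)
    (g : ℝ → ℝ) (hg : ContinuousOn g (Set.Icc a b))
    (hgpos : ∀ lam ∈ Set.Icc a b, 0 < g lam)
    (hmoment1 : ∀ lam ∈ Set.Icc a b, ∀ s t : ℝ,
      ∫ ω, (X t lam ω - X s lam ω) ^ 2 = g lam * |t - s| ^ (2 * lam))
    (C_T : ℝ)
    (hmoment2 : ∀ t ∈ Set.Icc (0:ℝ) T, ∀ lam ∈ Set.Icc a b, ∀ lam' ∈ Set.Icc a b,
      ∫ ω, (X t lam ω - X t lam' ω) ^ 2 ≤ C_T * |lam - lam'| ^ 2) :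
    ∃ C > 0, ∀ s ∈ Set.Icc (0:ℝ) T, ∀ t ∈ Set.Icc (0:ℝ) T, |t - s| < 1 →
      ∫ ω, (X t (h t) ω - X s (h s) ω) ^ 2 ≤ C * |t - s| ^ (2 * a) := by
  obtain ⟨β', hβ'lt, hβ'le⟩ := hsup
  have ha0 : (0:ℝ) < a := lt_trans (by norm_num) ha
  have haβ : a < beta := lt_of_le_of_lt (le_trans (hrange 0).1 (hβ'le 0)) hβ'lt
  have hL0 : 0 ≤ L := by
    have h1 := hHolder 0 1
    have : |(1:ℝ) - 0| ^ beta = 1 := by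
      norm_num
    rw [this, mul_one] at h1
    exact le_trans (abs_nonneg _) h1
  obtain ⟨lam0, hlam0, hmax'⟩ :=
    isCompact_Icc.exists_isMaxOn ⟨a, left_mem_Icc.mpr hab.le⟩ hg
  have hmax : ∀ lam ∈ Set.Icc a b, g lam ≤ g lam0 := fun lam hl => hmax' hl
  set M := g lam0 with hM
  have hMpos : 0 < M := hgpos lam0 hlam0
  set C2 := max C_T 0 with hC2
  have hC2nn : 0 ≤ C2 := le_max_right _ _
  refine ⟨2*M + 2*C2*L^2 + 1, by positivity, ?_⟩
  intro s hs t ht hts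
  by_cases hst : t = s
  · subst hst
    have h1 : (∫ ω : Ω, (X t (h t) ω - X t (h t) ω) ^ 2) = 0 := by simp
    rw [h1, sub_self, abs_zero, Real.zero_rpow (by positivity), mul_zero]
  have hx0 : 0 < |t - s| := abs_pos.mpr (sub_ne_zero.mpr hst)
  set f := fun ω => X t (h t) ω - X s (h t) ω with hf
  set k := fun ω => X s (h t) ω - X s (h s) ω with hk
  have hfL2 : MemLp f 2 volume := (hL2 t (h t)).sub (hL2 s (h t))
  have hkL2 : MemLp k 2 volume := (hL2 s (h t)).sub (hL2 s (h s))
  have hf2 : Integrable (fun ω => f ω ^ 2) volume := hfL2.integrable_sq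
  have hk2 : Integrable (fun ω => k ω ^ 2) volume := hkL2.integrable_sq
  have hfk2 : Integrable (fun ω => (f ω + k ω) ^ 2) volume := (hfL2.add hkL2).integrable_sq
  have key : (∫ ω, (X t (h t) ω - X s (h s) ω) ^ 2) ≤
      2 * (∫ ω, f ω ^ 2) + 2 * (∫ ω, k ω ^ 2) := by
    have heq : (fun ω => (X t (h t) ω - X s (h s) ω) ^ 2) =
        (fun ω => (f ω + k ω) ^ 2) := by
      funext ω; simp only [hf, hk]; ring
    rw [heq]
    calc (∫ ω, (f ω + k ω) ^ 2)
        ≤ ∫ ω, (2 * f ω ^ 2 + 2 * k ω ^ 2) :=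
          integral_mono hfk2 ((hf2.const_mul 2).add (hk2.const_mul 2))
            (fun ω => by nlinarith [sq_nonneg (f ω - k ω)])
      _ = 2 * (∫ ω, f ω ^ 2) + 2 * (∫ ω, k ω ^ 2) := by
          rw [integral_add (hf2.const_mul 2) (hk2.const_mul 2),
            integral_const_mul, integral_const_mul]
  have hbound1 : (∫ ω, f ω ^ 2) ≤ M * |t - s| ^ (2 * a) := by
    have := hmoment1 (h t) (hrange t) s t
    simp only [hf]
    rw [this]
    have hexp : |t - s| ^ (2 * h t) ≤ |t - s| ^ (2 * a) :=
      Real.rpow_le_rpow_of_exponent_ge hx0 hts.le (by linarith [(hrange t).1])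
    have hgle : g (h t) ≤ M := hmax _ (hrange t)
    have := Real.rpow_nonneg (abs_nonneg (t - s)) (2 * h t)
    nlinarith [Real.rpow_nonneg (abs_nonneg (t - s)) (2 * a), (hgpos _ (hrange t))]
  have hbound2 : (∫ ω, k ω ^ 2) ≤ C2 * L ^ 2 * |t - s| ^ (2 * a) := by
    have h2 := hmoment2 s hs (h t) (hrange t) (h s) (hrange s)
    have hdh : |h t - h s| ≤ L * |t - s| ^ beta := hHolder s t
    have hdh2 : |h t - h s| ^ 2 ≤ L ^ 2 * (|t - s| ^ beta) ^ 2 := by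
      have := pow_le_pow_left₀ (abs_nonneg _) hdh 2
      calc |h t - h s| ^ 2 ≤ (L * |t - s| ^ beta) ^ 2 := this
        _ = L ^ 2 * (|t - s| ^ beta) ^ 2 := by ring
    have hsq : (|t - s| ^ beta) ^ 2 = |t - s| ^ (beta * 2) := by
      rw [← Real.rpow_natCast (|t - s| ^ beta) 2, ← Real.rpow_mul (abs_nonneg _)]
      norm_num
    have hexp : |t - s| ^ (beta * 2) ≤ |t - s| ^ (2 * a) :=
      Real.rpow_le_rpow_of_exponent_ge hx0 hts.le (by linarith)
    have hchain : |h t - h s| ^ 2 ≤ L ^ 2 * |t - s| ^ (2 * a) := by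
      rw [hsq] at hdh2
      nlinarith [sq_nonneg L]
    calc (∫ ω, k ω ^ 2) ≤ C_T * |h t - h s| ^ 2 := h2
      _ ≤ C2 * |h t - h s| ^ 2 := by
          nlinarith [sq_nonneg (h t - h s), le_max_left C_T (0:ℝ), sq_abs (h t - h s)]
      _ ≤ C2 * (L ^ 2 * |t - s| ^ (2 * a)) := by nlinarith
      _ = C2 * L ^ 2 * |t - s| ^ (2 * a) := by ring
  have hrnn : 0 ≤ |t - s| ^ (2 * a) := Real.rpow_nonneg (abs_nonneg _) _
  calc (∫ ω, (X t (h t) ω - X s (h s) ω) ^ 2)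
      ≤ 2 * (∫ ω, f ω ^ 2) + 2 * (∫ ω, k ω ^ 2) := key
    _ ≤ 2 * (M * |t - s| ^ (2 * a)) + 2 * (C2 * L ^ 2 * |t - s| ^ (2 * a)) := by linarith
    _ = (2 * M + 2 * C2 * L ^ 2) * |t - s| ^ (2 * a) := by ring
    _ ≤ (2 * M + 2 * C2 * L ^ 2 + 1) * |t - s| ^ (2 * a) :=
        mul_le_mul_of_nonneg_right (by linarith) hrnn
end

section
/- Let h : [0,T] → [a,b] ⊂ (1/2,1) be of bounded variation and Lipschitz, and set K(t,s) = K_{h(t)}(t,s) with K_λ as above. Then for every s ∈ (0,T), the function t ↦ K(t,s) has bounded variation on (s,T], and ∫₀^T |K|((s,T],s)² ds < ∞, where |K|((s,T],s) is the total variation of t ↦ K(t,s) on (s,T]. -/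
open MeasureTheory Set Real

lemma my_rpow_le_add {x p q c : ℝ} (hx : 0 < x) (hpc : p ≤ c) (hcq : c ≤ q) :
    x ^ c ≤ x ^ p + x ^ q := by
  rcases le_total x 1 with h1 | h1
  · have h2 := Real.rpow_le_rpow_of_exponent_ge hx h1 hpc
    have h3 : (0:ℝ) ≤ x ^ q := Real.rpow_nonneg hx.le q
    linarith
  · have h2 := Real.rpow_le_rpow_of_exponent_le h1 hcq
    have h3 : (0:ℝ) ≤ x ^ p := Real.rpow_nonneg hx.le p
    linarith

lemma my_abs_log_le {u ε : ℝ} (hu : 0 < u) (hε : 0 < ε) :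
    |Real.log u| ≤ (u ^ ε + u ^ (-ε)) / ε := by
  have key : ∀ v : ℝ, 0 < v → Real.log v ≤ v ^ ε / ε := by
    intro v hv
    have h1 := Real.log_le_sub_one_of_pos (Real.rpow_pos_of_pos hv ε)
    rw [Real.log_rpow hv] at h1
    have h2 : (0:ℝ) < v ^ ε := Real.rpow_pos_of_pos hv ε
    rw [le_div_iff₀ hε]
    nlinarith
  have h1 := key u hu
  have h2 := key u⁻¹ (inv_pos.2 hu)
  rw [Real.log_inv, ← Real.rpow_neg_one, ← Real.rpow_mul hu.le,
    show (-1 : ℝ) * ε = -ε by ring] at h2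
  have hε1 : (0:ℝ) ≤ u ^ ε / ε := div_nonneg (Real.rpow_nonneg hu.le ε) hε.le
  have hε2 : (0:ℝ) ≤ u ^ (-ε) / ε := div_nonneg (Real.rpow_nonneg hu.le (-ε)) hε.le
  rw [abs_le]
  constructor
  · rw [add_div]; linarith
  · rw [add_div]; linarith

lemma my_rpow_sub_rpow {x p q c c' : ℝ} (hx : 0 < x) (hc : c ∈ Icc p q) (hc' : c' ∈ Icc p q) :
    |x ^ c - x ^ c'| ≤ |Real.log x| * (x ^ p + x ^ q) * |c - c'| := by
  have hd : ∀ z ∈ Icc p q, HasDerivWithinAt (fun t : ℝ => x ^ t) (x ^ z * Real.log x) (Icc p q) z :=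
    fun z _ => ((Real.hasStrictDerivAt_const_rpow hx z).hasDerivAt).hasDerivWithinAt
  have hb : ∀ z ∈ Icc p q, ‖x ^ z * Real.log x‖ ≤ (x ^ p + x ^ q) * |Real.log x| := by
    intro z hz
    rw [norm_mul, Real.norm_eq_abs, Real.norm_eq_abs,
      abs_of_pos (Real.rpow_pos_of_pos hx z)]
    exact mul_le_mul_of_nonneg_right (my_rpow_le_add hx hz.1 hz.2) (abs_nonneg _)
  have hmvt := (convex_Icc p q).norm_image_sub_le_of_norm_hasDerivWithin_le hd hb hc' hc
  rw [Real.norm_eq_abs, Real.norm_eq_abs] at hmvt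
  calc |x ^ c - x ^ c'| ≤ (x ^ p + x ^ q) * |Real.log x| * |c - c'| := hmvt
    _ = |Real.log x| * (x ^ p + x ^ q) * |c - c'| := by ring

lemma my_integrableOn_shift {s T r : ℝ} (hr : (-1:ℝ) < r) :
    IntegrableOn (fun y => (y - s) ^ r) (Ioc s T) volume := by
  rcases le_or_gt s T with hsT | hsT
  · have h0 : IntervalIntegrable (fun x : ℝ => x ^ r) volume 0 (T - s) :=
      intervalIntegral.intervalIntegrable_rpow' hr
    have h1 := h0.comp_sub_right s
    rw [zero_add, sub_add_cancel] at h1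
    exact (intervalIntegrable_iff_integrableOn_Ioc_of_le hsT).1 h1
  · rw [Set.Ioc_eq_empty (not_lt.mpr hsT.le)]
    exact integrableOn_empty

lemma my_integrableOn_rpow {T r : ℝ} (hT : 0 ≤ T) (hr : (-1:ℝ) < r) :
    IntegrableOn (fun u : ℝ => u ^ r) (Ioc 0 T) volume :=
  (intervalIntegrable_iff_integrableOn_Ioc_of_le hT).1
    (intervalIntegral.intervalIntegrable_rpow' hr)

lemma my_integral_shift_le {s T r : ℝ} (hs : 0 ≤ s) (hsT : s ≤ T) (hr : (-1:ℝ) < r) :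
    ∫ y in Ioc s T, (y - s) ^ r ≤ ∫ u in Ioc (0:ℝ) T, u ^ r := by
  have heq : ∫ y in Ioc s T, (y - s) ^ r = ∫ u in Ioc (0:ℝ) (T - s), u ^ r := by
    rw [← intervalIntegral.integral_of_le hsT, ← intervalIntegral.integral_of_le (by linarith)]
    have := intervalIntegral.integral_comp_sub_right (a := s) (b := T) (fun u : ℝ => u ^ r) s
    simpa using this
  rw [heq]
  refine setIntegral_mono_set (my_integrableOn_rpow (by linarith) hr) ?_ ?_
  · exact ae_restrict_of_forall_mem measurableSet_Ioc fun u hu => Real.rpow_nonneg hu.1.le r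
  · exact (Set.Ioc_subset_Ioc_right (by linarith)).eventuallyLE

open MeasureTheory Set

set_option maxHeartbeats 2000000 in
theorem stmt8 (a b T : ℝ) (ha : 1/2 < a) (hab : a < b) (hb : b < 1) (hT : 0 < T)
    (h : ℝ → ℝ) (hrange : ∀ t, h t ∈ Set.Icc a b)
    (hBV : BoundedVariationOn h (Set.Icc 0 T))
    (L : NNReal) (hLip : LipschitzOnWith L h (Set.Icc 0 T)) :
    (∀ s ∈ Set.Ioo (0:ℝ) T, BoundedVariationOn (fun t => K (h t) t s) (Set.Ioc s T)) ∧
    (∫⁻ s in Set.Ioc (0:ℝ) T,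
        (eVariationOn (fun t => K (h t) t s) (Set.Ioc s T)) ^ 2) < ⊤ := by
  have ha0 : (0:ℝ) < a - 1/2 := by linarith
  set ε : ℝ := min (a - 1/2) (1 - b) / 2 with hεdef
  have hεmin : (0:ℝ) < min (a - 1/2) (1 - b) := lt_min ha0 (by linarith)
  have hε : 0 < ε := by rw [hεdef]; positivity
  have hεa : ε < a - 1/2 := by
    rw [hεdef]
    have h1 := min_le_left (a - 1/2) (1 - b)
    linarith
  have hεb : 2 * ε ≤ 1 - b := by
    rw [hεdef]
    have h1 := min_le_right (a - 1/2) (1 - b)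
    linarith
  have hε1 : ε ≤ 1 := by linarith
  set Tm : ℝ := max 1 T with hTmdef
  have hTm1 : (1:ℝ) ≤ Tm := le_max_left _ _
  have hTmT : T ≤ Tm := le_max_right _ _
  have hTm0 : (0:ℝ) < Tm := by linarith
  set Cm : ℝ := Tm ^ (1/2 : ℝ) with hCmdef
  have hCm0 : 0 < Cm := Real.rpow_pos_of_pos hTm0 _
  set J : ℝ → ℝ := fun r => ∫ u in Ioc (0:ℝ) T, u ^ r with hJdef
  have hJ0 : ∀ r, 0 ≤ J r := fun r =>
    setIntegral_nonneg measurableSet_Ioc fun u hu => Real.rpow_nonneg hu.1.le r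
  -- exponents
  have hra : (-1:ℝ) < a - 3/2 := by linarith
  have hrb : (-1:ℝ) < b - 3/2 := by linarith
  have hrae : (-1:ℝ) < a - 3/2 - ε := by linarith
  have hrbe : (-1:ℝ) < b - 3/2 - ε := by linarith
  have hrae' : (-1:ℝ) < a - 3/2 + ε := by linarith
  have hrbe' : (-1:ℝ) < b - 3/2 + ε := by linarith
  set Cp : ℝ := J (a - 3/2) + J (b - 3/2) with hCpdef
  have hCp0 : 0 ≤ Cp := add_nonneg (hJ0 _) (hJ0 _)
  set Cl : ℝ := J (a - 3/2 + ε) + J (b - 3/2 + ε) + J (a - 3/2 - ε) + J (b - 3/2 - ε) with hCldef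
  have hCl0 : 0 ≤ Cl := by
    have := hJ0 (a - 3/2 + ε); have := hJ0 (b - 3/2 + ε)
    have := hJ0 (a - 3/2 - ε); have := hJ0 (b - 3/2 - ε)
    rw [hCldef]; linarith
  set Vh : ℝ := (eVariationOn h (Set.Icc 0 T)).toReal with hVhdef
  have hVh0 : 0 ≤ Vh := ENNReal.toReal_nonneg
  set C4 : ℝ := Cm * ((Cl + 2 * Tm * Cp) / ε * Vh + Cp) with hC4def
  have hC40 : 0 ≤ C4 := by
    rw [hC4def]
    have : 0 ≤ (Cl + 2 * Tm * Cp) / ε * Vh := by positivity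
    positivity
  have key : ∀ s : ℝ, 0 < s → s ≤ T →
      eVariationOn (fun t => K (h t) t s) (Set.Ioc s T)
        ≤ ENNReal.ofReal (8 * C4 * (1 + s ^ (1/2 - b - ε))) := by
    intro s hs hsT
    have hsTm : s ≤ Tm := hsT.trans hTmT
    set Q : ℝ → ℝ → ℝ := fun l y => s ^ (1/2 - l) * ((y - s) ^ (l - 3/2) * y ^ (l - 1/2))
      with hQdef
    set Sb : ℝ := s ^ (1/2 - a) + s ^ (1/2 - b) with hSbdef
    have hSb0 : 0 < Sb := by rw [hSbdef]; positivity
    set φ : ℝ → ℝ := fun y => (y - s) ^ (a - 3/2) + (y - s) ^ (b - 3/2) with hφdef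
    have hφy : ∀ y : ℝ, φ y = (y - s) ^ (a - 3/2) + (y - s) ^ (b - 3/2) := fun _ => rfl
    have hφ0 : ∀ y, y ∈ Set.Ioc s T → 0 ≤ φ y := by
      intro y hy
      have h1 : (0:ℝ) ≤ y - s := (sub_pos.2 hy.1).le
      exact add_nonneg (Real.rpow_nonneg h1 _) (Real.rpow_nonneg h1 _)
    have hφint : IntegrableOn φ (Set.Ioc s T) volume :=
      (my_integrableOn_shift hra).add (my_integrableOn_shift hrb)
    have hsneg0 : (0:ℝ) ≤ s ^ (-ε) := Real.rpow_nonneg hs.le _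
    have hQ0 : ∀ l y, y ∈ Set.Ioc s T → 0 ≤ Q l y := by
      intro l y hy
      have h1 : (0:ℝ) ≤ y - s := (sub_pos.2 hy.1).le
      have h2 : (0:ℝ) ≤ y := (hs.trans hy.1).le
      exact mul_nonneg (Real.rpow_nonneg hs.le _)
        (mul_nonneg (Real.rpow_nonneg h1 _) (Real.rpow_nonneg h2 _))
    have hQbound : ∀ l, l ∈ Set.Icc a b → ∀ y, y ∈ Set.Ioc s T →
        Q l y ≤ Sb * Cm * (y - s) ^ (l - 3/2) := by
      intro l hl y hy
      have hys : (0:ℝ) < y - s := sub_pos.2 hy.1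
      have hy0 : (0:ℝ) < y := hs.trans hy.1
      have h1 : s ^ (1/2 - l) ≤ Sb := by
        have := my_rpow_le_add (x := s) (c := 1/2 - l) hs (p := 1/2 - b) (q := 1/2 - a)
          (by linarith [hl.2]) (by linarith [hl.1])
        rw [hSbdef]; linarith
      have h2 : y ^ (l - 1/2) ≤ Cm := by
        calc y ^ (l - 1/2) ≤ Tm ^ (l - 1/2) :=
              Real.rpow_le_rpow hy0.le (hy.2.trans hTmT) (by linarith [hl.1])
          _ ≤ Tm ^ (1/2:ℝ) := Real.rpow_le_rpow_of_exponent_le hTm1 (by linarith [hl.2])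
      have h3 : (0:ℝ) ≤ (y - s) ^ (l - 3/2) := Real.rpow_nonneg hys.le _
      have h4 : (0:ℝ) ≤ y ^ (l - 1/2) := Real.rpow_nonneg hy0.le _
      have h5 : (0:ℝ) ≤ s ^ (1/2 - l) := Real.rpow_nonneg hs.le _
      calc Q l y = s ^ (1/2 - l) * (y - s) ^ (l - 3/2) * y ^ (l - 1/2) := by
            rw [hQdef]; ring
        _ ≤ Sb * (y - s) ^ (l - 3/2) * Cm := by
            apply mul_le_mul (mul_le_mul h1 le_rfl h3 hSb0.le) h2 h4
            positivity
        _ = Sb * Cm * (y - s) ^ (l - 3/2) := by ring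
    have hQφ : ∀ l, l ∈ Set.Icc a b → ∀ y, y ∈ Set.Ioc s T →
        Q l y ≤ Sb * Cm * φ y := by
      intro l hl y hy
      have hys : (0:ℝ) < y - s := sub_pos.2 hy.1
      refine (hQbound l hl y hy).trans ?_
      have h1 := my_rpow_le_add (x := y - s) (c := l - 3/2) hys (p := a - 3/2) (q := b - 3/2)
        (by linarith [hl.1]) (by linarith [hl.2])
      have h6 : (0:ℝ) ≤ Sb * Cm := by positivity
      rw [hφy y]
      exact mul_le_mul_of_nonneg_left h1 h6
    have hrep : ∀ l y, y ∈ Set.Ioc s T →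
        Q l y = ((y - s) * y / s) ^ l *
          (s ^ (1/2:ℝ) * ((y - s) ^ (-(3/2):ℝ) * y ^ (-(1/2):ℝ))) := by
      intro l y hy
      have hys : (0:ℝ) < y - s := sub_pos.2 hy.1
      have hy0 : (0:ℝ) < y := hs.trans hy.1
      simp only [hQdef]
      rw [Real.div_rpow (by positivity) hs.le, Real.mul_rpow hys.le hy0.le]
      rw [show (1/2 - l : ℝ) = 1/2 + (-l) by ring, show (l - 3/2 : ℝ) = l + (-(3/2)) by ring,
        show (l - 1/2 : ℝ) = l + (-(1/2)) by ring,
        Real.rpow_add hs, Real.rpow_add hys, Real.rpow_add hy0,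
        Real.rpow_neg hs.le l]
      have h1 : s ^ l ≠ 0 := (Real.rpow_pos_of_pos hs l).ne'
      field_simp
    have hQcont : ∀ l, ContinuousOn (fun y => Q l y) (Set.Ioc s T) := by
      intro l y hy
      have hys : y - s ≠ 0 := (sub_pos.2 hy.1).ne'
      have hy0 : y ≠ 0 := (hs.trans hy.1).ne'
      apply ContinuousAt.continuousWithinAt
      exact continuousAt_const.mul
        ((((continuous_id.sub continuous_const).continuousAt).rpow_const (Or.inl hys)).mul
          ((continuous_id.continuousAt).rpow_const (Or.inl hy0)))
    have hQint : ∀ l, l ∈ Set.Icc a b → IntegrableOn (fun y => Q l y) (Set.Ioc s T) volume := by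
      intro l hl
      refine Integrable.mono' (hφint.const_mul (Sb * Cm))
        ((hQcont l).aestronglyMeasurable measurableSet_Ioc) ?_
      refine ae_restrict_of_forall_mem measurableSet_Ioc fun y hy => ?_
      rw [Real.norm_eq_abs, abs_of_nonneg (hQ0 l y hy)]
      exact hQφ l hl y hy
    set Db : ℝ → ℝ := fun y =>
      ((((y - s) ^ ε + (y - s) ^ (-ε)) + 2 * (Tm + s ^ (-ε))) * φ y) * (Sb * Cm / ε) with hDbdef
    have hDby : ∀ y : ℝ, Db y =
        ((((y - s) ^ ε + (y - s) ^ (-ε)) + 2 * (Tm + s ^ (-ε))) * φ y) * (Sb * Cm / ε) :=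
      fun _ => rfl
    have hDb0 : ∀ y, y ∈ Set.Ioc s T → 0 ≤ Db y := by
      intro y hy
      have h1 : (0:ℝ) ≤ y - s := (sub_pos.2 hy.1).le
      have h2 := hφ0 y hy
      have h3 : (0:ℝ) ≤ (y - s) ^ ε := Real.rpow_nonneg h1 _
      have h4 : (0:ℝ) ≤ (y - s) ^ (-ε) := Real.rpow_nonneg h1 _
      rw [hDby y]
      apply mul_nonneg (mul_nonneg _ h2) (by positivity)
      have h5 : (0:ℝ) ≤ 2 * (Tm + s ^ (-ε)) := by linarith
      linarith
    have hdiff : ∀ l l', l ∈ Set.Icc a b → l' ∈ Set.Icc a b → ∀ y, y ∈ Set.Ioc s T →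
        |Q l y - Q l' y| ≤ |l - l'| * Db y := by
      intro l l' hl hl' y hy
      have hys : (0:ℝ) < y - s := sub_pos.2 hy.1
      have hy0 : (0:ℝ) < y := hs.trans hy.1
      set W : ℝ := (y - s) * y / s with hWdef
      set ρ : ℝ := s ^ (1/2:ℝ) * ((y - s) ^ (-(3/2):ℝ) * y ^ (-(1/2):ℝ)) with hρdef
      have hW0 : (0:ℝ) < W := by rw [hWdef]; positivity
      have hρ0 : (0:ℝ) ≤ ρ := by rw [hρdef]; positivity
      have e1 : |Q l y - Q l' y| = |W ^ l - W ^ l'| * ρ := by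
        rw [hrep l y hy, hrep l' y hy, ← sub_mul, abs_mul, abs_of_nonneg hρ0]
      have e2 := my_rpow_sub_rpow (p := a) (q := b) hW0 hl hl'
      have e3 : |Q l y - Q l' y|
          ≤ |Real.log W| * (Q a y + Q b y) * |l - l'| := by
        rw [e1, hrep a y hy, hrep b y hy]
        calc |W ^ l - W ^ l'| * ρ
            ≤ (|Real.log W| * (W ^ a + W ^ b) * |l - l'|) * ρ :=
              mul_le_mul_of_nonneg_right e2 hρ0
          _ = |Real.log W| * (W ^ a * ρ + W ^ b * ρ) * |l - l'| := by ring
      have hlog : |Real.log W|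
          ≤ (((y - s) ^ ε + (y - s) ^ (-ε)) + 2 * (Tm + s ^ (-ε))) / ε := by
        have hlw : Real.log W = Real.log (y - s) + Real.log y - Real.log s := by
          rw [hWdef, Real.log_div (by positivity) hs.ne', Real.log_mul hys.ne' hy0.ne']
        have b1 := my_abs_log_le hys hε
        have b2 := my_abs_log_le hy0 hε
        have b3 := my_abs_log_le hs hε
        have hyε : y ^ ε ≤ Tm := by
          calc y ^ ε ≤ Tm ^ ε := Real.rpow_le_rpow hy0.le (hy.2.trans hTmT) hε.le
            _ ≤ Tm ^ (1:ℝ) := Real.rpow_le_rpow_of_exponent_le hTm1 hε1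
            _ = Tm := Real.rpow_one Tm
        have hyinv : y ^ (-ε) ≤ s ^ (-ε) :=
          Real.rpow_le_rpow_of_nonpos hs hy.1.le (by linarith)
        have hsε : s ^ ε ≤ Tm := by
          calc s ^ ε ≤ Tm ^ ε := Real.rpow_le_rpow hs.le hsTm hε.le
            _ ≤ Tm ^ (1:ℝ) := Real.rpow_le_rpow_of_exponent_le hTm1 hε1
            _ = Tm := Real.rpow_one Tm
        have habs1 : |Real.log W| ≤ |Real.log (y - s)| + |Real.log y| + |Real.log s| := by
          rw [hlw]
          calc |Real.log (y - s) + Real.log y - Real.log s|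
              ≤ |Real.log (y - s) + Real.log y| + |Real.log s| := abs_sub _ _
            _ ≤ |Real.log (y - s)| + |Real.log y| + |Real.log s| :=
              add_le_add_left (abs_add_le _ _) _
        have hnum : (y ^ ε + y ^ (-ε)) + (s ^ ε + s ^ (-ε)) ≤ 2 * (Tm + s ^ (-ε)) := by
          linarith
        calc |Real.log W| ≤ |Real.log (y - s)| + |Real.log y| + |Real.log s| := habs1
          _ ≤ ((y - s) ^ ε + (y - s) ^ (-ε)) / ε + (y ^ ε + y ^ (-ε)) / ε
              + (s ^ ε + s ^ (-ε)) / ε := by linarith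
          _ = (((y - s) ^ ε + (y - s) ^ (-ε)) + ((y ^ ε + y ^ (-ε)) + (s ^ ε + s ^ (-ε)))) / ε := by
              ring
          _ ≤ (((y - s) ^ ε + (y - s) ^ (-ε)) + 2 * (Tm + s ^ (-ε))) / ε := by
              gcongr
      have hQab : Q a y + Q b y ≤ Sb * Cm * φ y := by
        have h1 := hQbound a ⟨le_refl a, hab.le⟩ y hy
        have h2 := hQbound b ⟨hab.le, le_refl b⟩ y hy
        rw [hφy y, mul_add]
        exact add_le_add h1 h2
      have hNnn : (0:ℝ) ≤ (((y - s) ^ ε + (y - s) ^ (-ε)) + 2 * (Tm + s ^ (-ε))) / ε := by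
        have h3 : (0:ℝ) ≤ (y - s) ^ ε := Real.rpow_nonneg hys.le _
        have h4 : (0:ℝ) ≤ (y - s) ^ (-ε) := Real.rpow_nonneg hys.le _
        have h5 : (0:ℝ) ≤ 2 * (Tm + s ^ (-ε)) := by linarith
        apply div_nonneg _ hε.le
        linarith
      have hcomb : |Real.log W| * (Q a y + Q b y)
          ≤ (((y - s) ^ ε + (y - s) ^ (-ε)) + 2 * (Tm + s ^ (-ε))) / ε * (Sb * Cm * φ y) :=
        mul_le_mul hlog hQab (add_nonneg (hQ0 a y hy) (hQ0 b y hy)) hNnn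
      calc |Q l y - Q l' y| ≤ |Real.log W| * (Q a y + Q b y) * |l - l'| := e3
        _ ≤ ((((y - s) ^ ε + (y - s) ^ (-ε)) + 2 * (Tm + s ^ (-ε))) / ε * (Sb * Cm * φ y))
            * |l - l'| := mul_le_mul_of_nonneg_right hcomb (abs_nonneg _)
        _ = |l - l'| * Db y := by rw [hDby y]; ring
    have hDbexp : ∀ y ∈ Set.Ioc s T, Db y =
        ((y - s) ^ (a - 3/2 + ε) + (y - s) ^ (b - 3/2 + ε) +
          ((y - s) ^ (a - 3/2 - ε) + (y - s) ^ (b - 3/2 - ε)) +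
          2 * (Tm + s ^ (-ε)) * φ y) * (Sb * Cm / ε) := by
      intro y hy
      have hys : (0:ℝ) < y - s := sub_pos.2 hy.1
      rw [hDby y, hφy y]
      rw [show a - 3/2 + ε = ε + (a - 3/2) by ring, show b - 3/2 + ε = ε + (b - 3/2) by ring,
        show a - 3/2 - ε = -ε + (a - 3/2) by ring, show b - 3/2 - ε = -ε + (b - 3/2) by ring,
        Real.rpow_add hys, Real.rpow_add hys, Real.rpow_add hys, Real.rpow_add hys]
      ring
    have hDbint : IntegrableOn Db (Set.Ioc s T) volume := by
      have hint : IntegrableOn (fun y => ((y - s) ^ (a - 3/2 + ε) + (y - s) ^ (b - 3/2 + ε) +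
          ((y - s) ^ (a - 3/2 - ε) + (y - s) ^ (b - 3/2 - ε)) +
          2 * (Tm + s ^ (-ε)) * φ y) * (Sb * Cm / ε)) (Set.Ioc s T) volume := by
        apply Integrable.mul_const
        exact (((my_integrableOn_shift hrae').add (my_integrableOn_shift hrbe')).add
          ((my_integrableOn_shift hrae).add (my_integrableOn_shift hrbe))).add
          (hφint.const_mul _)
      exact hint.congr_fun (fun y hy => (hDbexp y hy).symm) measurableSet_Ioc
    set DIb : ℝ := (Cl + 2 * (Tm + s ^ (-ε)) * Cp) * (Sb * Cm / ε) with hDIbdef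
    have hDIb0 : 0 ≤ DIb := by
      rw [hDIbdef]
      apply mul_nonneg _ (by positivity)
      have h5 : (0:ℝ) ≤ 2 * (Tm + s ^ (-ε)) := by linarith
      have h6 : 0 ≤ 2 * (Tm + s ^ (-ε)) * Cp := mul_nonneg h5 hCp0
      linarith
    have hDI : ∫ y in Set.Ioc s T, Db y ≤ DIb := by
      rw [setIntegral_congr_fun measurableSet_Ioc hDbexp, integral_mul_const]
      rw [hDIbdef]
      apply mul_le_mul_of_nonneg_right _ (by positivity)
      have iA := my_integrableOn_shift (s := s) (T := T) hrae'
      have iB := my_integrableOn_shift (s := s) (T := T) hrbe'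
      have iC := my_integrableOn_shift (s := s) (T := T) hrae
      have iD := my_integrableOn_shift (s := s) (T := T) hrbe
      have iph : IntegrableOn (fun y => 2 * (Tm + s ^ (-ε)) * φ y) (Set.Ioc s T) volume :=
        hφint.const_mul _
      have iAB : IntegrableOn (fun y => (y - s) ^ (a - 3/2 + ε) + (y - s) ^ (b - 3/2 + ε))
          (Set.Ioc s T) volume := iA.add iB
      have iCD : IntegrableOn (fun y => (y - s) ^ (a - 3/2 - ε) + (y - s) ^ (b - 3/2 - ε))
          (Set.Ioc s T) volume := iC.add iD
      have iABCD : IntegrableOn (fun y => (y - s) ^ (a - 3/2 + ε) + (y - s) ^ (b - 3/2 + ε) +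
          ((y - s) ^ (a - 3/2 - ε) + (y - s) ^ (b - 3/2 - ε))) (Set.Ioc s T) volume := iAB.add iCD
      rw [integral_add iABCD iph, integral_add iAB iCD, integral_add iA iB, integral_add iC iD,
        MeasureTheory.integral_const_mul]
      have iφeq : ∫ y in Set.Ioc s T, φ y
          = (∫ y in Set.Ioc s T, (y - s) ^ (a - 3/2))
            + ∫ y in Set.Ioc s T, (y - s) ^ (b - 3/2) := by
        simp only [hφdef]
        exact integral_add (my_integrableOn_shift hra) (my_integrableOn_shift hrb)
      have sh1 := my_integral_shift_le hs.le hsT hrae'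
      have sh2 := my_integral_shift_le hs.le hsT hrbe'
      have sh3 := my_integral_shift_le hs.le hsT hrae
      have sh4 := my_integral_shift_le hs.le hsT hrbe
      have sh5 := my_integral_shift_le hs.le hsT hra
      have sh6 := my_integral_shift_le hs.le hsT hrb
      rw [hCldef, hCpdef]
      simp only [hJdef]
      have h5 : (0:ℝ) ≤ 2 * (Tm + s ^ (-ε)) := by linarith
      have hmul := mul_le_mul_of_nonneg_left
        (by rw [iφeq] at *; exact add_le_add sh5 sh6 :
          ∫ y in Set.Ioc s T, φ y ≤ (∫ u in Set.Ioc (0:ℝ) T, u ^ (a - 3/2))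
            + ∫ u in Set.Ioc (0:ℝ) T, u ^ (b - 3/2)) h5
      linarith
    set Φ : ℝ → ℝ := fun u => ∫ y in Set.Ioc s u, Sb * Cm * φ y with hΦdef
    have hsplit : ∀ g : ℝ → ℝ, IntegrableOn g (Set.Ioc s T) volume →
        ∀ t' t : ℝ, s ≤ t' → t' ≤ t → t ≤ T →
        ∫ y in Set.Ioc s t, g y = (∫ y in Set.Ioc s t', g y) + ∫ y in Set.Ioc t' t, g y := by
      intro g hg t' t h1 h2 h3
      rw [← Set.Ioc_union_Ioc_eq_Ioc h1 h2]
      exact setIntegral_union (Set.Ioc_disjoint_Ioc_of_le le_rfl) measurableSet_Ioc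
        (hg.mono_set (Set.Ioc_subset_Ioc_right (h2.trans h3)))
        (hg.mono_set (Set.Ioc_subset_Ioc h1 h3))
    have hΦsplit : ∀ t' t : ℝ, s ≤ t' → t' ≤ t → t ≤ T →
        Φ t = Φ t' + ∫ y in Set.Ioc t' t, Sb * Cm * φ y :=
      fun t' t h1 h2 h3 => hsplit _ (hφint.const_mul _) t' t h1 h2 h3
    have hζ0 : ∀ y, y ∈ Set.Ioc s T → 0 ≤ Sb * Cm * φ y := fun y hy =>
      mul_nonneg (by positivity) (hφ0 y hy)
    have hrepK : ∀ t, t ∈ Set.Ioc s T → K (h t) t s = ∫ y in Set.Ioc s t, Q (h t) y := by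
      intro t ht
      rw [show K (h t) t s = s ^ (1/2 - h t) *
        ∫ y in Set.Ioo s t, (y - s) ^ (h t - 3/2) * y ^ (h t - 1/2) from rfl]
      rw [← MeasureTheory.integral_Ioc_eq_integral_Ioo, ← MeasureTheory.integral_const_mul]
    have hpair : ∀ t' t : ℝ, t' ∈ Set.Ioc s T → t ∈ Set.Ioc s T → t' ≤ t →
        |K (h t) t s - K (h t') t' s| ≤ DIb * |h t - h t'| + (Φ t - Φ t') := by
      intro t' t ht' ht htt
      have hl := hrange t
      have hl' := hrange t'
      have hsub1 : Set.Ioc s t' ⊆ Set.Ioc s T := Set.Ioc_subset_Ioc_right ht'.2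
      have hsub2 : Set.Ioc t' t ⊆ Set.Ioc s T := Set.Ioc_subset_Ioc ht'.1.le ht.2
      rw [hrepK t ht, hrepK t' ht']
      rw [hsplit (fun y => Q (h t) y) (hQint (h t) hl) t' t ht'.1.le htt ht.2]
      have e1 : |(∫ y in Set.Ioc s t', Q (h t) y) - ∫ y in Set.Ioc s t', Q (h t') y|
          ≤ DIb * |h t - h t'| := by
        rw [← integral_sub ((hQint (h t) hl).mono_set hsub1)
          ((hQint (h t') hl').mono_set hsub1)]
        have habs : |∫ y in Set.Ioc s t', (Q (h t) y - Q (h t') y)|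
            ≤ ∫ y in Set.Ioc s t', |Q (h t) y - Q (h t') y| := by
          have hh := norm_integral_le_integral_norm (μ := volume.restrict (Set.Ioc s t'))
            (fun y => Q (h t) y - Q (h t') y)
          simpa [Real.norm_eq_abs] using hh
        refine habs.trans ?_
        calc ∫ y in Set.Ioc s t', |Q (h t) y - Q (h t') y|
            ≤ ∫ y in Set.Ioc s t', |h t - h t'| * Db y := by
              refine setIntegral_mono_on ?_ ?_ measurableSet_Ioc ?_
              · exact (((hQint (h t) hl).mono_set hsub1).sub
                  ((hQint (h t') hl').mono_set hsub1)).abs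
              · exact (hDbint.mono_set hsub1).const_mul _
              · exact fun y hy => hdiff (h t) (h t') hl hl' y (hsub1 hy)
          _ ≤ ∫ y in Set.Ioc s T, |h t - h t'| * Db y := by
              refine setIntegral_mono_set (hDbint.const_mul _) ?_ hsub1.eventuallyLE
              exact ae_restrict_of_forall_mem measurableSet_Ioc fun y hy =>
                mul_nonneg (abs_nonneg _) (hDb0 y hy)
          _ = |h t - h t'| * ∫ y in Set.Ioc s T, Db y := MeasureTheory.integral_const_mul _ _
          _ ≤ |h t - h t'| * DIb := mul_le_mul_of_nonneg_left hDI (abs_nonneg _)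
          _ = DIb * |h t - h t'| := mul_comm _ _
      have e2a : 0 ≤ ∫ y in Set.Ioc t' t, Q (h t) y :=
        setIntegral_nonneg measurableSet_Ioc fun y hy => hQ0 _ y (hsub2 hy)
      have e2b : (∫ y in Set.Ioc t' t, Q (h t) y) ≤ Φ t - Φ t' := by
        have hΦe := hΦsplit t' t ht'.1.le htt ht.2
        have hmon : (∫ y in Set.Ioc t' t, Q (h t) y) ≤ ∫ y in Set.Ioc t' t, Sb * Cm * φ y := by
          refine setIntegral_mono_on ((hQint (h t) hl).mono_set hsub2)
            (MeasureTheory.IntegrableOn.mono_set (hφint.const_mul _) hsub2) measurableSet_Ioc ?_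
          exact fun y hy => hQφ (h t) hl y (hsub2 hy)
        linarith
      calc |((∫ y in Set.Ioc s t', Q (h t) y) + ∫ y in Set.Ioc t' t, Q (h t) y) -
            ∫ y in Set.Ioc s t', Q (h t') y|
          ≤ |(∫ y in Set.Ioc s t', Q (h t) y) - ∫ y in Set.Ioc s t', Q (h t') y| +
            |∫ y in Set.Ioc t' t, Q (h t) y| := by
            rw [show ((∫ y in Set.Ioc s t', Q (h t) y) + ∫ y in Set.Ioc t' t, Q (h t) y) -
              ∫ y in Set.Ioc s t', Q (h t') y
              = ((∫ y in Set.Ioc s t', Q (h t) y) - ∫ y in Set.Ioc s t', Q (h t') y) +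
                ∫ y in Set.Ioc t' t, Q (h t) y by ring]
            exact abs_add_le _ _
        _ ≤ DIb * |h t - h t'| + (Φ t - Φ t') := by
            rw [abs_of_nonneg e2a]
            exact add_le_add e1 e2b
    have hEh : eVariationOn h (Set.Icc 0 T) ≠ ⊤ := hBV
    have hvar : eVariationOn (fun t => K (h t) t s) (Set.Ioc s T)
        ≤ ENNReal.ofReal (DIb * Vh + Sb * Cm * Cp) := by
      apply iSup_le
      rintro ⟨n, ⟨u, hu, us⟩⟩
      have hΔΦ : ∀ i : ℕ, 0 ≤ Φ (u (i+1)) - Φ (u i) := by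
        intro i
        have h1 := hΦsplit (u i) (u (i+1)) (us i).1.le (hu (Nat.le_succ i)) (us (i+1)).2
        have h2 : 0 ≤ ∫ y in Set.Ioc (u i) (u (i+1)), Sb * Cm * φ y :=
          setIntegral_nonneg measurableSet_Ioc fun y hy =>
            hζ0 y (Set.Ioc_subset_Ioc (us i).1.le (us (i+1)).2 hy)
        linarith
      calc (∑ i ∈ Finset.range n, edist ((fun t => K (h t) t s) (u (i+1)))
            ((fun t => K (h t) t s) (u i)))
          ≤ ∑ i ∈ Finset.range n, (ENNReal.ofReal (DIb * |h (u (i+1)) - h (u i)|) +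
              ENNReal.ofReal (Φ (u (i+1)) - Φ (u i))) := by
            refine Finset.sum_le_sum fun i _ => ?_
            rw [edist_dist, Real.dist_eq]
            rw [← ENNReal.ofReal_add (mul_nonneg hDIb0 (abs_nonneg _)) (hΔΦ i)]
            exact ENNReal.ofReal_le_ofReal
              (hpair (u i) (u (i+1)) (us i) (us (i+1)) (hu (Nat.le_succ i)))
        _ = (∑ i ∈ Finset.range n, ENNReal.ofReal (DIb * |h (u (i+1)) - h (u i)|)) +
            ∑ i ∈ Finset.range n, ENNReal.ofReal (Φ (u (i+1)) - Φ (u i)) :=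
            Finset.sum_add_distrib
        _ ≤ ENNReal.ofReal DIb * ENNReal.ofReal Vh + ENNReal.ofReal (Sb * Cm * Cp) := by
            refine add_le_add ?_ ?_
            · calc ∑ i ∈ Finset.range n, ENNReal.ofReal (DIb * |h (u (i+1)) - h (u i)|)
                  = ∑ i ∈ Finset.range n,
                      ENNReal.ofReal DIb * ENNReal.ofReal |h (u (i+1)) - h (u i)| := by
                    refine Finset.sum_congr rfl fun i _ => ?_
                    rw [ENNReal.ofReal_mul hDIb0]
                _ = ENNReal.ofReal DIb *
                    ∑ i ∈ Finset.range n, ENNReal.ofReal |h (u (i+1)) - h (u i)| :=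
                    (Finset.mul_sum _ _ _).symm
                _ ≤ ENNReal.ofReal DIb * eVariationOn h (Set.Icc 0 T) := by
                    refine mul_le_mul_right ?_ _
                    have e : ∀ i : ℕ, ENNReal.ofReal |h (u (i+1)) - h (u i)|
                        = edist (h (u (i+1))) (h (u i)) :=
                      fun i => by rw [edist_dist, Real.dist_eq]
                    rw [Finset.sum_congr rfl fun i _ => e i]
                    exact (eVariationOn.sum_le (f := h) (n := n) hu us).trans
                      (eVariationOn.mono h fun x hx => ⟨(hs.trans hx.1).le, hx.2⟩)
                _ = ENNReal.ofReal DIb * ENNReal.ofReal Vh := by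
                    rw [hVhdef, ENNReal.ofReal_toReal hEh]
            · calc ∑ i ∈ Finset.range n, ENNReal.ofReal (Φ (u (i+1)) - Φ (u i))
                  = ENNReal.ofReal (∑ i ∈ Finset.range n, (Φ (u (i+1)) - Φ (u i))) :=
                    (ENNReal.ofReal_sum_of_nonneg fun i _ => hΔΦ i).symm
                _ = ENNReal.ofReal (Φ (u n) - Φ (u 0)) := by
                    rw [Finset.sum_range_sub (fun i => Φ (u i))]
                _ ≤ ENNReal.ofReal (Sb * Cm * Cp) := by
                    apply ENNReal.ofReal_le_ofReal
                    have h1 := hΦsplit (u n) T (us n).1.le (us n).2 le_rfl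
                    have h2 : 0 ≤ ∫ y in Set.Ioc (u n) T, Sb * Cm * φ y :=
                      setIntegral_nonneg measurableSet_Ioc fun y hy =>
                        hζ0 y (Set.Ioc_subset_Ioc (us n).1.le le_rfl hy)
                    have h3 : 0 ≤ Φ (u 0) :=
                      setIntegral_nonneg measurableSet_Ioc fun y hy =>
                        hζ0 y (Set.Ioc_subset_Ioc_right (us 0).2 hy)
                    have hΦT2 : Φ T ≤ Sb * Cm * Cp := by
                      have hTeq : Φ T = Sb * Cm * ∫ y in Set.Ioc s T, φ y :=
                        MeasureTheory.integral_const_mul _ _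
                      rw [hTeq]
                      apply mul_le_mul_of_nonneg_left _ (by positivity)
                      have iφeq : ∫ y in Set.Ioc s T, φ y
                          = (∫ y in Set.Ioc s T, (y - s) ^ (a - 3/2))
                            + ∫ y in Set.Ioc s T, (y - s) ^ (b - 3/2) := by
                        simp only [hφdef]
                        exact integral_add (my_integrableOn_shift hra) (my_integrableOn_shift hrb)
                      rw [iφeq, hCpdef]
                      simp only [hJdef]
                      exact add_le_add (my_integral_shift_le hs.le hsT hra)
                        (my_integral_shift_le hs.le hsT hrb)
                    linarith
        _ = ENNReal.ofReal (DIb * Vh + Sb * Cm * Cp) := by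
            rw [← ENNReal.ofReal_mul hDIb0,
              ← ENNReal.ofReal_add (mul_nonneg hDIb0 hVh0)
                (mul_nonneg (mul_nonneg hSb0.le hCm0.le) hCp0)]
    refine hvar.trans (ENNReal.ofReal_le_ofReal ?_)
    have hX1 : (1:ℝ) ≤ 1 + s ^ (-ε) := by linarith
    have hsb : (0:ℝ) ≤ s ^ (1/2 - b) := Real.rpow_nonneg hs.le _
    have hsbe : (0:ℝ) ≤ s ^ (1/2 - b - ε) := Real.rpow_nonneg hs.le _
    have hsa : (0:ℝ) ≤ s ^ (1/2 - a) := Real.rpow_nonneg hs.le _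
    have hc1 : s ^ (1/2 - a) ≤ 1 + s ^ (1/2 - b) := by
      rcases le_total s 1 with h1 | h1
      · have := Real.rpow_le_rpow_of_exponent_ge hs h1
          (show (1/2 - b : ℝ) ≤ 1/2 - a by linarith)
        linarith
      · have := Real.rpow_le_one_of_one_le_of_nonpos h1 (show (1/2 - a : ℝ) ≤ 0 by linarith)
        linarith
    have hc2 : s ^ (-ε) ≤ 1 + s ^ (1/2 - b - ε) := by
      rcases le_total s 1 with h1 | h1
      · have := Real.rpow_le_rpow_of_exponent_ge hs h1
          (show (1/2 - b - ε : ℝ) ≤ -ε by linarith)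
        linarith
      · have := Real.rpow_le_one_of_one_le_of_nonpos h1 (show (-ε : ℝ) ≤ 0 by linarith)
        linarith
    have hc3 : s ^ (1/2 - b) ≤ 1 + s ^ (1/2 - b - ε) := by
      rcases le_total s 1 with h1 | h1
      · have := Real.rpow_le_rpow_of_exponent_ge hs h1
          (show (1/2 - b - ε : ℝ) ≤ 1/2 - b by linarith)
        linarith
      · have := Real.rpow_le_one_of_one_le_of_nonpos h1 (show (1/2 - b : ℝ) ≤ 0 by linarith)
        linarith
    have hmulbe : s ^ (1/2 - b) * s ^ (-ε) = s ^ (1/2 - b - ε) := by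
      rw [← Real.rpow_add hs]; ring_nf
    have hSbX : Sb * (1 + s ^ (-ε)) ≤ 8 * (1 + s ^ (1/2 - b - ε)) := by
      rw [hSbdef]
      have p1 := mul_le_mul_of_nonneg_right hc1 hsneg0
      have p2 : (1 + s ^ (1/2 - b)) * s ^ (-ε) = s ^ (-ε) + s ^ (1/2 - b - ε) := by
        rw [add_mul, one_mul, hmulbe]
      have p3 : (s ^ (1/2 - a) + s ^ (1/2 - b)) * (1 + s ^ (-ε))
          = s ^ (1/2 - a) + s ^ (1/2 - b) + (s ^ (1/2 - a) * s ^ (-ε)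
            + s ^ (1/2 - b) * s ^ (-ε)) := by ring
      rw [p3, hmulbe]
      linarith [hc1, hc2, hc3, hsbe]
    have hTms : Tm + s ^ (-ε) ≤ Tm * (1 + s ^ (-ε)) := by nlinarith [hTm1, hsneg0]
    have hDIb2 : DIb ≤ (Cl + 2 * Tm * Cp) * (1 + s ^ (-ε)) * (Sb * Cm / ε) := by
      rw [hDIbdef]
      apply mul_le_mul_of_nonneg_right _ (by positivity)
      have q1 : 0 ≤ Cl * s ^ (-ε) := mul_nonneg hCl0 hsneg0
      have q2 : 0 ≤ 2 * Cp * s ^ (-ε) * (Tm - 1) :=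
        mul_nonneg (mul_nonneg (mul_nonneg (by norm_num) hCp0) hsneg0) (by linarith)
      have qe : (Cl + 2 * Tm * Cp) * (1 + s ^ (-ε))
          = Cl + 2 * (Tm + s ^ (-ε)) * Cp + (Cl * s ^ (-ε) + 2 * Cp * s ^ (-ε) * (Tm - 1)) := by
        ring
      linarith
    calc DIb * Vh + Sb * Cm * Cp
        ≤ (Cl + 2 * Tm * Cp) * (1 + s ^ (-ε)) * (Sb * Cm / ε) * Vh
          + Sb * (1 + s ^ (-ε)) * Cm * Cp := by
          have hm1 := mul_le_mul_of_nonneg_right hDIb2 hVh0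
          have hm2 : Sb * Cm * Cp ≤ Sb * (1 + s ^ (-ε)) * Cm * Cp := by
            have q1 : 0 ≤ Sb * s ^ (-ε) * Cm * Cp :=
              mul_nonneg (mul_nonneg (mul_nonneg hSb0.le hsneg0) hCm0.le) hCp0
            have qe : Sb * (1 + s ^ (-ε)) * Cm * Cp
                = Sb * Cm * Cp + Sb * s ^ (-ε) * Cm * Cp := by ring
            linarith
          exact add_le_add hm1 hm2
      _ = (Sb * (1 + s ^ (-ε))) * C4 := by rw [hC4def]; field_simp
      _ ≤ (8 * (1 + s ^ (1/2 - b - ε))) * C4 := mul_le_mul_of_nonneg_right hSbX hC40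
      _ = 8 * C4 * (1 + s ^ (1/2 - b - ε)) := by ring
  constructor
  · intro s hs
    exact ne_top_of_le_ne_top ENNReal.ofReal_ne_top (key s hs.1 hs.2.le)
  · have h2r : (-1:ℝ) < 1 - 2*b - 2*ε := by linarith
    have hb2 : ∀ s ∈ Set.Ioc (0:ℝ) T,
        (eVariationOn (fun t => K (h t) t s) (Set.Ioc s T)) ^ 2
          ≤ ENNReal.ofReal (2 * (8*C4)^2 * (1 + s ^ (1 - 2*b - 2*ε))) := by
      intro s hs
      have hk := key s hs.1 hs.2
      have hA0 : 0 ≤ 8 * C4 * (1 + s ^ (1/2 - b - ε)) := by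
        have := Real.rpow_nonneg hs.1.le (1/2 - b - ε); positivity
      calc (eVariationOn (fun t => K (h t) t s) (Set.Ioc s T)) ^ 2
          ≤ (ENNReal.ofReal (8 * C4 * (1 + s ^ (1/2 - b - ε)))) ^ 2 := by
            rw [pow_two, pow_two]; exact mul_le_mul' hk hk
        _ = ENNReal.ofReal ((8 * C4 * (1 + s ^ (1/2 - b - ε))) ^ 2) :=
            (ENNReal.ofReal_pow hA0 2).symm
        _ ≤ ENNReal.ofReal (2 * (8*C4)^2 * (1 + s ^ (1 - 2*b - 2*ε))) := by
            apply ENNReal.ofReal_le_ofReal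
            have he : s ^ (1/2 - b - ε) * s ^ (1/2 - b - ε) = s ^ (1 - 2*b - 2*ε) := by
              rw [← Real.rpow_add hs.1]; ring_nf
            have h1 : 0 ≤ s ^ (1/2 - b - ε) := Real.rpow_nonneg hs.1.le _
            have h2 : 0 ≤ s ^ (1 - 2*b - 2*ε) := Real.rpow_nonneg hs.1.le _
            nlinarith [mul_nonneg (sq_nonneg C4) (sq_nonneg (1 - s ^ (1/2 - b - ε))), he,
              sq_nonneg C4]
    calc ∫⁻ s in Set.Ioc (0:ℝ) T, (eVariationOn (fun t => K (h t) t s) (Set.Ioc s T)) ^ 2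
        ≤ ∫⁻ s in Set.Ioc (0:ℝ) T, ENNReal.ofReal (2 * (8*C4)^2 * (1 + s ^ (1 - 2*b - 2*ε))) :=
          setLIntegral_mono' measurableSet_Ioc hb2
      _ < ⊤ := by
          apply IntegrableOn.setLIntegral_lt_top
          have h1 : IntegrableOn (fun _ : ℝ => (1:ℝ)) (Ioc (0:ℝ) T) volume :=
            integrableOn_const measure_Ioc_lt_top.ne
          have h2 := my_integrableOn_rpow hT.le h2r
          have h3 : IntegrableOn (fun s : ℝ => 1 + s ^ (1 - 2*b - 2*ε)) (Ioc (0:ℝ) T) volume :=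
            h1.add h2
          exact h3.const_mul _
end

section
/- Let h : [0,T] → (1/2,1) and R(s) = s^{2h(s)} for s > 0, R(0)=0. If h is Lipschitz on [0,T], then R is of bounded variation on [0,T]. -/
open MeasureTheory Set Real

-- Lemma A: base-Lipschitz bound for x ↦ x^a, a ∈ [1,2], on [0,T]
lemma auxA {T a : ℝ} (hT : 0 < T) (ha1 : 1 ≤ a) (ha2 : a ≤ 2)
    {s t : ℝ} (hs : s ∈ Set.Icc 0 T) (ht : t ∈ Set.Icc 0 T) :
    |s ^ a - t ^ a| ≤ (2 * max 1 T) * |s - t| := by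
  have hM1 : (1:ℝ) ≤ max 1 T := le_max_left _ _
  have := Convex.norm_image_sub_le_of_norm_hasDerivWithin_le
    (f := fun x : ℝ => x ^ a) (f' := fun x : ℝ => a * x ^ (a - 1))
    (s := Set.Icc (0:ℝ) T) (C := 2 * max 1 T)
    (fun x _ => (Real.hasDerivAt_rpow_const (Or.inr ha1)).hasDerivWithinAt)
    (fun x hx => by
      have hx0 : 0 ≤ x := hx.1
      have hxM : x ≤ max 1 T := le_trans hx.2 (le_max_right _ _)
      have h1 : x ^ (a - 1) ≤ (max 1 T) ^ (a - 1) :=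
        Real.rpow_le_rpow hx0 hxM (by linarith)
      have h2 : (max 1 T) ^ (a - 1) ≤ (max 1 T) ^ (1:ℝ) :=
        Real.rpow_le_rpow_of_exponent_le hM1 (by linarith)
      rw [Real.rpow_one] at h2
      have hxa : 0 ≤ x ^ (a - 1) := Real.rpow_nonneg hx0 _
      have : ‖a * x ^ (a - 1)‖ = a * x ^ (a - 1) := by
        rw [Real.norm_eq_abs, abs_of_nonneg (by positivity)]
      rw [this]
      nlinarith)
    (convex_Icc 0 T) ht hs
  simpa [Real.norm_eq_abs, abs_sub_comm] using this

-- Lemma B: exponent-Lipschitz bound for x ↦ t^x, x ∈ [1,2], t ∈ [0,T]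
lemma auxB {T t : ℝ} (hT : 0 < T) (ht : t ∈ Set.Icc 0 T)
    {p q : ℝ} (hp : p ∈ Set.Icc (1:ℝ) 2) (hq : q ∈ Set.Icc (1:ℝ) 2) :
    |t ^ p - t ^ q| ≤ (1 + T) ^ 3 * |p - q| := by
  rcases eq_or_lt_of_le ht.1 with h0 | h0
  · simp [← h0, Real.zero_rpow (by linarith [hp.1] : p ≠ 0),
      Real.zero_rpow (by linarith [hq.1] : q ≠ 0)]
    positivity
  · have hT1 : (1:ℝ) ≤ 1 + T := by linarith
    have key := Convex.norm_image_sub_le_of_norm_hasDerivWithin_le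
      (f := fun x : ℝ => t ^ x) (f' := fun x : ℝ => t ^ x * Real.log t)
      (s := Set.Icc (1:ℝ) 2) (C := (1 + T) ^ 3)
      (fun x _ => (Real.hasStrictDerivAt_const_rpow h0 x).hasDerivAt.hasDerivWithinAt)
      (fun x hx => by
        rw [Real.norm_eq_abs, abs_mul, abs_of_nonneg (Real.rpow_nonneg (le_of_lt h0) _)]
        rcases le_or_gt t 1 with ht1 | ht1
        · have h1 : t ^ x ≤ t ^ (1:ℝ) :=
            Real.rpow_le_rpow_of_exponent_ge h0 ht1 hx.1
          rw [Real.rpow_one] at h1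
          have h2 : |Real.log t| = -Real.log t := by
            rw [abs_of_nonpos (Real.log_nonpos (le_of_lt h0) ht1)]
          have h3 : Real.log t⁻¹ ≤ t⁻¹ - 1 :=
            Real.log_le_sub_one_of_pos (by positivity)
          rw [Real.log_inv] at h3
          have h4 : t * (t⁻¹ - 1) ≤ 1 := by
            rw [mul_sub, mul_inv_cancel₀ (ne_of_gt h0)]; nlinarith
          have h5 : t ^ x * |Real.log t| ≤ t * (t⁻¹ - 1) := by
            rw [h2]
            apply mul_le_mul h1 (by linarith) (by linarith [h3, Real.log_nonpos (le_of_lt h0) ht1]) (le_of_lt h0)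
          have : (1:ℝ) ≤ (1 + T) ^ 3 := one_le_pow₀ hT1
          linarith
        · have h2 : |Real.log t| = Real.log t := abs_of_nonneg (Real.log_nonneg (le_of_lt ht1))
          have h3 : Real.log t ≤ t - 1 := Real.log_le_sub_one_of_pos h0
          have h4 : t ≤ 1 + T := by linarith [ht.2]
          have h5 : t ^ x ≤ t ^ (2:ℝ) := Real.rpow_le_rpow_of_exponent_le (le_of_lt ht1) hx.2
          have h6 : t ^ (2:ℝ) ≤ (1 + T) ^ (2:ℝ) :=
            Real.rpow_le_rpow (le_of_lt h0) h4 (by norm_num)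
          have h7 : t ^ x * |Real.log t| ≤ (1 + T) ^ (2:ℝ) * T := by
            rw [h2]
            apply mul_le_mul (h5.trans h6) (by linarith [ht.2]) (Real.log_nonneg (le_of_lt ht1)) (by positivity)
          have h8 : (1 + T) ^ (2:ℝ) = (1 + T) * (1 + T) := by
            rw [show (2:ℝ) = ((2:ℕ):ℝ) by norm_num, Real.rpow_natCast]; ring
          rw [h8] at h7
          nlinarith [h7, sq_nonneg (1 + T)])
      (convex_Icc 1 2) hq hp
    simpa [Real.norm_eq_abs, abs_sub_comm] using key

theorem stmt9 (T : ℝ) (hT : 0 < T) (h : ℝ → ℝ)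
    (hrange : ∀ u ∈ Set.Icc (0:ℝ) T, h u ∈ Set.Ioo (1/2 : ℝ) 1)
    (L : NNReal) (hLip : LipschitzOnWith L h (Set.Icc 0 T)) :
    BoundedVariationOn (fun s : ℝ => s ^ (2 * h s)) (Set.Icc 0 T) := by
  set K : ℝ := 2 * max 1 T + (1 + T) ^ 3 * (2 * L) with hK
  have hlip : LipschitzOnWith (Real.toNNReal K) (fun s : ℝ => s ^ (2 * h s)) (Set.Icc 0 T) := by
    apply LipschitzOnWith.of_dist_le_mul
    intro x hx y hy
    have hhx := hrange x hx
    have hhy := hrange y hy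
    have hax : 2 * h x ∈ Set.Icc (1:ℝ) 2 := ⟨by linarith [hhx.1], by linarith [hhx.2]⟩
    have hay : 2 * h y ∈ Set.Icc (1:ℝ) 2 := ⟨by linarith [hhy.1], by linarith [hhy.2]⟩
    have hA := auxA hT hax.1 hax.2 hx hy
    have hB := auxB hT hy hax hay
    have hd := hLip.dist_le_mul x hx y hy
    simp only [Real.dist_eq] at hd
    have hL : |2 * h x - 2 * h y| ≤ 2 * L * |x - y| := by
      have e : |2 * h x - 2 * h y| = 2 * |h x - h y| := by
        rw [show 2 * h x - 2 * h y = 2 * (h x - h y) by ring, abs_mul,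
          abs_of_nonneg (by norm_num : (0:ℝ) ≤ 2)]
      rw [e]; linarith
    have hK0 : 0 ≤ K := by positivity
    rw [Real.dist_eq, Real.dist_eq, Real.coe_toNNReal K hK0]
    have tri : |x ^ (2 * h x) - y ^ (2 * h y)| ≤
        |x ^ (2 * h x) - y ^ (2 * h x)| + |y ^ (2 * h x) - y ^ (2 * h y)| := by
      exact abs_sub_le _ _ _
    have hB2 : |y ^ (2 * h x) - y ^ (2 * h y)| ≤ (1 + T) ^ 3 * (2 * L * |x - y|) :=
      hB.trans (by nlinarith [abs_nonneg (2 * h x - 2 * h y), hL, pow_pos (by linarith : (0:ℝ) < 1 + T) 3])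
    calc |x ^ (2 * h x) - y ^ (2 * h y)| ≤ _ := tri
      _ ≤ (2 * max 1 T) * |x - y| + (1 + T) ^ 3 * (2 * L * |x - y|) := add_le_add hA hB2
      _ = K * |x - y| := by rw [hK]; ring
  have hlbv := hlip.locallyBoundedVariationOn 0 T
    (Set.left_mem_Icc.2 (le_of_lt hT)) (Set.right_mem_Icc.2 (le_of_lt hT))
  simpa [Set.inter_self] using hlbv
end

section
/- Let 1/2 < H < 1, 0 < s < t, and K_H(t,u) = u^{1/2-H}∫_u^t (y-u)^{H-3/2} y^{H-1/2} dy. Then ∫₀^s (K_H(t,u) - K_H(s,u))² du = ∫_s^t ∫_s^t |y-z|^{2H-2} (∫_1^{Ψ₁(s,y,z)} (v-1)^{1-2H} v^{H-3/2} dv) dy dz, where Ψ₁(s,y,z) = (yz - zs)/(yz - ys) if y > z and (yz - ys)/(yz - zs) if y ≤ z. -/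
open MeasureTheory Set

/-- `Ψ₁(s,y,z)` as in the local nondeterminism computation. -/
noncomputable def Psi1 (s y z : ℝ) : ℝ :=
  if y > z then (y*z - z*s) / (y*z - y*s) else (y*z - y*s) / (y*z - z*s)

lemma intOn_rpow (e a b : ℝ) (he : -1 < e) (hab : a ≤ b) :
    IntegrableOn (fun x => x ^ e) (Ioo a b) := by
  have := intervalIntegral.intervalIntegrable_rpow' (a := a) (b := b) he
  rwa [intervalIntegrable_iff_integrableOn_Ioo_of_le hab] at this

lemma intOn_rpow_shift (c e a b : ℝ) (he : -1 < e) (hab : a ≤ b) :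
    IntegrableOn (fun x => (x - c) ^ e) (Ioo a b) := by
  have := (intervalIntegral.intervalIntegrable_rpow' (a := a - c) (b := b - c) he).comp_sub_right c
  rwa [sub_add_cancel, sub_add_cancel, intervalIntegrable_iff_integrableOn_Ioo_of_le hab] at this

lemma Fint (H u a b : ℝ) (h1 : 1/2 < H) (hu : 0 ≤ u) (hua : u ≤ a) (h0a : 0 < a) (hab : a ≤ b) :
    IntegrableOn (fun y => (y - u) ^ (H - 3/2) * y ^ (H - 1/2)) (Ioo a b) := by
  refine Integrable.mono' ((intOn_rpow_shift u (H - 3/2) a b (by linarith) hab).mul_const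
    (b ^ (H - 1/2))) ?_ ?_
  · exact (Measurable.aestronglyMeasurable (by fun_prop))
  · filter_upwards [ae_restrict_mem measurableSet_Ioo] with y hy
    obtain ⟨hay, hyb⟩ := hy
    have h1' : 0 < y - u := by linarith
    have h2' : (0:ℝ) < y := by linarith
    rw [Real.norm_eq_abs, abs_of_nonneg (by positivity)]
    exact mul_le_mul_of_nonneg_left
      (Real.rpow_le_rpow h2'.le hyb.le (by linarith)) (by positivity)

lemma f_hasDeriv (y z u : ℝ) (hzu : u < z) (hy : 0 < y) :
    HasDerivAt (fun x => z*(y-x)/(y*(z-x))) (z*(y-z)/(y*(z-u)^2)) u := by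
  have hzu' : 0 < z - u := by linarith
  have h1 : HasDerivAt (fun x : ℝ => z*(y-x)) (-z) u := by
    have := ((hasDerivAt_id u).const_sub y).const_mul z
    simpa using this
  have h2 : HasDerivAt (fun x : ℝ => y*(z-x)) (-y) u := by
    have := ((hasDerivAt_id u).const_sub z).const_mul y
    simpa using this
  have hne : y*(z-u) ≠ 0 := by positivity
  have := h1.div h2 hne
  refine this.congr_deriv ?_
  rw [div_eq_div_iff (by positivity) (by positivity)]
  ring

lemma keypt' (H U Y Z D YU ZU : ℝ) (hU : 0 < U) (hY : 0 < Y) (hZ : 0 < Z)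
    (hD : 0 < D) (hYU : 0 < YU) (hZU : 0 < ZU) :
    Z*D/(Y*ZU^2) * ((U*D/(Y*ZU))^(1-2*H) * (Z*YU/(Y*ZU))^(H-3/2))
      = D^(2-2*H) * (Y^(H-1/2) * (Z^(H-1/2) * (U^(1-2*H) * (YU^(H-3/2) * ZU^(H-3/2))))) := by
  rw [Real.rpow_def_of_pos (show (0:ℝ) < U*D/(Y*ZU) by positivity),
      Real.rpow_def_of_pos (show (0:ℝ) < Z*YU/(Y*ZU) by positivity),
      Real.rpow_def_of_pos hD, Real.rpow_def_of_pos hY, Real.rpow_def_of_pos hZ,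
      Real.rpow_def_of_pos hU, Real.rpow_def_of_pos hYU, Real.rpow_def_of_pos hZU,
      show Z*D/(Y*ZU^2) = Real.exp (Real.log (Z*D/(Y*ZU^2))) from (Real.exp_log (by positivity)).symm]
  simp only [← Real.exp_add]
  congr 1
  simp (disch := positivity) only [Real.log_mul, Real.log_div, Real.log_pow, ne_eq]
  push_cast
  ring

lemma f_inj (s y z : ℝ) (hs : 0 < s) (hsz : s < z) (hzy : z < y) :
    InjOn (fun u => z*(y-u)/(y*(z-u))) (Ioo 0 s) := by
  intro u1 h1 u2 h2 heq
  obtain ⟨h10, h1s⟩ := h1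
  obtain ⟨h20, h2s⟩ := h2
  have hy : (0:ℝ) < y := by linarith
  have d1 : 0 < y*(z-u1) := by have : 0 < z - u1 := by linarith
                               positivity
  have d2 : 0 < y*(z-u2) := by have : 0 < z - u2 := by linarith
                               positivity
  have hz : (0:ℝ) < z := by linarith
  simp only [] at heq
  rw [div_eq_div_iff (ne_of_gt d1) (ne_of_gt d2)] at heq
  rcases lt_trichotomy u1 u2 with h | h | h
  · nlinarith [mul_pos (mul_pos (mul_pos hz hy) (show (0:ℝ) < y - z by linarith))
      (show (0:ℝ) < u2 - u1 by linarith)]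
  · exact h
  · nlinarith [mul_pos (mul_pos (mul_pos hz hy) (show (0:ℝ) < y - z by linarith))
      (show (0:ℝ) < u1 - u2 by linarith)]

lemma f_image (s y z : ℝ) (hs : 0 < s) (hsz : s < z) (hzy : z < y) :
    (fun u => z*(y-u)/(y*(z-u))) '' Ioo 0 s = Ioo 1 (z*(y-s)/(y*(z-s))) := by
  have hy : (0:ℝ) < y := by linarith
  have hz : (0:ℝ) < z := by linarith
  have hzs : 0 < z - s := by linarith
  ext v
  constructor
  · rintro ⟨u, ⟨hu0, hus⟩, rfl⟩
    have hzu : 0 < z - u := by linarith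
    constructor
    · rw [lt_div_iff₀ (by positivity)]
      nlinarith
    · rw [div_lt_div_iff₀ (by positivity) (by positivity)]
      nlinarith [mul_pos (mul_pos (mul_pos hz hy) (show (0:ℝ) < y - z by linarith))
        (show (0:ℝ) < s - u by linarith)]
  · rintro ⟨hv1, hv2⟩
    have hyvz : 0 < y*v - z := by nlinarith
    refine ⟨y*z*(v-1)/(y*v - z),
      ⟨div_pos (mul_pos (mul_pos hy hz) (by linarith)) hyvz, ?_⟩, ?_⟩
    · rw [div_lt_iff₀ hyvz]
      rw [lt_div_iff₀ (by positivity)] at hv2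
      nlinarith
    · have hzu : z - y*z*(v-1)/(y*v - z) = z*(y-z)/(y*v - z) := by
        field_simp
        ring
      have hzu' : 0 < z - y*z*(v-1)/(y*v - z) := by
        rw [hzu]
        have : 0 < y - z := by linarith
        positivity
      have hne1 : y*v - z ≠ 0 := ne_of_gt hyvz
      show z*(y - y*z*(v-1)/(y*v - z))/(y*(z - y*z*(v-1)/(y*v - z))) = v
      rw [div_eq_iff (ne_of_gt (mul_pos hy hzu'))]
      field_simp
      ring

lemma inner_key (H s y z : ℝ) (hs : 0 < s) (hsz : s < z) (hzy : z < y) :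
    ∫ v in Ioo (1:ℝ) (z*(y-s)/(y*(z-s))), (v-1)^(1-2*H) * v^(H-3/2)
      = (y-z)^(2-2*H) * (y^(H-1/2) * (z^(H-1/2) *
          ∫ u in Ioo (0:ℝ) s, u^(1-2*H) * ((y-u)^(H-3/2) * (z-u)^(H-3/2)))) := by
  have hy : (0:ℝ) < y := by linarith
  rw [← f_image s y z hs hsz hzy,
      integral_image_eq_integral_abs_deriv_smul (f' := fun u => z*(y-z)/(y*(z-u)^2))
        measurableSet_Ioo
        (fun u hu => (f_hasDeriv y z u (by linarith [hu.2]) hy).hasDerivWithinAt)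
        (f_inj s y z hs hsz hzy) (fun v => (v-1)^(1-2*H) * v^(H-3/2))]
  have hcong : EqOn
      (fun u => |z*(y-z)/(y*(z-u)^2)| •
        ((z*(y-u)/(y*(z-u)) - 1)^(1-2*H) * (z*(y-u)/(y*(z-u)))^(H-3/2)))
      (fun u => (y-z)^(2-2*H) * (y^(H-1/2) * (z^(H-1/2) *
        (u^(1-2*H) * ((y-u)^(H-3/2) * (z-u)^(H-3/2)))))) (Ioo 0 s) := by
    intro u hu
    obtain ⟨hu0, hus⟩ := hu
    have hzu : 0 < z - u := by linarith
    have hyu : 0 < y - u := by linarith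
    have hyz : 0 < y - z := by linarith
    have hsub : z*(y-u)/(y*(z-u)) - 1 = u*(y-z)/(y*(z-u)) := by
      field_simp
      ring
    simp only [smul_eq_mul]
    rw [hsub, abs_of_pos (div_pos (mul_pos (by linarith : (0:ℝ) < z) hyz) (mul_pos hy (pow_pos hzu 2)))]
    exact keypt' H u y z (y-z) (y-u) (z-u) hu0 hy (by linarith) hyz hyu hzu
  rw [setIntegral_congr_fun measurableSet_Ioo hcong]
  rw [integral_const_mul, integral_const_mul, integral_const_mul]

lemma Ksub (H s t u : ℝ) (h1 : 1/2 < H) (hu : 0 < u) (hus : u < s) (hst : s < t) :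
    K H t u - K H s u = u^(1/2 - H) * ∫ y in Ioo s t, (y - u)^(H - 3/2) * y^(H - 1/2) := by
  have hdisj : Disjoint (Ioo u s) (Ico s t) :=
    (Iio_disjoint_Ici le_rfl).mono Ioo_subset_Iio_self Ico_subset_Ici_self
  have int1 : IntegrableOn (fun y => (y - u)^(H - 3/2) * y^(H - 1/2)) (Ioo u s) :=
    Fint H u u s h1 hu.le le_rfl hu hus.le
  have int2 : IntegrableOn (fun y => (y - u)^(H - 3/2) * y^(H - 1/2)) (Ico s t) :=
    (integrableOn_Ico_iff_integrableOn_Ioo).mpr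
      (Fint H u s t h1 hu.le hus.le (by linarith) hst.le)
  have hsplit : (∫ y in Ioo u t, (y - u)^(H - 3/2) * y^(H - 1/2))
      = (∫ y in Ioo u s, (y - u)^(H - 3/2) * y^(H - 1/2))
        + ∫ y in Ioo s t, (y - u)^(H - 3/2) * y^(H - 1/2) := by
    rw [← Set.Ioo_union_Ico_eq_Ioo hus hst.le,
        setIntegral_union hdisj measurableSet_Ico int1 int2, integral_Ico_eq_integral_Ioo]
  unfold K
  rw [hsplit]
  ring

lemma sq_expand (H s t u : ℝ) (hu : 0 < u) :
    (u^(1/2 - H) * ∫ y in Ioo s t, (y - u)^(H - 3/2) * y^(H - 1/2))^2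
      = ∫ y in Ioo s t, ∫ z in Ioo s t,
          u^(1 - 2*H) * (((y - u)^(H - 3/2) * y^(H - 1/2)) * ((z - u)^(H - 3/2) * z^(H - 1/2))) := by
  have inner : ∀ y : ℝ,
      (∫ z in Ioo s t, u^(1 - 2*H) * (((y - u)^(H - 3/2) * y^(H - 1/2))
          * ((z - u)^(H - 3/2) * z^(H - 1/2))))
        = (u^(1 - 2*H) * ((y - u)^(H - 3/2) * y^(H - 1/2)))
            * ∫ z in Ioo s t, (z - u)^(H - 3/2) * z^(H - 1/2) := by
    intro y
    rw [← integral_const_mul]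
    congr 1
    ext z
    ring
  simp only [inner]
  rw [integral_mul_const, integral_const_mul]
  have hpow : (u^(1/2 - H))^2 = u^(1 - 2*H) := by
    rw [← Real.rpow_natCast (u^(1/2 - H)) 2, ← Real.rpow_mul hu.le]
    congr 1
    push_cast
    ring
  rw [mul_pow, hpow]
  ring

theorem stmt13 (H s t : ℝ) (h1 : 1/2 < H) (h2 : H < 1) (hs : 0 < s) (hst : s < t) :
    ∫ u in Set.Ioo (0:ℝ) s, (K H t u - K H s u) ^ 2 =
      ∫ y in Set.Ioo s t, ∫ z in Set.Ioo s t,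
        |y - z| ^ (2*H - 2) *
          ∫ v in Set.Ioo (1:ℝ) (Psi1 s y z), (v - 1) ^ (1 - 2*H) * v ^ (H - 3/2) := by
  have hq : -1 < H - 3/2 := by linarith
  have hq0 : H - 3/2 ≤ 0 := by linarith
  have hp : -1 < 1 - 2*H := by linarith
  have hr : (0:ℝ) ≤ H - 1/2 := by linarith
  have h0t : (0:ℝ) < t := by linarith
  have e1 : EqOn (fun u => (K H t u - K H s u)^2)
      (fun u => ∫ y in Ioo s t, ∫ z in Ioo s t,
        u^(1 - 2*H) * (((y - u)^(H - 3/2) * y^(H - 1/2)) * ((z - u)^(H - 3/2) * z^(H - 1/2))))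
      (Ioo 0 s) := by
    intro u hu
    show (K H t u - K H s u)^2 = _
    rw [Ksub H s t u h1 hu.1 hu.2 hst, sq_expand H s t u hu.1]
  rw [setIntegral_congr_fun measurableSet_Ioo e1]
  have hIz : IntegrableOn (fun z : ℝ => (z - s)^(H - 3/2)) (Ioo s t) :=
    intOn_rpow_shift s _ s t hq hst.le
  set C0 := ∫ z in Ioo s t, (z - s)^(H - 3/2) with hC0def
  have hintA : Integrable (Function.uncurry fun u y => ∫ z in Ioo s t,
      u^(1 - 2*H) * (((y - u)^(H - 3/2) * y^(H - 1/2)) * ((z - u)^(H - 3/2) * z^(H - 1/2))))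
      ((volume.restrict (Ioo (0:ℝ) s)).prod (volume.restrict (Ioo s t))) := by
    refine Integrable.mono'
      (g := fun w : ℝ × ℝ => w.1^(1 - 2*H) * ((w.2 - s)^(H - 3/2) * (t^(H - 1/2) * (t^(H - 1/2) * C0))))
      ((intOn_rpow (1 - 2*H) 0 s hp hs.le).mul_prod
        ((intOn_rpow_shift s (H - 3/2) s t hq hst.le).mul_const _)) ?_ ?_
    · apply StronglyMeasurable.aestronglyMeasurable
      apply StronglyMeasurable.integral_prod_right'
        (f := fun q : (ℝ × ℝ) × ℝ => q.1.1^(1 - 2*H) * (((q.1.2 - q.1.1)^(H - 3/2)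
          * q.1.2^(H - 1/2)) * ((q.2 - q.1.1)^(H - 3/2) * q.2^(H - 1/2))))
      exact Measurable.stronglyMeasurable (by fun_prop)
    · rw [Measure.prod_restrict]
      filter_upwards [ae_restrict_mem (measurableSet_Ioo.prod measurableSet_Ioo)] with w hw
      obtain ⟨⟨hu0, hus⟩, hys, hyt⟩ := hw
      have h1' : 0 < w.2 - w.1 := by linarith
      have hws : 0 < w.2 - s := by linarith
      have hgle : ∀ᵐ z ∂(volume.restrict (Ioo s t)),
          ‖w.1^(1 - 2*H) * (((w.2 - w.1)^(H - 3/2) * w.2^(H - 1/2))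
            * ((z - w.1)^(H - 3/2) * z^(H - 1/2)))‖
          ≤ w.1^(1 - 2*H) * (((w.2 - s)^(H - 3/2) * t^(H - 1/2))
            * ((z - s)^(H - 3/2) * t^(H - 1/2))) := by
        filter_upwards [ae_restrict_mem measurableSet_Ioo] with z hz
        obtain ⟨hzs, hzt⟩ := hz
        have hzw : 0 < z - w.1 := by linarith
        have hzs' : 0 < z - s := by linarith
        have n1 : 0 ≤ w.1^(1 - 2*H) := Real.rpow_nonneg hu0.le _
        have n2 : 0 ≤ (w.2 - w.1)^(H - 3/2) := Real.rpow_nonneg h1'.le _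
        have n3 : 0 ≤ w.2^(H - 1/2) := Real.rpow_nonneg (by linarith) _
        have n4 : 0 ≤ (z - w.1)^(H - 3/2) := Real.rpow_nonneg hzw.le _
        have n5 : 0 ≤ z^(H - 1/2) := Real.rpow_nonneg (by linarith) _
        have n6 : 0 ≤ (w.2 - s)^(H - 3/2) := Real.rpow_nonneg hws.le _
        have n7 : 0 ≤ t^(H - 1/2) := Real.rpow_nonneg h0t.le _
        have n8 : 0 ≤ (z - s)^(H - 3/2) := Real.rpow_nonneg hzs'.le _
        rw [Real.norm_eq_abs, abs_of_nonneg (mul_nonneg n1 (mul_nonneg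
          (mul_nonneg n2 n3) (mul_nonneg n4 n5)))]
        refine mul_le_mul_of_nonneg_left (mul_le_mul
          (mul_le_mul (Real.rpow_le_rpow_of_nonpos hws (by linarith) hq0)
            (Real.rpow_le_rpow (by linarith) hyt.le hr) n3 n6)
          (mul_le_mul (Real.rpow_le_rpow_of_nonpos hzs' (by linarith) hq0)
            (Real.rpow_le_rpow (by linarith) hzt.le hr) n5 n8)
          (mul_nonneg n4 n5) (mul_nonneg n6 n7)) n1
      have hgint : Integrable (fun z : ℝ => w.1^(1 - 2*H) * (((w.2 - s)^(H - 3/2) * t^(H - 1/2))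
          * ((z - s)^(H - 3/2) * t^(H - 1/2)))) (volume.restrict (Ioo s t)) :=
        ((hIz.mul_const _).const_mul _).const_mul _
      refine le_trans (norm_integral_le_of_norm_le hgint hgle) ?_
      rw [integral_const_mul, integral_const_mul, integral_mul_const]
      exact le_of_eq (by rw [← hC0def]; ring)
  rw [show (∫ u in Ioo (0:ℝ) s, ∫ y in Ioo s t, ∫ z in Ioo s t,
        u^(1 - 2*H) * (((y - u)^(H - 3/2) * y^(H - 1/2)) * ((z - u)^(H - 3/2) * z^(H - 1/2))))
      = ∫ y in Ioo s t, ∫ u in Ioo (0:ℝ) s, ∫ z in Ioo s t,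
        u^(1 - 2*H) * (((y - u)^(H - 3/2) * y^(H - 1/2)) * ((z - u)^(H - 3/2) * z^(H - 1/2)))
      from integral_integral_swap hintA]
  refine setIntegral_congr_fun measurableSet_Ioo (fun y hy => ?_)
  obtain ⟨hsy, hyt'⟩ := hy
  have hintB : Integrable (Function.uncurry fun u z =>
      u^(1 - 2*H) * (((y - u)^(H - 3/2) * y^(H - 1/2)) * ((z - u)^(H - 3/2) * z^(H - 1/2))))
      ((volume.restrict (Ioo (0:ℝ) s)).prod (volume.restrict (Ioo s t))) := by
    refine Integrable.mono'
      (g := fun w : ℝ × ℝ => (w.1^(1 - 2*H) * ((y - s)^(H - 3/2) * y^(H - 1/2)))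
        * ((w.2 - s)^(H - 3/2) * t^(H - 1/2)))
      (((intOn_rpow (1 - 2*H) 0 s hp hs.le).mul_const _).mul_prod
        ((intOn_rpow_shift s (H - 3/2) s t hq hst.le).mul_const _))
      (Measurable.aestronglyMeasurable (by fun_prop)) ?_
    rw [Measure.prod_restrict]
    filter_upwards [ae_restrict_mem (measurableSet_Ioo.prod measurableSet_Ioo)] with w hw
    obtain ⟨⟨hu0, hus⟩, hzs, hzt⟩ := hw
    have hyu : 0 < y - w.1 := by linarith
    have hys' : 0 < y - s := by linarith
    have hzw : 0 < w.2 - w.1 := by linarith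
    have hzs' : 0 < w.2 - s := by linarith
    have n1 : 0 ≤ w.1^(1 - 2*H) := Real.rpow_nonneg hu0.le _
    have n2 : 0 ≤ (y - w.1)^(H - 3/2) := Real.rpow_nonneg hyu.le _
    have n3 : 0 ≤ y^(H - 1/2) := Real.rpow_nonneg (by linarith) _
    have n4 : 0 ≤ (w.2 - w.1)^(H - 3/2) := Real.rpow_nonneg hzw.le _
    have n5 : 0 ≤ w.2^(H - 1/2) := Real.rpow_nonneg (by linarith) _
    have n6 : 0 ≤ (y - s)^(H - 3/2) := Real.rpow_nonneg hys'.le _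
    have n7 : 0 ≤ t^(H - 1/2) := Real.rpow_nonneg h0t.le _
    have n8 : 0 ≤ (w.2 - s)^(H - 3/2) := Real.rpow_nonneg hzs'.le _
    rw [Function.uncurry, Real.norm_eq_abs, abs_of_nonneg (mul_nonneg n1 (mul_nonneg
      (mul_nonneg n2 n3) (mul_nonneg n4 n5)))]
    refine le_trans (mul_le_mul_of_nonneg_left (mul_le_mul
      (mul_le_mul_of_nonneg_right (Real.rpow_le_rpow_of_nonpos hys' (by linarith) hq0) n3)
      (mul_le_mul (Real.rpow_le_rpow_of_nonpos hzs' (by linarith) hq0)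
        (Real.rpow_le_rpow (by linarith) hzt.le hr) n5 n8)
      (mul_nonneg n4 n5) (mul_nonneg n6 n3)) n1) (le_of_eq (by ring))
  rw [show (∫ u in Ioo (0:ℝ) s, ∫ z in Ioo s t,
        u^(1 - 2*H) * (((y - u)^(H - 3/2) * y^(H - 1/2)) * ((z - u)^(H - 3/2) * z^(H - 1/2))))
      = ∫ z in Ioo s t, ∫ u in Ioo (0:ℝ) s,
        u^(1 - 2*H) * (((y - u)^(H - 3/2) * y^(H - 1/2)) * ((z - u)^(H - 3/2) * z^(H - 1/2)))
      from integral_integral_swap hintB]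
  refine setIntegral_congr_ae measurableSet_Ioo ?_
  have hzne : ∀ᵐ z : ℝ, z ≠ y := by
    have hset : {z : ℝ | ¬ z ≠ y} = {y} := by ext; simp
    rw [ae_iff, hset]
    exact measure_singleton y
  filter_upwards [hzne] with z hzy hz
  obtain ⟨hsz', hzt'⟩ := hz
  rcases lt_or_gt_of_ne hzy with hlt | hgt
  · have hPsi : Psi1 s y z = z*(y - s)/(y*(z - s)) := by
      rw [Psi1, if_pos hlt]
      congr 1 <;> ring
    rw [hPsi, inner_key H s y z hs hsz' hlt,
        abs_of_pos (show (0:ℝ) < y - z by linarith), ← mul_assoc,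
        ← Real.rpow_add (show (0:ℝ) < y - z by linarith),
        show 2*H - 2 + (2 - 2*H) = (0:ℝ) by ring, Real.rpow_zero, one_mul,
        ← integral_const_mul, ← integral_const_mul]
    refine setIntegral_congr_fun measurableSet_Ioo (fun u hu => ?_)
    show _ = _
    ring
  · have hPsi : Psi1 s y z = y*(z - s)/(z*(y - s)) := by
      rw [Psi1, if_neg (lt_asymm hgt)]
      congr 1 <;> ring
    rw [hPsi, inner_key H s z y hs hsy hgt,
        abs_of_neg (show y - z < 0 by linarith), neg_sub, ← mul_assoc,
        ← Real.rpow_add (show (0:ℝ) < z - y by linarith),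
        show 2*H - 2 + (2 - 2*H) = (0:ℝ) by ring, Real.rpow_zero, one_mul,
        ← integral_const_mul, ← integral_const_mul]
    refine setIntegral_congr_fun measurableSet_Ioo (fun u hu => ?_)
    show _ = _
    ring
end

section
/- Let 1/2 < H < 1, t > 0, and c_H² = 2πH(H-1/2)³/(Γ(2-2H)Γ(H+1/2)² sin(π(H-1/2))). Then ∫₀^t K_H(t,u)² du = t^{2H}/c_H², where K_H(t,u) = u^{1/2-H}∫_u^t (y-u)^{H-3/2} y^{H-1/2} dy. -/
open MeasureTheory Set Real

/-- The normalizing constant `c_H²` of the Volterra representation of fBm. -/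
noncomputable def cSq (H : ℝ) : ℝ :=
  2 * π * H * (H - 1/2)^3 /
    (Real.Gamma (2 - 2*H) * Real.Gamma (H + 1/2)^2 * Real.sin (π * (H - 1/2)))


lemma betaInt_integrable {p q : ℝ} (hp : -1 < p) (hq : -1 < q) :
    IntegrableOn (fun s : ℝ => s ^ p * (1 - s) ^ q) (Ioo 0 1) := by
  have h := (Complex.betaIntegral_convergent (u := (p+1 : ℂ)) (v := (q+1 : ℂ))
    (by simpa using by linarith) (by simpa using by linarith)).norm
  rw [intervalIntegrable_iff_integrableOn_Ioc_of_le (by norm_num)] at h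
  refine ((h.mono_set Ioo_subset_Ioc_self).congr_fun ?_ measurableSet_Ioo)
  intro x hx
  obtain ⟨hx0, hx1⟩ := hx
  have h1x : (0:ℝ) < 1 - x := by linarith
  simp only [norm_mul,
    show ((p:ℂ)+1-1) = (p:ℂ) by ring, show ((q:ℂ)+1-1) = (q:ℂ) by ring]
  rw [show (1 - (x:ℂ)) = ((1-x:ℝ):ℂ) by push_cast; ring]
  rw [Complex.norm_cpow_eq_rpow_re_of_pos hx0, Complex.norm_cpow_eq_rpow_re_of_pos h1x]
  norm_num

lemma betaInt_value {p q : ℝ} (hp : -1 < p) (hq : -1 < q) :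
    ∫ s in Ioo (0:ℝ) 1, s ^ p * (1 - s) ^ q
      = Real.Gamma (p+1) * Real.Gamma (q+1) / Real.Gamma (p+q+2) := by
  have key := Complex.Gamma_mul_Gamma_eq_betaIntegral (s := (p+1 : ℂ)) (t := (q+1 : ℂ))
    (by simpa using by linarith) (by simpa using by linarith)
  have hB : Complex.betaIntegral (p+1) (q+1) = ((∫ s in Ioo (0:ℝ) 1, s ^ p * (1 - s) ^ q : ℝ) : ℂ) := by
    rw [Complex.betaIntegral]
    rw [show (∫ s in Ioo (0:ℝ) 1, s ^ p * (1 - s) ^ q)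
        = ∫ x in (0:ℝ)..1, x ^ p * (1 - x) ^ q by
      rw [intervalIntegral.integral_of_le (by norm_num), integral_Ioc_eq_integral_Ioo]]
    rw [← intervalIntegral.integral_ofReal]
    refine intervalIntegral.integral_congr fun x hx => ?_
    rw [uIcc_of_le (by norm_num)] at hx
    obtain ⟨hx0, hx1⟩ := hx
    simp only [show ((p:ℂ)+1-1) = (p:ℂ) by ring, show ((q:ℂ)+1-1) = (q:ℂ) by ring]
    rw [show (1 - (x:ℂ)) = ((1-x:ℝ):ℂ) by push_cast; ring]
    rw [← Complex.ofReal_cpow hx0, ← Complex.ofReal_cpow (by linarith)]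
    push_cast
    ring
  rw [hB] at key
  have h2 : ((p:ℂ)+1) + ((q:ℂ)+1) = ((p+q+2 : ℝ) : ℂ) := by push_cast; ring
  rw [h2] at key
  rw [show ((p:ℂ)+1) = ((p+1:ℝ):ℂ) by push_cast; ring,
      show ((q:ℂ)+1) = ((q+1:ℝ):ℂ) by push_cast; ring] at key
  rw [Complex.Gamma_ofReal, Complex.Gamma_ofReal, Complex.Gamma_ofReal] at key
  have key2 : Real.Gamma (p+1) * Real.Gamma (q+1)
      = Real.Gamma (p+q+2) * ∫ s in Ioo (0:ℝ) 1, s ^ p * (1 - s) ^ q := by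
    exact_mod_cast key
  have hne : Real.Gamma (p+q+2) ≠ 0 := (Real.Gamma_pos_of_pos (by linarith)).ne'
  field_simp [key2]
  rw [key2]; ring

lemma rpow_mess (H : ℝ) {A B S S1 W D : ℝ} (hA : 0 < A) (hB : 0 < B) (hS : 0 < S)
    (hS1 : 0 < S1) (hW : 0 < W) (hD : 0 < D) :
    A*B*W/D^2 * ((A*B*S1/D) ^ (1-2*H) * (A*S*W/D) ^ (H-3/2) * (B*W/D) ^ (H-3/2))
    = (A*B) ^ (1/2-H) * (W ^ (2*H-2)) * (S ^ (H-3/2) * S1 ^ (1-2*H)) := by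
  rw [div_rpow (by positivity) hD.le, div_rpow (by positivity) hD.le,
      div_rpow (by positivity) hD.le,
      mul_rpow (by positivity) hS1.le, mul_rpow hA.le hB.le,
      mul_rpow (by positivity) hW.le, mul_rpow hA.le hS.le,
      mul_rpow hB.le hW.le, mul_rpow hA.le hB.le]
  have hA2 : A ^ ((1:ℝ)/2 - H) = A * (A^(1-2*H) * A^(H-3/2)) := by
    rw [show (1:ℝ)/2 - H = 1 + ((1-2*H) + (H-3/2)) by ring, rpow_add hA, rpow_add hA, rpow_one]
  have hB2 : B ^ ((1:ℝ)/2 - H) = B * (B^(1-2*H) * B^(H-3/2)) := by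
    rw [show (1:ℝ)/2 - H = 1 + ((1-2*H) + (H-3/2)) by ring, rpow_add hB, rpow_add hB, rpow_one]
  have hW2 : W ^ (2*H-2) = W * (W^(H-3/2) * W^(H-3/2)) := by
    rw [show 2*H-2 = 1 + ((H-3/2) + (H-3/2)) by ring, rpow_add hW, rpow_add hW, rpow_one]
  have hD2 : (1:ℝ) = D^(1-2*H) * (D^(H-3/2) * (D^(H-3/2) * D^(2:ℕ))) := by
    rw [← rpow_natCast D 2, ← rpow_add hD, ← rpow_add hD, ← rpow_add hD,
      show (1-2*H)+((H-3/2)+((H-3/2)+((2:ℕ):ℝ))) = 0 by push_cast; ring, rpow_zero]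
  calc A*B*W/D^2 * (A^(1-2*H) * B^(1-2*H) * S1^(1-2*H) / D^(1-2*H)
        * (A^(H-3/2) * S^(H-3/2) * W^(H-3/2) / D^(H-3/2))
        * (B^(H-3/2) * W^(H-3/2) / D^(H-3/2)))
      = (A * (A^(1-2*H) * A^(H-3/2))) * ((B * (B^(1-2*H) * B^(H-3/2)))
        * ((W * (W^(H-3/2) * W^(H-3/2)))
          * ((S^(H-3/2) * S1^(1-2*H)) * (D^(1-2*H) * (D^(H-3/2) * (D^(H-3/2) * D^(2:ℕ))))⁻¹))) := by
        ring
    _ = A ^ ((1:ℝ)/2-H) * (B ^ ((1:ℝ)/2-H) * ((W ^ (2*H-2)) * (S ^ (H-3/2) * S1 ^ (1-2*H)))) := by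
        rw [← hA2, ← hB2, ← hW2, ← hD2, inv_one, mul_one]
    _ = A ^ ((1:ℝ)/2-H) * B ^ ((1:ℝ)/2-H) * (W ^ (2*H-2)) * (S ^ (H-3/2) * S1 ^ (1-2*H)) := by
        ring

section Subst
variable {H y z : ℝ}

lemma subst_aux (h1 : 1/2 < H) (h2 : H < 1) (hy : 0 < y) (hyz : y < z) :
    (∫ u in Ioo 0 y, u ^ (1-2*H) * (y-u) ^ (H-3/2) * (z-u) ^ (H-3/2)
      = (y*z) ^ (1/2-H) * (z-y) ^ (2*H-2)
        * ∫ s in Ioo (0:ℝ) 1, s ^ (H-3/2) * (1-s) ^ (1-2*H))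
    ∧ IntegrableOn (fun u : ℝ => u ^ (1-2*H) * (y-u) ^ (H-3/2) * (z-u) ^ (H-3/2)) (Ioo 0 y) := by
  have hz : 0 < z := hy.trans hyz
  have hw : 0 < z - y := by linarith
  set f : ℝ → ℝ := fun s => y*z*(1-s)/(z-y*s) with hf
  set f' : ℝ → ℝ := fun s => y*z*(y-z)/(z-y*s)^2 with hf'
  have hD : ∀ s ∈ Ioo (0:ℝ) 1, 0 < z - y*s := by
    rintro s ⟨hs0, hs1⟩; nlinarith
  have hderiv : ∀ s ∈ Ioo (0:ℝ) 1, HasDerivWithinAt f (f' s) (Ioo 0 1) s := by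
    intro s hs
    have hDs := hD s hs
    have h1' : HasDerivAt (fun s : ℝ => y*z*(1-s)) (-(y*z)) s := by
      simpa using ((hasDerivAt_id s).const_sub 1).const_mul (y*z)
    have h2' : HasDerivAt (fun s : ℝ => z - y*s) (-y) s := by
      simpa using ((hasDerivAt_id s).const_mul y).const_sub z
    have := (h1'.div h2' hDs.ne')
    refine (HasDerivAt.hasDerivWithinAt ?_)
    have e : f' s = ((-(y * z)) * (z - y * s) - y * z * (1 - s) * -y) / (z - y * s) ^ 2 := by
      simp only [hf']; ring
    rw [e]; exact this
  have hinj : InjOn f (Ioo 0 1) := by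
    rintro s1 hs1 s2 hs2 he
    have hD1 := hD s1 hs1
    have hD2 := hD s2 hs2
    rw [hf, div_eq_div_iff hD1.ne' hD2.ne'] at he
    have hkey : y*z*(z-y)*(s1-s2) = 0 := by linear_combination -he
    have hpos : (0:ℝ) < y*z*(z-y) := by positivity
    have : s1 - s2 = 0 := by
      rcases mul_eq_zero.mp hkey with h | h
      · exact absurd h hpos.ne'
      · exact h
    linarith
  have himg : f '' Ioo 0 1 = Ioo 0 y := by
    ext u
    constructor
    · rintro ⟨s, hs, rfl⟩
      obtain ⟨hs0, hs1⟩ := hs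
      have hDs := hD s ⟨hs0, hs1⟩
      constructor
      · have : 0 < y*z*(1-s) := mul_pos (mul_pos hy hz) (by linarith)
        exact div_pos this hDs
      · rw [div_lt_iff₀ hDs]
        nlinarith [mul_pos (mul_pos hy hs0) hw]
    · rintro ⟨hu0, huy⟩
      refine ⟨z*(y-u)/(y*(z-u)), ⟨?_, ?_⟩, ?_⟩
      · have h1'' : 0 < z*(y-u) := mul_pos hz (by linarith)
        have h2'' : 0 < y*(z-u) := mul_pos hy (by linarith)
        exact div_pos h1'' h2''
      · rw [div_lt_one (mul_pos hy (by linarith : (0:ℝ) < z - u))]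
        nlinarith [mul_pos hu0 hw]
      · have hzu : (0:ℝ) < z - u := by nlinarith
        have hden : z - y*(z*(y-u)/(y*(z-u))) = z*(z-y)/(z-u) := by
          field_simp
          ring
        rw [hf]
        rw [div_eq_iff (by rw [hden]; positivity)]
        field_simp
        ring
  have hEq : ∀ s ∈ Ioo (0:ℝ) 1,
      |f' s| • ((f s) ^ (1-2*H) * (y - f s) ^ (H-3/2) * (z - f s) ^ (H-3/2))
      = (y*z) ^ (1/2-H) * (z-y) ^ (2*H-2) * (s ^ (H-3/2) * (1-s) ^ (1-2*H)) := by
    rintro s ⟨hs0, hs1⟩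
    have hDs := hD s ⟨hs0, hs1⟩
    have hs1' : (0:ℝ) < 1 - s := by linarith
    have habs : |f' s| = y*z*(z-y)/(z-y*s)^2 := by
      rw [hf']
      rw [abs_of_nonpos (by
        apply div_nonpos_of_nonpos_of_nonneg
        · nlinarith [mul_pos (mul_pos hy hz) hw]
        · positivity)]
      ring
    have e2 : y - f s = y*s*(z-y)/(z-y*s) := by
      rw [hf]; field_simp; ring
    have e3 : z - f s = z*(z-y)/(z-y*s) := by
      rw [hf]; field_simp; ring
    have e1 : f s = y*z*(1-s)/(z-y*s) := rfl
    rw [smul_eq_mul, habs, e1, e2, e3]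
    exact rpow_mess H hy hz hs0 hs1' hw hDs
  have hIv := integral_image_eq_integral_abs_deriv_smul measurableSet_Ioo hderiv hinj
    (fun u : ℝ => u ^ (1-2*H) * (y-u) ^ (H-3/2) * (z-u) ^ (H-3/2))
  rw [himg] at hIv
  have hInt2 : IntegrableOn (fun s : ℝ =>
      (y*z) ^ (1/2-H) * (z-y) ^ (2*H-2) * (s ^ (H-3/2) * (1-s) ^ (1-2*H))) (Ioo 0 1) :=
    (betaInt_integrable (by linarith) (by linarith)).const_mul _
  constructor
  · rw [hIv]
    rw [setIntegral_congr_fun measurableSet_Ioo hEq]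
    rw [MeasureTheory.integral_const_mul]
  · rw [← himg, integrableOn_image_iff_integrableOn_abs_deriv_smul measurableSet_Ioo hderiv hinj]
    exact hInt2.congr_fun (fun s hs => (hEq s hs).symm) measurableSet_Ioo
end Subst

variable {H : ℝ}

lemma f_integrable (h1 : 1/2 < H) (h2 : H < 1) {u t : ℝ} (hu : 0 < u) (hut : u < t) :
    IntegrableOn (fun y : ℝ => (y-u) ^ (H-3/2) * y ^ (H-1/2)) (Ioo u t) := by
  have base : IntegrableOn (fun y : ℝ => (y-u) ^ (H-3/2)) (Ioc u t) := by
    have h := (intervalIntegral.intervalIntegrable_rpow' (a := 0) (b := t-u)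
      (r := H-3/2) (by linarith)).comp_sub_right u
    rw [show (0:ℝ)+u = u by ring, show t-u+u = t by ring] at h
    exact (intervalIntegrable_iff_integrableOn_Ioc_of_le hut.le).mp h
  have dom : IntegrableOn (fun y : ℝ => (y-u) ^ (H-3/2) * t ^ (H-1/2)) (Ioo u t) :=
    (base.mono_set Ioo_subset_Ioc_self).mul_const _
  refine MeasureTheory.Integrable.mono dom ((by fun_prop : Measurable fun y : ℝ =>
    (y-u) ^ (H-3/2) * y ^ (H-1/2)).aestronglyMeasurable) ?_
  filter_upwards [ae_restrict_mem measurableSet_Ioo] with y hy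
  obtain ⟨hy1, hy2⟩ := hy
  have hb : (0:ℝ) ≤ (y-u) ^ (H-3/2) := rpow_nonneg (by linarith) _
  have hyc : y ^ (H-1/2) ≤ t ^ (H-1/2) :=
    rpow_le_rpow (by linarith) hy2.le (by linarith)
  rw [Real.norm_eq_abs, Real.norm_eq_abs, abs_mul, abs_mul, abs_of_nonneg hb,
    abs_of_nonneg (rpow_nonneg (by linarith : (0:ℝ) ≤ t) _),
    abs_of_nonneg (rpow_nonneg (by linarith : (0:ℝ) ≤ y) _)]
  exact mul_le_mul_of_nonneg_left hyc hb

lemma abs_integrable (h1 : 1/2 < H) (h2 : H < 1) {t y : ℝ} (hy0 : 0 < y) (hyt : y < t) :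
    IntegrableOn (fun z : ℝ => |y-z| ^ (2*H-2)) (Ioo 0 t) := by
  have hsplit : Ioo (0:ℝ) y ∪ Ico y t = Ioo 0 t := Ioo_union_Ico_eq_Ioo hy0 hyt.le
  rw [← hsplit]
  apply IntegrableOn.union
  · have h := (intervalIntegral.intervalIntegrable_rpow' (a := 0) (b := y)
      (r := 2*H-2) (by linarith)).comp_sub_left y
    rw [show y - 0 = y by ring, show y - y = 0 by ring] at h
    have h2' := (intervalIntegrable_iff_integrableOn_Ioc_of_le hy0.le).mp h.symm
    refine ((h2'.mono_set Ioo_subset_Ioc_self).congr_fun ?_ measurableSet_Ioo)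
    intro z hz
    show (y-z) ^ (2*H-2) = |y-z| ^ (2*H-2)
    rw [abs_of_nonneg (by linarith [hz.2] : (0:ℝ) ≤ y - z)]
  · have h := (intervalIntegral.intervalIntegrable_rpow' (a := 0) (b := t-y)
      (r := 2*H-2) (by linarith)).comp_sub_right y
    rw [show (0:ℝ)+y = y by ring, show t-y+y = t by ring] at h
    have h2' := (intervalIntegrable_iff_integrableOn_Ioc_of_le hyt.le).mp h
    have h3 : IntegrableOn (fun z : ℝ => (z-y) ^ (2*H-2)) (Ico y t) := by
      rw [IntegrableOn, Measure.restrict_congr_set Ico_ae_eq_Ioc]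
      exact h2'
    refine h3.congr_fun ?_ measurableSet_Ico
    intro z hz
    show (z-y) ^ (2*H-2) = |y-z| ^ (2*H-2)
    rw [abs_of_nonpos (by linarith [hz.1] : y - z ≤ 0), neg_sub]

lemma abs_integral (h1 : 1/2 < H) (h2 : H < 1) {t y : ℝ} (hy0 : 0 < y) (hyt : y < t) :
    ∫ z in Ioo 0 t, |y-z| ^ (2*H-2) = (y ^ (2*H-1) + (t-y) ^ (2*H-1))/(2*H-1) := by
  have hsplit : Ioo (0:ℝ) y ∪ Ico y t = Ioo 0 t := Ioo_union_Ico_eq_Ioo hy0 hyt.le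
  have hint := abs_integrable h1 h2 hy0 hyt (t := t)
  rw [← hsplit] at hint ⊢
  rw [setIntegral_union (Set.disjoint_left.mpr fun z hz1 hz2 => absurd hz2.1 (not_le.mpr hz1.2)) measurableSet_Ico
    (hint.mono_set subset_union_left) (hint.mono_set subset_union_right)]
  have e1 : ∫ z in Ioo (0:ℝ) y, |y-z| ^ (2*H-2) = y ^ (2*H-1)/(2*H-1) := by
    rw [setIntegral_congr_fun measurableSet_Ioo
      (fun z hz => by
        show |y-z| ^ (2*H-2) = (y-z) ^ (2*H-2)
        rw [abs_of_nonneg (by linarith [hz.2] : (0:ℝ) ≤ y - z)] :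
        EqOn (fun z : ℝ => |y-z| ^ (2*H-2)) (fun z : ℝ => (y-z) ^ (2*H-2)) (Ioo 0 y))]
    rw [← integral_Ioc_eq_integral_Ioo, ← intervalIntegral.integral_of_le hy0.le]
    rw [intervalIntegral.integral_comp_sub_left (fun x : ℝ => x ^ (2*H-2)) y]
    rw [show y - 0 = y by ring, show y - y = 0 by ring]
    rw [integral_rpow (Or.inl (by linarith))]
    rw [Real.zero_rpow (by intro hc; nlinarith), show 2*H-2+1 = 2*H-1 by ring]
    ring
  have e2 : ∫ z in Ico y t, |y-z| ^ (2*H-2) = (t-y) ^ (2*H-1)/(2*H-1) := by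
    rw [setIntegral_congr_fun measurableSet_Ico
      (fun z hz => by
        show |y-z| ^ (2*H-2) = (z-y) ^ (2*H-2)
        rw [abs_of_nonpos (by linarith [hz.1] : y - z ≤ 0), neg_sub] :
        EqOn (fun z : ℝ => |y-z| ^ (2*H-2)) (fun z : ℝ => (z-y) ^ (2*H-2)) (Ico y t))]
    rw [setIntegral_congr_set Ico_ae_eq_Ioc]
    rw [← intervalIntegral.integral_of_le hyt.le]
    rw [intervalIntegral.integral_comp_sub_right (fun x : ℝ => x ^ (2*H-2)) y]
    rw [show y - y = 0 by ring]
    rw [integral_rpow (Or.inl (by linarith))]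
    rw [Real.zero_rpow (by intro hc; nlinarith), show 2*H-2+1 = 2*H-1 by ring]
    ring
  rw [e1, e2]
  ring

lemma outer_integral (h1 : 1/2 < H) (h2 : H < 1) {t : ℝ} (ht : 0 < t) :
    ∫ y in Ioo 0 t, (y ^ (2*H-1) + (t-y) ^ (2*H-1)) = t ^ (2*H)/H := by
  have i1 : IntervalIntegrable (fun y : ℝ => y ^ (2*H-1)) volume 0 t :=
    intervalIntegral.intervalIntegrable_rpow' (by linarith)
  have i2 : IntervalIntegrable (fun y : ℝ => (t-y) ^ (2*H-1)) volume 0 t := by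
    have h := (intervalIntegral.intervalIntegrable_rpow' (a := 0) (b := t)
      (r := 2*H-1) (by linarith)).comp_sub_left t
    rw [show t - 0 = t by ring, show t - t = 0 by ring] at h
    exact h.symm
  rw [← integral_Ioc_eq_integral_Ioo, ← intervalIntegral.integral_of_le ht.le]
  rw [intervalIntegral.integral_add i1 i2]
  rw [intervalIntegral.integral_comp_sub_left (fun x : ℝ => x ^ (2*H-1)) t]
  rw [show t - 0 = t by ring, show t - t = 0 by ring]
  rw [integral_rpow (Or.inl (by linarith))]
  rw [Real.zero_rpow (by intro hc; nlinarith), show 2*H-1+1 = 2*H by ring]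
  have hH : H ≠ 0 := by linarith
  field_simp
  ring

lemma outer_integrable {H : ℝ} (h1 : 1/2 < H) (h2 : H < 1) {t : ℝ} (ht : 0 < t) :
    IntegrableOn (fun y : ℝ => y ^ (2*H-1) + (t-y) ^ (2*H-1)) (Ioo 0 t) := by
  have i1 : IntervalIntegrable (fun y : ℝ => y ^ (2*H-1)) volume 0 t :=
    intervalIntegral.intervalIntegrable_rpow' (by linarith)
  have i2 : IntervalIntegrable (fun y : ℝ => (t-y) ^ (2*H-1)) volume 0 t := by
    have h := (intervalIntegral.intervalIntegrable_rpow' (a := 0) (b := t)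
      (r := 2*H-1) (by linarith)).comp_sub_left t
    rw [show t - 0 = t by ring, show t - t = 0 by ring] at h
    exact h.symm
  exact ((intervalIntegrable_iff_integrableOn_Ioc_of_le ht.le).mp
    (i1.add i2)).mono_set Ioo_subset_Ioc_self

noncomputable def Bc (H : ℝ) : ℝ := ∫ s in Ioo (0:ℝ) 1, s ^ (H-3/2) * (1-s) ^ (1-2*H)



lemma Bc_nonneg (H : ℝ) : 0 ≤ Bc H :=
  setIntegral_nonneg measurableSet_Ioo fun s hs =>
    mul_nonneg (rpow_nonneg hs.1.le _) (rpow_nonneg (by linarith [hs.2]) _)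

lemma inner_eval_lt {H y z : ℝ} (h1 : 1/2 < H) (h2 : H < 1) (hy : 0 < y) (hyz : y < z) :
    ∫⁻ u in Ioo 0 (min y z),
        ENNReal.ofReal (u ^ (1-2*H)) * ENNReal.ofReal ((y-u) ^ (H-3/2) * y ^ (H-1/2))
          * ENNReal.ofReal ((z-u) ^ (H-3/2) * z ^ (H-1/2))
      = ENNReal.ofReal (Bc H * (z-y) ^ (2*H-2)) := by
  have hz : 0 < z := hy.trans hyz
  rw [min_eq_left hyz.le]
  have step1 : ∫⁻ u in Ioo 0 y,
      ENNReal.ofReal (u ^ (1-2*H)) * ENNReal.ofReal ((y-u) ^ (H-3/2) * y ^ (H-1/2))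
        * ENNReal.ofReal ((z-u) ^ (H-3/2) * z ^ (H-1/2))
      = ∫⁻ u in Ioo 0 y, ENNReal.ofReal
          (u ^ (1-2*H) * ((y-u) ^ (H-3/2) * y ^ (H-1/2)) * ((z-u) ^ (H-3/2) * z ^ (H-1/2))) := by
    refine setLIntegral_congr_fun measurableSet_Ioo (fun u hu => ?_)
    rw [← ENNReal.ofReal_mul (rpow_nonneg hu.1.le _),
        ← ENNReal.ofReal_mul (mul_nonneg (rpow_nonneg hu.1.le _)
          (mul_nonneg (rpow_nonneg (by linarith [hu.2]) _) (rpow_nonneg hy.le _)))]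
  rw [step1]
  have hInt : IntegrableOn (fun u : ℝ =>
      u ^ (1-2*H) * ((y-u) ^ (H-3/2) * y ^ (H-1/2)) * ((z-u) ^ (H-3/2) * z ^ (H-1/2)))
      (Ioo 0 y) := by
    refine IntegrableOn.congr_fun ((subst_aux h1 h2 hy hyz).2.mul_const
      (y ^ (H-1/2) * z ^ (H-1/2)))
      (fun u hu => by
        show u ^ (1-2*H) * (y-u) ^ (H-3/2) * (z-u) ^ (H-3/2) * (y ^ (H-1/2) * z ^ (H-1/2))
          = u ^ (1-2*H) * ((y-u) ^ (H-3/2) * y ^ (H-1/2)) * ((z-u) ^ (H-3/2) * z ^ (H-1/2))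
        ring) measurableSet_Ioo
  rw [← ofReal_integral_eq_lintegral_ofReal hInt ?_]
  · congr 1
    have : (∫ u in Ioo 0 y,
        u ^ (1-2*H) * ((y-u) ^ (H-3/2) * y ^ (H-1/2)) * ((z-u) ^ (H-3/2) * z ^ (H-1/2)))
        = (∫ u in Ioo 0 y,
            u ^ (1-2*H) * (y-u) ^ (H-3/2) * (z-u) ^ (H-3/2)) * (y ^ (H-1/2) * z ^ (H-1/2)) := by
      rw [← integral_mul_const]
      exact setIntegral_congr_fun measurableSet_Ioo fun u hu => by ring
    rw [this, (subst_aux h1 h2 hy hyz).1]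
    rw [mul_rpow hy.le hz.le]
    have hy0 : y ^ ((1:ℝ)/2-H) * y ^ (H-1/2) = 1 := by
      rw [← rpow_add hy, show (1:ℝ)/2-H + (H-1/2) = 0 by ring, rpow_zero]
    have hz0 : z ^ ((1:ℝ)/2-H) * z ^ (H-1/2) = 1 := by
      rw [← rpow_add hz, show (1:ℝ)/2-H + (H-1/2) = 0 by ring, rpow_zero]
    calc y ^ ((1:ℝ)/2-H) * z ^ ((1:ℝ)/2-H) * (z-y) ^ (2*H-2) * Bc H * (y ^ (H-1/2) * z ^ (H-1/2))
        = (y ^ ((1:ℝ)/2-H) * y ^ (H-1/2)) * (z ^ ((1:ℝ)/2-H) * z ^ (H-1/2))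
          * ((z-y) ^ (2*H-2) * Bc H) := by ring
      _ = Bc H * (z-y) ^ (2*H-2) := by rw [hy0, hz0]; ring
  · filter_upwards [ae_restrict_mem measurableSet_Ioo] with u hu
    have h1' : (0:ℝ) ≤ u := hu.1.le
    have h2' : (0:ℝ) ≤ y - u := by linarith [hu.2]
    have h3' : (0:ℝ) ≤ z - u := by linarith [hu.2]
    positivity

lemma inner_eval {H t y z : ℝ} (h1 : 1/2 < H) (h2 : H < 1) (hy : y ∈ Ioo 0 t)
    (hz : z ∈ Ioo 0 t) (hne : z ≠ y) :
    ∫⁻ u in Ioo 0 (min y z),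
        ENNReal.ofReal (u ^ (1-2*H)) * ENNReal.ofReal ((y-u) ^ (H-3/2) * y ^ (H-1/2))
          * ENNReal.ofReal ((z-u) ^ (H-3/2) * z ^ (H-1/2))
      = ENNReal.ofReal (Bc H * |y-z| ^ (2*H-2)) := by
  rcases lt_or_gt_of_ne hne with h | h
  · have hswap : (∫⁻ u in Ioo 0 (min y z),
        ENNReal.ofReal (u ^ (1-2*H)) * ENNReal.ofReal ((y-u) ^ (H-3/2) * y ^ (H-1/2))
          * ENNReal.ofReal ((z-u) ^ (H-3/2) * z ^ (H-1/2)))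
        = ∫⁻ u in Ioo 0 (min z y),
            ENNReal.ofReal (u ^ (1-2*H)) * ENNReal.ofReal ((z-u) ^ (H-3/2) * z ^ (H-1/2))
              * ENNReal.ofReal ((y-u) ^ (H-3/2) * y ^ (H-1/2)) := by
      rw [min_comm]; exact lintegral_congr fun u => by ring
    rw [hswap, inner_eval_lt h1 h2 hz.1 h, abs_of_nonneg (by linarith : (0:ℝ) ≤ y - z)]
  · rw [inner_eval_lt h1 h2 hy.1 h, abs_of_nonpos (by linarith : y - z ≤ 0), neg_sub]

noncomputable def Wfun (H t : ℝ) (u y z : ℝ) : ENNReal :=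
  if 0 < u ∧ u < y ∧ y < t ∧ u < z ∧ z < t
  then ENNReal.ofReal (u ^ (1-2*H)) * ENNReal.ofReal ((y-u) ^ (H-3/2) * y ^ (H-1/2))
    * ENNReal.ofReal ((z-u) ^ (H-3/2) * z ^ (H-1/2)) else 0

lemma measurable_Wfun (H t : ℝ) :
    Measurable (fun p : ℝ × ℝ × ℝ => Wfun H t p.1 p.2.1 p.2.2) := by
  unfold Wfun
  refine Measurable.ite ?_ (by fun_prop) measurable_const
  refine MeasurableSet.inter (measurableSet_lt measurable_const measurable_fst) ?_
  refine MeasurableSet.inter (measurableSet_lt measurable_fst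
    (measurable_fst.comp measurable_snd)) ?_
  refine MeasurableSet.inter (measurableSet_lt (measurable_fst.comp measurable_snd)
    measurable_const) ?_
  exact MeasurableSet.inter (measurableSet_lt measurable_fst
    (measurable_snd.comp measurable_snd))
    (measurableSet_lt (measurable_snd.comp measurable_snd) measurable_const)

lemma stepA (H t : ℝ) :
    ∫⁻ u in Ioo 0 t, ∫⁻ y in Ioo u t, ∫⁻ z in Ioo u t,
        (ENNReal.ofReal (u ^ (1-2*H)) * ENNReal.ofReal ((y-u) ^ (H-3/2) * y ^ (H-1/2))
          * ENNReal.ofReal ((z-u) ^ (H-3/2) * z ^ (H-1/2)))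
      = ∫⁻ u, ∫⁻ y, ∫⁻ z, Wfun H t u y z := by
  rw [← lintegral_indicator measurableSet_Ioo]
  refine lintegral_congr fun u => ?_
  by_cases hu : u ∈ Ioo 0 t
  · rw [indicator_of_mem hu, ← lintegral_indicator measurableSet_Ioo]
    refine lintegral_congr fun y => ?_
    by_cases hy : y ∈ Ioo u t
    · rw [indicator_of_mem hy, ← lintegral_indicator measurableSet_Ioo]
      refine lintegral_congr fun z => ?_
      by_cases hz : z ∈ Ioo u t
      · rw [indicator_of_mem hz, Wfun, if_pos ⟨hu.1, hy.1, hy.2, hz.1, hz.2⟩]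
      · rw [indicator_of_notMem hz, Wfun, if_neg fun hc => hz ⟨hc.2.2.2.1, hc.2.2.2.2⟩]
    · rw [indicator_of_notMem hy]
      have : ∀ z, Wfun H t u y z = 0 := fun z => if_neg fun hc => hy ⟨hc.2.1, hc.2.2.1⟩
      simp [this]
  · rw [indicator_of_notMem hu]
    have : ∀ y z, Wfun H t u y z = 0 := fun y z =>
      if_neg fun hc => hu ⟨hc.1, lt_trans hc.2.1 hc.2.2.1⟩
    simp [this]

lemma stepB (H t : ℝ) :
    ∫⁻ u, ∫⁻ y, ∫⁻ z, Wfun H t u y z = ∫⁻ y, ∫⁻ z, ∫⁻ u, Wfun H t u y z := by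
  have m := measurable_Wfun H t
  have m1 : Measurable (fun p : ℝ × ℝ => ∫⁻ z, Wfun H t p.1 p.2 z) := by
    have h : Measurable (fun q : (ℝ × ℝ) × ℝ => Wfun H t q.1.1 q.1.2 q.2) :=
      m.comp (by fun_prop : Measurable fun q : (ℝ × ℝ) × ℝ => (q.1.1, q.1.2, q.2))
    exact h.lintegral_prod_right'
  calc ∫⁻ u, ∫⁻ y, ∫⁻ z, Wfun H t u y z
      = ∫⁻ y, ∫⁻ u, ∫⁻ z, Wfun H t u y z :=
        lintegral_lintegral_swap m1.aemeasurable
    _ = ∫⁻ y, ∫⁻ z, ∫⁻ u, Wfun H t u y z := by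
        refine lintegral_congr fun y => ?_
        refine lintegral_lintegral_swap ?_
        exact (m.comp (by fun_prop :
          Measurable fun q : ℝ × ℝ => (q.1, y, q.2))).aemeasurable

lemma stepC (H t : ℝ) :
    ∫⁻ y, ∫⁻ z, ∫⁻ u, Wfun H t u y z
      = ∫⁻ y in Ioo 0 t, ∫⁻ z in Ioo 0 t, ∫⁻ u in Ioo 0 (min y z),
          (ENNReal.ofReal (u ^ (1-2*H)) * ENNReal.ofReal ((y-u) ^ (H-3/2) * y ^ (H-1/2))
            * ENNReal.ofReal ((z-u) ^ (H-3/2) * z ^ (H-1/2))) := by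
  rw [← lintegral_indicator measurableSet_Ioo]
  refine lintegral_congr fun y => ?_
  by_cases hy : y ∈ Ioo 0 t
  · rw [indicator_of_mem hy, ← lintegral_indicator measurableSet_Ioo]
    refine lintegral_congr fun z => ?_
    by_cases hz : z ∈ Ioo 0 t
    · rw [indicator_of_mem hz, ← lintegral_indicator measurableSet_Ioo]
      refine lintegral_congr fun u => ?_
      by_cases hu : u ∈ Ioo 0 (min y z)
      · rw [indicator_of_mem hu, Wfun, if_pos ⟨hu.1, lt_of_lt_of_le hu.2 (min_le_left _ _),
          hy.2, lt_of_lt_of_le hu.2 (min_le_right _ _), hz.2⟩]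
      · rw [indicator_of_notMem hu, Wfun, if_neg fun hc =>
          hu ⟨hc.1, lt_min hc.2.1 hc.2.2.2.1⟩]
    · rw [indicator_of_notMem hz]
      have : ∀ u, Wfun H t u y z = 0 := fun u =>
        if_neg fun hc => hz ⟨lt_trans hc.1 hc.2.2.2.1, hc.2.2.2.2⟩
      simp [this]
  · rw [indicator_of_notMem hy]
    have : ∀ z u, Wfun H t u y z = 0 := fun z u =>
      if_neg fun hc => hy ⟨lt_trans hc.1 hc.2.1, hc.2.2.1⟩
    simp [this]

lemma const_algebra {H : ℝ} (h1 : 1/2 < H) (h2 : H < 1) {t : ℝ} (ht : 0 < t) :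
    Bc H / (2*H-1) * (t ^ (2*H) / H) = t ^ (2*H) / cSq H := by
  have hBc : Bc H = Real.Gamma (H-1/2) * Real.Gamma (2-2*H) / Real.Gamma (3/2-H) := by
    rw [Bc, betaInt_value (by linarith) (by linarith),
      show H-3/2+1 = H-1/2 by ring, show 1-2*H+1 = 2-2*H by ring,
      show H-3/2+(1-2*H)+2 = 3/2-H by ring]
  have hS : 0 < Real.sin (π * (H-1/2)) := by
    apply sin_pos_of_pos_of_lt_pi
    · exact mul_pos pi_pos (by linarith)
    · nlinarith [pi_pos]
  have hG1 : 0 < Real.Gamma (H-1/2) := Real.Gamma_pos_of_pos (by linarith)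
  have hG2 : 0 < Real.Gamma (2-2*H) := Real.Gamma_pos_of_pos (by linarith)
  have hG3 : 0 < Real.Gamma (3/2-H) := Real.Gamma_pos_of_pos (by linarith)
  have hplus : Real.Gamma (H+1/2) = (H-1/2) * Real.Gamma (H-1/2) := by
    have h := Real.Gamma_add_one (s := H-1/2) (by intro hc; rw [sub_eq_zero] at hc; linarith)
    rw [show H-1/2+1 = H+1/2 by ring] at h
    exact h
  have hrefl : Real.Gamma (H-1/2) * Real.Gamma (3/2-H) = π / Real.sin (π * (H-1/2)) := by
    have h := Real.Gamma_mul_Gamma_one_sub (H-1/2)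
    rw [show (1:ℝ)-(H-1/2) = 3/2-H by ring] at h
    exact h
  have hG3' : Real.Gamma (3/2-H) = π / (Real.sin (π * (H-1/2)) * Real.Gamma (H-1/2)) := by
    rw [eq_div_iff (by positivity)]
    rw [show Real.Gamma (3/2-H) * (Real.sin (π * (H-1/2)) * Real.Gamma (H-1/2))
      = (Real.Gamma (H-1/2) * Real.Gamma (3/2-H)) * Real.sin (π * (H-1/2)) by ring, hrefl]
    exact div_mul_cancel₀ _ hS.ne'
  rw [hBc, cSq, hplus, hG3']
  have hH : (0:ℝ) < H := by linarith
  have hHm : (0:ℝ) < H - 1/2 := by linarith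
  rw [show (2*H-1:ℝ) = 2*(H-1/2) by ring]
  set m := H - 1/2 with hmdef
  field_simp [hS.ne', hG1.ne', hG2.ne', hH.ne', hHm.ne', Real.pi_ne_zero]

theorem stmt19 (H t : ℝ) (h1 : 1/2 < H) (h2 : H < 1) (ht : 0 < t) :
    ∫ u in Set.Ioo (0:ℝ) t, (K H t u) ^ 2 = t ^ (2*H) / cSq H := by
  -- measurability of K
  have hGm : Measurable (fun q : ℝ × ℝ => Set.indicator {p : ℝ × ℝ | p.1 < p.2 ∧ p.2 < t}
      (fun p => (p.2-p.1) ^ (H-3/2) * p.2 ^ (H-1/2)) q) := by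
    refine Measurable.indicator (by fun_prop) ?_
    exact MeasurableSet.inter (measurableSet_lt measurable_fst measurable_snd)
      (measurableSet_lt measurable_snd measurable_const)
  have hIeq : (fun u : ℝ => ∫ y, Set.indicator {p : ℝ × ℝ | p.1 < p.2 ∧ p.2 < t}
      (fun p => (p.2-p.1) ^ (H-3/2) * p.2 ^ (H-1/2)) (u, y))
      = fun u : ℝ => ∫ y in Ioo u t, (y-u) ^ (H-3/2) * y ^ (H-1/2) := by
    funext u
    rw [← integral_indicator measurableSet_Ioo]
    congr 1
  have smInner : StronglyMeasurable
      (fun u : ℝ => ∫ y in Ioo u t, (y-u) ^ (H-3/2) * y ^ (H-1/2)) := by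
    rw [← hIeq]
    exact hGm.stronglyMeasurable.integral_prod_right'
  have hKm : AEStronglyMeasurable (fun u : ℝ => (K H t u) ^ 2)
      (volume.restrict (Ioo 0 t)) := by
    have hK : AEStronglyMeasurable (fun u : ℝ => K H t u) (volume.restrict (Ioo 0 t)) := by
      unfold K
      exact ((by fun_prop : Measurable fun u : ℝ => u ^ (1/2-H)).aestronglyMeasurable.mul
        smInner.aestronglyMeasurable).restrict
    have : (fun u : ℝ => (K H t u) ^ 2) = fun u => K H t u * K H t u := by
      funext u; ring
    rw [this]
    exact hK.mul hK
  -- pointwise identity on (0,t)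
  have hK2 : ∀ u ∈ Ioo (0:ℝ) t, ENNReal.ofReal ((K H t u) ^ 2)
      = ENNReal.ofReal (u ^ (1-2*H))
        * (∫⁻ y in Ioo u t, ENNReal.ofReal ((y-u) ^ (H-3/2) * y ^ (H-1/2))) ^ 2 := by
    intro u hu
    have hJ : 0 ≤ ∫ y in Ioo u t, (y-u) ^ (H-3/2) * y ^ (H-1/2) :=
      setIntegral_nonneg measurableSet_Ioo fun y hy =>
        mul_nonneg (rpow_nonneg (by linarith [hy.1]) _)
          (rpow_nonneg (by linarith [hu.1, hy.1]) _)
    have hsq : (K H t u) ^ 2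
        = u ^ (1-2*H) * (∫ y in Ioo u t, (y-u) ^ (H-3/2) * y ^ (H-1/2)) ^ 2 := by
      rw [K, mul_pow]
      congr 1
      rw [← Real.rpow_natCast (u ^ (1/2-H)) 2, ← Real.rpow_mul hu.1.le,
        show (1/2-H)*((2:ℕ):ℝ) = 1-2*H by push_cast; ring]
    rw [hsq, ENNReal.ofReal_mul (rpow_nonneg hu.1.le _), ENNReal.ofReal_pow hJ,
      ofReal_integral_eq_lintegral_ofReal (f_integrable h1 h2 hu.1 hu.2) ?_]
    filter_upwards [ae_restrict_mem measurableSet_Ioo] with y hy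
    exact mul_nonneg (rpow_nonneg (by linarith [hy.1]) _)
      (rpow_nonneg (by linarith [hu.1, hy.1]) _)
  have hDouble : ∀ u : ℝ, ENNReal.ofReal (u ^ (1-2*H))
        * (∫⁻ y in Ioo u t, ENNReal.ofReal ((y-u) ^ (H-3/2) * y ^ (H-1/2))) ^ 2
      = ∫⁻ y in Ioo u t, ∫⁻ z in Ioo u t,
          (ENNReal.ofReal (u ^ (1-2*H)) * ENNReal.ofReal ((y-u) ^ (H-3/2) * y ^ (H-1/2))
            * ENNReal.ofReal ((z-u) ^ (H-3/2) * z ^ (H-1/2))) := by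
    intro u
    have mF : Measurable fun y : ℝ => ENNReal.ofReal ((y-u) ^ (H-3/2) * y ^ (H-1/2)) := by
      fun_prop
    symm
    calc ∫⁻ y in Ioo u t, ∫⁻ z in Ioo u t,
          (ENNReal.ofReal (u ^ (1-2*H)) * ENNReal.ofReal ((y-u) ^ (H-3/2) * y ^ (H-1/2))
            * ENNReal.ofReal ((z-u) ^ (H-3/2) * z ^ (H-1/2)))
        = ∫⁻ y in Ioo u t,
            (ENNReal.ofReal (u ^ (1-2*H)) * ENNReal.ofReal ((y-u) ^ (H-3/2) * y ^ (H-1/2)))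
            * ∫⁻ z in Ioo u t, ENNReal.ofReal ((z-u) ^ (H-3/2) * z ^ (H-1/2)) :=
          lintegral_congr fun y => lintegral_const_mul _ mF
      _ = (∫⁻ y in Ioo u t,
            (ENNReal.ofReal (u ^ (1-2*H)) * ENNReal.ofReal ((y-u) ^ (H-3/2) * y ^ (H-1/2))))
            * ∫⁻ z in Ioo u t, ENNReal.ofReal ((z-u) ^ (H-3/2) * z ^ (H-1/2)) :=
          lintegral_mul_const _ (measurable_const.mul mF)
      _ = (ENNReal.ofReal (u ^ (1-2*H))
            * ∫⁻ y in Ioo u t, ENNReal.ofReal ((y-u) ^ (H-3/2) * y ^ (H-1/2)))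
            * ∫⁻ z in Ioo u t, ENNReal.ofReal ((z-u) ^ (H-3/2) * z ^ (H-1/2)) := by
          rw [lintegral_const_mul _ mF]
      _ = ENNReal.ofReal (u ^ (1-2*H))
            * (∫⁻ y in Ioo u t, ENNReal.ofReal ((y-u) ^ (H-3/2) * y ^ (H-1/2))) ^ 2 := by
          ring
  -- the big lintegral computation
  have hL : ∫⁻ u in Ioo 0 t, ENNReal.ofReal ((K H t u) ^ 2)
      = ENNReal.ofReal (Bc H / (2*H-1) * (t ^ (2*H) / H)) := by
    calc ∫⁻ u in Ioo 0 t, ENNReal.ofReal ((K H t u) ^ 2)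
        = ∫⁻ u in Ioo 0 t, ∫⁻ y in Ioo u t, ∫⁻ z in Ioo u t,
            (ENNReal.ofReal (u ^ (1-2*H)) * ENNReal.ofReal ((y-u) ^ (H-3/2) * y ^ (H-1/2))
              * ENNReal.ofReal ((z-u) ^ (H-3/2) * z ^ (H-1/2))) :=
          setLIntegral_congr_fun measurableSet_Ioo
            (fun u hu => (hK2 u hu).trans (hDouble u))
      _ = ∫⁻ u, ∫⁻ y, ∫⁻ z, Wfun H t u y z := stepA H t
      _ = ∫⁻ y, ∫⁻ z, ∫⁻ u, Wfun H t u y z := stepB H t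
      _ = ∫⁻ y in Ioo 0 t, ∫⁻ z in Ioo 0 t, ∫⁻ u in Ioo 0 (min y z),
            (ENNReal.ofReal (u ^ (1-2*H)) * ENNReal.ofReal ((y-u) ^ (H-3/2) * y ^ (H-1/2))
              * ENNReal.ofReal ((z-u) ^ (H-3/2) * z ^ (H-1/2))) := stepC H t
      _ = ∫⁻ y in Ioo 0 t, ENNReal.ofReal (Bc H / (2*H-1) * (y ^ (2*H-1) + (t-y) ^ (2*H-1))) := by
          refine setLIntegral_congr_fun measurableSet_Ioo (fun y hy => ?_)
          have hae : ∀ᵐ z ∂(volume.restrict (Ioo (0:ℝ) t)),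
              (∫⁻ u in Ioo 0 (min y z),
                (ENNReal.ofReal (u ^ (1-2*H)) * ENNReal.ofReal ((y-u) ^ (H-3/2) * y ^ (H-1/2))
                  * ENNReal.ofReal ((z-u) ^ (H-3/2) * z ^ (H-1/2))))
              = ENNReal.ofReal (Bc H * |y-z| ^ (2*H-2)) := by
            have hne : ∀ᵐ z : ℝ, z ≠ y := by
              rw [ae_iff]
              have : {z : ℝ | ¬ z ≠ y} = {y} := by ext w; simp
              rw [this]
              exact measure_singleton y
            filter_upwards [ae_restrict_mem measurableSet_Ioo, ae_restrict_of_ae hne]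
              with z hz hzy
            exact inner_eval h1 h2 hy hz hzy
          rw [lintegral_congr_ae hae]
          rw [← ofReal_integral_eq_lintegral_ofReal
            ((abs_integrable h1 h2 hy.1 hy.2).const_mul (Bc H)) ?_]
          · rw [MeasureTheory.integral_const_mul, abs_integral h1 h2 hy.1 hy.2]
            congr 1
            ring
          · filter_upwards [] with z
            exact mul_nonneg (Bc_nonneg H) (rpow_nonneg (abs_nonneg _) _)
      _ = ENNReal.ofReal (Bc H / (2*H-1) * (t ^ (2*H) / H)) := by
          rw [← ofReal_integral_eq_lintegral_ofReal
            ((outer_integrable h1 h2 ht).const_mul (Bc H / (2*H-1))) ?_]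
          · rw [MeasureTheory.integral_const_mul, outer_integral h1 h2 ht]
          · filter_upwards [ae_restrict_mem measurableSet_Ioo] with y hy
            have hy1 : (0:ℝ) ≤ y := hy.1.le
            have hy2 : (0:ℝ) ≤ t - y := by linarith [hy.2]
            have hBc := Bc_nonneg H
            have h2H : (0:ℝ) < 2*H-1 := by linarith
            positivity
  rw [integral_eq_lintegral_of_nonneg_ae (ae_of_all _ fun u => sq_nonneg _) hKm, hL,
    ENNReal.toReal_ofReal (mul_nonneg (div_nonneg (Bc_nonneg H) (by linarith))
      (div_nonneg (rpow_nonneg ht.le _) (by linarith))), const_algebra h1 h2 ht]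
end
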